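/- arXiv:2307.10671 — 9 statements merged into one kernel-verified Lean document; each statement's English description precedes it below -/
import Mathlib

section
/- Let X be a vector space over ℝ, let α be an infinite cardinal, and let M ⊆ X. If M is pointwise α-lineable, then M is infinitely pointwise α-lineable; that is, for every x ∈ M there exists a countable family (W_k)_{k∈ℕ} of linear subspaces of X such that for every k ∈ ℕ: dim(W_k) = α, x ∈ W_k ⊆ M ∪ {0}, and W_k ∩ W_l = span{x} for every l ∈ ℕ with l ≠ k. -/
universe u

theorem aux_li_span_inter {X : Type*} [AddCommGroup X] [Module ℝ X] {ι : Type*} {v : ι → X}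
    (hv : LinearIndependent ℝ v) (A B : Set ι) :
    Submodule.span ℝ (v '' A) ⊓ Submodule.span ℝ (v '' B)
      = Submodule.span ℝ (v '' (A ∩ B)) := by
  rw [Finsupp.span_image_eq_map_linearCombination, Finsupp.span_image_eq_map_linearCombination,
    Finsupp.span_image_eq_map_linearCombination,
    ← Submodule.map_inf _ hv, ← Finsupp.supported_inter]

theorem aux_core {X : Type u} [AddCommGroup X] [Module ℝ X] {α : Cardinal.{u}}
    (hα : Cardinal.aleph0 ≤ α) {W : Submodule ℝ X} (hr : Module.rank ℝ W = α)
    {t : Set W} (ht : LinearIndependent ℝ ((↑) : t → W)) (htc : Cardinal.mk t ≤ 1) :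
    ∃ V : ℕ → Submodule ℝ X, ∀ k : ℕ, Module.rank ℝ (V k) = α ∧ V k ≤ W ∧
      Submodule.span ℝ (Subtype.val '' t) ≤ V k ∧
      ∀ l : ℕ, l ≠ k → V k ⊓ V l = Submodule.span ℝ (Subtype.val '' t) := by
  classical
  have ht' : LinearIndepOn ℝ id t := ht
  set T := ht'.extend (Set.subset_univ t) with hT
  let b : Module.Basis T ℝ W := Module.Basis.extend ht'
  have hbT : ⇑b = Subtype.val := Module.Basis.coe_extend ht'
  have htT : t ⊆ T := ht'.subset_extend _
  have hcard : Cardinal.mk T = α := by rw [← hr]; exact b.mk_eq_rank''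
  set u : T → X := fun i => ((i : W) : X) with hu_def
  have hu : LinearIndependent ℝ u := by
    have := b.linearIndependent
    rw [hbT] at this
    exact this.map' W.subtype W.ker_subtype
  set S : Set T := Subtype.val ⁻¹' t with hS
  have hScard : Cardinal.mk S ≤ 1 := by
    refine le_trans (Cardinal.mk_le_of_injective (f := fun i : S => (⟨i.1.1, i.2⟩ : t)) ?_) htc
    intro a b hab
    simp only [Subtype.mk.injEq] at hab
    exact Subtype.ext (Subtype.ext hab)
  have hsum : Cardinal.mk S + Cardinal.mk (Sᶜ : Set T) = α := by
    rw [Cardinal.mk_sum_compl]; exact hcard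
  have hScinf : Cardinal.aleph0 ≤ Cardinal.mk (Sᶜ : Set T) := by
    by_contra h
    push_neg at h
    have : Cardinal.mk S + Cardinal.mk (Sᶜ : Set T) < Cardinal.aleph0 :=
      Cardinal.add_lt_aleph0 (lt_of_le_of_lt hScard Cardinal.one_lt_aleph0) h
    rw [hsum] at this
    exact absurd hα (not_le.mpr this)
  have hSc : Cardinal.mk (Sᶜ : Set T) = α := by
    refine le_antisymm ?_ ?_
    · rw [← hsum]; exact self_le_add_left _ _
    · calc α = Cardinal.mk S + Cardinal.mk (Sᶜ : Set T) := hsum.symm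
        _ ≤ 1 + Cardinal.mk (Sᶜ : Set T) := by gcongr
        _ = Cardinal.mk (Sᶜ : Set T) + 1 := add_comm _ _
        _ = Cardinal.mk (Sᶜ : Set T) := Cardinal.add_one_eq hScinf
  have hprod : Cardinal.mk (ℕ × (Sᶜ : Set T)) = Cardinal.mk (Sᶜ : Set T) := by
    rw [Cardinal.mk_prod, Cardinal.mk_nat, Cardinal.lift_aleph0, Cardinal.lift_uzero, hSc,
      Cardinal.aleph0_mul_eq hα]
  obtain ⟨e⟩ : Nonempty (ℕ × (Sᶜ : Set T) ≃ (Sᶜ : Set T)) := Cardinal.eq.mp hprod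
  set R : ℕ → Set T := fun k => Set.range (fun d : (Sᶜ : Set T) => (e (k, d) : T)) with hR
  set A : ℕ → Set T := fun k => S ∪ R k with hA
  refine ⟨fun k => Submodule.span ℝ (u '' A k), fun k => ?_⟩
  have hinj : ∀ k, Function.Injective (fun d : (Sᶜ : Set T) => (e (k, d) : T)) := by
    intro k a b hab
    have : e (k, a) = e (k, b) := Subtype.ext hab
    have := e.injective this
    exact (Prod.mk.injEq _ _ _ _ ▸ this).2
  have huS : u '' S = Subtype.val '' t := by
    ext y
    constructor
    · rintro ⟨i, hi, rfl⟩
      exact ⟨(i : W), hi, rfl⟩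
    · rintro ⟨w, hw, rfl⟩
      exact ⟨⟨w, htT hw⟩, hw, rfl⟩
  refine ⟨?_, ?_, ?_, ?_⟩
  · -- rank
    have hli : LinearIndependent ℝ (fun i : (A k : Set T) => u i) :=
      hu.comp _ Subtype.val_injective
    have hrange : Set.range (fun i : (A k : Set T) => u i) = u '' A k := by
      rw [← Set.image_eq_range]
    have := rank_span hli
    rw [hrange, Cardinal.mk_image_eq hu.injective] at this
    rw [this]
    refine le_antisymm ?_ ?_
    · calc Cardinal.mk (A k : Set T) ≤ Cardinal.mk S + Cardinal.mk (R k : Set T) :=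
            Cardinal.mk_union_le _ _
        _ ≤ 1 + α := by
            gcongr
            rw [Cardinal.mk_range_eq _ (hinj k)]; exact hSc.le
        _ = α + 1 := add_comm _ _
        _ = α := Cardinal.add_one_eq hα
    · calc α = Cardinal.mk (R k : Set T) := by rw [Cardinal.mk_range_eq _ (hinj k), hSc]
        _ ≤ Cardinal.mk (A k : Set T) := Cardinal.mk_le_mk_of_subset Set.subset_union_right
  · -- ≤ W
    rw [Submodule.span_le]
    rintro _ ⟨i, _, rfl⟩
    exact (i : W).2
  · -- span t ≤ V k
    rw [← huS]
    refine Submodule.span_mono (Set.image_mono Set.subset_union_left)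
  · -- intersections
    intro l hl
    rw [aux_li_span_inter hu]
    have hAA : A k ∩ A l = S := by
      have hRR : R k ∩ R l = ∅ := by
        ext i
        simp only [Set.mem_inter_iff, Set.mem_empty_iff_false, iff_false, not_and]
        rintro ⟨d, rfl⟩ ⟨d', hd'⟩
        have : e (l, d') = e (k, d) := Subtype.ext hd'
        have := e.injective this
        exact hl (congrArg Prod.fst this)
      rw [hA]
      simp only
      rw [← Set.union_inter_distrib_left, hRR, Set.union_empty]
    rw [hAA, huS]

/-- If `M` is pointwise `α`-lineable (α infinite), then `M` is
infinitely pointwise `α`-lineable. -/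
theorem pointwise_lineable_iff_infinitely_pointwise_lineable
    {X : Type u} [AddCommGroup X] [Module ℝ X] (α : Cardinal.{u})
    (hα : Cardinal.aleph0 ≤ α) (M : Set X)
    (hM : ∀ x ∈ M, ∃ W : Submodule ℝ X,
      Module.rank ℝ W = α ∧ x ∈ W ∧ (W : Set X) ⊆ M ∪ {0}) :
    ∀ x ∈ M, ∃ W : ℕ → Submodule ℝ X, ∀ k : ℕ,
      Module.rank ℝ (W k) = α ∧
      x ∈ W k ∧ (W k : Set X) ⊆ M ∪ {0} ∧
      ∀ l : ℕ, l ≠ k → W k ⊓ W l = Submodule.span ℝ {x} := by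
  intro x hx
  obtain ⟨W, hr, hxW, hWM⟩ := hM x hx
  by_cases hx0 : x = 0
  · -- x = 0 case : take t = ∅
    have ht : LinearIndependent ℝ ((↑) : (∅ : Set W) → W) := linearIndependent_empty_type
    have htc : Cardinal.mk (∅ : Set W) ≤ 1 := by simp
    obtain ⟨V, hV⟩ := aux_core hα hr ht htc
    refine ⟨V, fun k => ?_⟩
    obtain ⟨h1, h2, _, h4⟩ := hV k
    have hspan : Submodule.span ℝ (Subtype.val '' (∅ : Set W)) = Submodule.span ℝ {x} := by
      rw [Set.image_empty, Submodule.span_empty, hx0, Submodule.span_zero_singleton]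
    refine ⟨h1, ?_, fun y hy => hWM (h2 hy), fun l hl => ?_⟩
    · rw [hx0]; exact (V k).zero_mem
    · rw [h4 l hl, hspan]
  · -- x ≠ 0 case : take t = {⟨x, hxW⟩}
    have hxne : (⟨x, hxW⟩ : W) ≠ 0 := by
      intro h
      exact hx0 (congrArg Subtype.val h)
    have ht : LinearIndependent ℝ ((↑) : ({⟨x, hxW⟩} : Set W) → W) :=
      (linearIndepOn_singleton_iff ℝ (v := id)).mpr hxne
    have htc : Cardinal.mk ({⟨x, hxW⟩} : Set W) ≤ 1 := by simp
    obtain ⟨V, hV⟩ := aux_core hα hr ht htc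
    have himg : (Subtype.val '' ({⟨x, hxW⟩} : Set W)) = ({x} : Set X) := by
      rw [Set.image_singleton]
    refine ⟨V, fun k => ?_⟩
    obtain ⟨h1, h2, h3, h4⟩ := hV k
    rw [himg] at h3 h4
    refine ⟨h1, ?_, fun y hy => hWM (h2 hy), fun l hl => h4 l hl⟩
    exact h3 (Submodule.mem_span_singleton_self x)
end

section
/- Let X be a vector space over ℝ, let α be an infinite cardinal, and let M ⊆ X be pointwise α-lineable. Then for every x ∈ M there exists a countable family (W_k)_{k∈ℕ} of linear subspaces of X such that for every k ∈ ℕ: dim(W_k) = α, x ∈ W_k ⊆ M ∪ {0}, W_k ∩ W_l = span{x} for every l ≠ k, and additionally W_k + W_l ⊆ M ∪ {0} for all k, l ∈ ℕ. -/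
open Pointwise

universe u

open Set Submodule Cardinal in
lemma span_image_inter_aux {X : Type u} [AddCommGroup X] [Module ℝ X] {ι : Type u}
    {v : ι → X} (hv : LinearIndependent ℝ v) (A B : Set ι) :
    Submodule.span ℝ (v '' A) ⊓ Submodule.span ℝ (v '' B) =
      Submodule.span ℝ (v '' (A ∩ B)) := by
  apply le_antisymm
  · rintro y hy
    rw [Submodule.mem_inf] at hy
    obtain ⟨hyA, hyB⟩ := hy
    rw [Finsupp.mem_span_image_iff_linearCombination] at hyA hyB ⊢
    obtain ⟨l, hl, rfl⟩ := hyA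
    obtain ⟨l', hl', hll'⟩ := hyB
    have hEq : l' = l := hv hll'
    subst hEq
    refine ⟨l', (Finsupp.mem_supported ℝ l').2 ?_, rfl⟩
    exact subset_inter ((Finsupp.mem_supported ℝ l').1 hl) ((Finsupp.mem_supported ℝ l').1 hl')
  · exact le_inf (span_mono (image_mono inter_subset_left))
      (span_mono (image_mono inter_subset_right))

open Set Submodule Cardinal in
/-- Partition lemma: split off countably many subsets of full cardinality sharing `Z`. -/
lemma exists_partition_aux {ι : Type u} (α : Cardinal.{u}) (hα : Cardinal.aleph0 ≤ α)
    (hcard : #ι = α) (Z : Set ι) (hZfin : Z.Finite) :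
    ∃ A : ℕ → Set ι, (∀ k, Z ⊆ A k ∧ #(A k) = α) ∧
      ∀ k l : ℕ, k ≠ l → A k ∩ A l = Z := by
  haveI : Infinite ι := Cardinal.infinite_iff.2 (hcard ▸ hα)
  have hZlt : #Z < #ι := lt_of_lt_of_le hZfin.lt_aleph0 (hcard ▸ hα)
  have hcompl : #(↥Zᶜ) = α := by
    rw [Cardinal.mk_compl_of_infinite Z hZlt, hcard]
  have hmk : #(ULift.{u} ℕ × ↥Zᶜ) = #(↥Zᶜ) := by
    simp only [Cardinal.mk_prod, Cardinal.mk_uLift, Cardinal.mk_nat, Cardinal.lift_aleph0,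
      Cardinal.lift_id, hcompl, Cardinal.aleph0_mul_eq hα]
  obtain ⟨e⟩ := Cardinal.eq.1 hmk
  set P : ℕ → Set ι := fun k => Set.range (fun t : ↥Zᶜ => (e (ULift.up k, t) : ι)) with hP
  have hPinj : ∀ k, Function.Injective (fun t : ↥Zᶜ => (e (ULift.up k, t) : ι)) := by
    intro k t t' htt'
    have h2 := e.injective (Subtype.coe_injective htt')
    exact congrArg Prod.snd h2
  have hPcompl : ∀ k, P k ⊆ Zᶜ := by
    rintro k i ⟨t, rfl⟩
    exact (e (ULift.up k, t)).2
  have hPdisj : ∀ k l : ℕ, k ≠ l → P k ∩ P l = ∅ := by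
    intro k l hkl
    ext i
    simp only [Set.mem_inter_iff, Set.mem_empty_iff_false, iff_false, not_and, hP]
    rintro ⟨t, rfl⟩ ⟨t', ht'⟩
    have h2 := e.injective (Subtype.coe_injective ht')
    exact hkl (congrArg ULift.down (congrArg Prod.fst h2)).symm
  refine ⟨fun k => Z ∪ P k, fun k => ⟨Set.subset_union_left, ?_⟩, ?_⟩
  · apply le_antisymm
    · exact hcard ▸ Cardinal.mk_set_le _
    · calc α = #(↥Zᶜ) := hcompl.symm
        _ = #(P k) := (Cardinal.mk_range_eq _ (hPinj k)).symm
        _ ≤ #(Z ∪ P k : Set ι) := Cardinal.mk_le_mk_of_subset Set.subset_union_right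
  · intro k l hkl
    ext i
    constructor
    · rintro ⟨hik, hil⟩
      rcases hik with h | h
      · exact h
      rcases hil with h' | h'
      · exact h'
      · exact absurd (Set.mem_inter h h') (by rw [hPdisj k l hkl]; exact id)
    · exact fun h => ⟨Or.inl h, Or.inl h⟩

/-- If `M` is pointwise `α`-lineable (α infinite), then for every `x ∈ M`
there is a countable family of subspaces witnessing infinite pointwise `α`-lineability,
which additionally satisfies `W k + W l ⊆ M ∪ {0}` for all `k, l`. -/
theorem infinitely_pointwise_lineable_with_sums
    {X : Type u} [AddCommGroup X] [Module ℝ X] (α : Cardinal.{u})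
    (hα : Cardinal.aleph0 ≤ α) (M : Set X)
    (hM : ∀ x ∈ M, ∃ W : Submodule ℝ X,
      Module.rank ℝ W = α ∧ x ∈ W ∧ (W : Set X) ⊆ M ∪ {0}) :
    ∀ x ∈ M, ∃ W : ℕ → Submodule ℝ X,
      (∀ k : ℕ,
        Module.rank ℝ (W k) = α ∧
        x ∈ W k ∧ (W k : Set X) ⊆ M ∪ {0} ∧
        ∀ l : ℕ, l ≠ k → W k ⊓ W l = Submodule.span ℝ {x}) ∧
      (∀ k l : ℕ, (W k : Set X) + (W l : Set X) ⊆ M ∪ {0}) := by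
  intro x hx
  obtain ⟨W, hWrank, hxW, hWM⟩ := hM x hx
  -- Find an index type ι, independent family v with range in W, cardinality α, and a finite
  -- subset Z with span (v '' Z) = span {x}.
  obtain ⟨ι, v, hv, hrange, hcard, Z, hZfin, hZspan⟩ :
      ∃ (ι : Type u) (v : ι → X), LinearIndependent ℝ v ∧ Set.range v ⊆ (W : Set X) ∧
        Cardinal.mk ι = α ∧ ∃ Z : Set ι, Z.Finite ∧
          Submodule.span ℝ (v '' Z) = Submodule.span ℝ ({x} : Set X) := by
    by_cases hx0 : x = 0
    · -- any basis of W, Z = ∅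
      let b := Module.Basis.ofVectorSpace ℝ W
      refine ⟨_, W.subtype ∘ b, b.linearIndependent.map' W.subtype W.ker_subtype, ?_, ?_,
        ∅, Set.finite_empty, ?_⟩
      · rintro _ ⟨i, rfl⟩; exact (b i).2
      · rw [b.mk_eq_rank'', hWrank]
      · rw [Set.image_empty, Submodule.span_empty, hx0, Submodule.span_zero_singleton]
    · -- basis of W extending {x}
      have hxW0 : (⟨x, hxW⟩ : W) ≠ 0 := fun h => hx0 (congrArg Subtype.val h)
      have hs : LinearIndepOn ℝ id ({⟨x, hxW⟩} : Set W) :=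
        LinearIndepOn.singleton hxW0
      let b := Module.Basis.extend hs
      have hi0 : (⟨x, hxW⟩ : W) ∈ hs.extend (Set.subset_univ _) := hs.subset_extend _ rfl
      refine ⟨_, W.subtype ∘ b, b.linearIndependent.map' W.subtype W.ker_subtype, ?_, ?_,
        {⟨⟨x, hxW⟩, hi0⟩}, Set.finite_singleton _, ?_⟩
      · rintro _ ⟨i, rfl⟩; exact (b i).2
      · rw [b.mk_eq_rank'', hWrank]
      · rw [Set.image_singleton]
        congr 1
        simp [Module.Basis.extend_apply_self, b]
  obtain ⟨A, hA, hAinter⟩ := exists_partition_aux α hα hcard Z hZfin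
  refine ⟨fun k => Submodule.span ℝ (v '' A k), fun k => ⟨?_, ?_, ?_, ?_⟩, ?_⟩
  · -- rank
    have hvk : LinearIndependent ℝ (v ∘ ((↑) : A k → ι)) :=
      hv.comp _ Subtype.coe_injective
    have hr : Set.range (v ∘ ((↑) : A k → ι)) = v '' A k := by
      rw [Set.range_comp, Subtype.range_coe]
    calc Module.rank ℝ (Submodule.span ℝ (v '' A k))
        = Cardinal.mk (Set.range (v ∘ ((↑) : A k → ι))) := by rw [← hr]; exact rank_span hvk
      _ = Cardinal.mk (A k) := Cardinal.mk_range_eq _ hvk.injective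
      _ = α := (hA k).2
  · -- x ∈ W k
    have : x ∈ Submodule.span ℝ (v '' Z) := by
      rw [hZspan]; exact Submodule.mem_span_singleton_self x
    exact Submodule.span_mono (Set.image_mono (hA k).1) this
  · -- subset M ∪ {0}
    have hle : Submodule.span ℝ (v '' A k) ≤ W := by
      rw [Submodule.span_le]
      exact (Set.image_subset_range v _).trans hrange
    exact fun y hy => hWM (hle hy)
  · -- intersections
    intro l hlk
    rw [span_image_inter_aux hv, hAinter k l (fun h => hlk h.symm), hZspan]
  · -- sums
    intro k l y hy
    obtain ⟨w, hw, w', hw', rfl⟩ := hy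
    have hle : ∀ m : ℕ, Submodule.span ℝ (v '' A m) ≤ W := by
      intro m
      rw [Submodule.span_le]
      exact (Set.image_subset_range v _).trans hrange
    exact hWM (W.add_mem (hle k hw) (hle l hw'))
end

section
/- Let X be a metrizable separable topological vector space over ℝ, let α be an infinite cardinal, and let M be a nonempty subset of X for which there exists a nonempty subset N ⊆ X such that: (i) M + N ⊆ M (M is stronger than N); (ii) M ∩ N = ∅; (iii) there exists a linear subspace V of X with V dense in X and V ⊆ N ∪ {0} (N is dense-lineable). If M is pointwise α-lineable, then M is infinitely pointwise α-dense lineable: for every x ∈ M there exists a countable family (W_k)_{k∈ℕ} of linear subspaces of X such that for every k ∈ ℕ: W_k is dense in X, dim(W_k) = α, x ∈ W_k ⊆ M ∪ {0}, and W_k ∩ W_l = span{x} for every l ≠ k. -/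
open Pointwise

universe u


section aux
variable {X : Type*} [AddCommGroup X] [Module ℝ X]

private lemma sum_expand {ι : Type*} (t : Finset ι) (g s : ι → ℝ) (b v : ι → X) :
    ∑ i ∈ t, g i • (s i • b i + v i)
      = ∑ i ∈ t, (g i * s i) • b i + ∑ i ∈ t, g i • v i := by
  rw [← Finset.sum_add_distrib]
  refine Finset.sum_congr rfl fun i _ => ?_
  rw [smul_add, mul_smul]

lemma perturb_linearIndependent {W V : Submodule ℝ X} (hWV : Disjoint W V)
    {ι : Type*} {b v : ι → X} (hb : LinearIndependent ℝ b)
    (hbW : ∀ i, b i ∈ W) (hvV : ∀ i, v i ∈ V)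
    {s : ι → ℝ} (hs : ∀ i, s i ≠ 0) :
    LinearIndependent ℝ (fun i => s i • b i + v i) := by
  rw [linearIndependent_iff'] at hb ⊢
  intro t g hg i hi
  have key : ∑ i ∈ t, (g i * s i) • b i = 0 := by
    have hsum : ∑ i ∈ t, (g i * s i) • b i + ∑ i ∈ t, g i • v i = 0 := by
      rw [← sum_expand]; exact hg
    have hW : ∑ i ∈ t, (g i * s i) • b i ∈ W :=
      Submodule.sum_mem _ fun i _ => W.smul_mem _ (hbW i)
    have hV : ∑ i ∈ t, (g i * s i) • b i ∈ V := by
      rw [eq_neg_of_add_eq_zero_left hsum]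
      exact neg_mem (Submodule.sum_mem _ fun i _ => V.smul_mem _ (hvV i))
    exact Submodule.disjoint_def.mp hWV _ hW hV
  exact (mul_eq_zero.mp (hb t (fun i => g i * s i) key i hi)).resolve_right (hs i)

lemma perturb_span_disjoint {W V : Submodule ℝ X} (hWV : Disjoint W V)
    {ι : Type*} {b v : ι → X} (hb : LinearIndependent ℝ b)
    (hbW : ∀ i, b i ∈ W) (hvV : ∀ i, v i ∈ V)
    {s : ι → ℝ} (hs : ∀ i, s i ≠ 0) :
    Disjoint (Submodule.span ℝ (Set.range (fun i => s i • b i + v i))) V := by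
  rw [Submodule.disjoint_def]
  intro y hy hyV
  rw [Finsupp.mem_span_range_iff_exists_finsupp] at hy
  obtain ⟨c, hc⟩ := hy
  rw [Finsupp.sum] at hc
  have key : ∑ i ∈ c.support, (c i * s i) • b i = 0 := by
    have hW : ∑ i ∈ c.support, (c i * s i) • b i ∈ W :=
      Submodule.sum_mem _ fun i _ => W.smul_mem _ (hbW i)
    have heq : ∑ i ∈ c.support, (c i * s i) • b i
        = y - ∑ i ∈ c.support, c i • v i := by
      rw [← hc, sum_expand]; abel
    have hV : ∑ i ∈ c.support, (c i * s i) • b i ∈ V := by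
      rw [heq]
      exact sub_mem hyV (Submodule.sum_mem _ fun i _ => V.smul_mem _ (hvV i))
    exact Submodule.disjoint_def.mp hWV _ hW hV
  have hzero : ∀ i ∈ c.support, c i = 0 := fun i hi =>
    (mul_eq_zero.mp
      (linearIndependent_iff'.mp hb c.support (fun i => c i * s i) key i hi)).resolve_right (hs i)
  rw [← hc]
  exact Finset.sum_eq_zero fun i hi => by rw [hzero i hi, zero_smul]

end aux


/-- In a metrizable separable topological vector space, if `M` is stronger
than a dense-lineable set `N` disjoint from `M`, then pointwise `α`-lineability of `M`
implies infinite pointwise `α`-dense lineability of `M`. -/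
theorem pointwise_lineable_to_infinitely_pointwise_dense_lineable
    {X : Type u} [AddCommGroup X] [Module ℝ X] [TopologicalSpace X]
    [IsTopologicalAddGroup X] [ContinuousSMul ℝ X]
    [TopologicalSpace.MetrizableSpace X] [TopologicalSpace.SeparableSpace X]
    (α : Cardinal.{u}) (hα : Cardinal.aleph0 ≤ α)
    (M N : Set X) (hMne : M.Nonempty) (hNne : N.Nonempty)
    (hstronger : M + N ⊆ M)
    (hdisj : M ∩ N = ∅)
    (hdenselin : ∃ V : Submodule ℝ X, Dense (V : Set X) ∧ (V : Set X) ⊆ N ∪ {0})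
    (hM : ∀ x ∈ M, ∃ W : Submodule ℝ X,
      Module.rank ℝ W = α ∧ x ∈ W ∧ (W : Set X) ⊆ M ∪ {0}) :
    ∀ x ∈ M, ∃ W : ℕ → Submodule ℝ X, ∀ k : ℕ,
      Dense (W k : Set X) ∧
      Module.rank ℝ (W k) = α ∧
      x ∈ W k ∧ (W k : Set X) ⊆ M ∪ {0} ∧
      ∀ l : ℕ, l ≠ k → W k ⊓ W l = Submodule.span ℝ {x} := by
  intro x hxM
  obtain ⟨V, hVdense, hVN⟩ := hdenselin
  obtain ⟨n0, hn0⟩ := hNne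
  have hMN : ∀ y, y ∈ M → y ∈ N → False := by
    intro y hy1 hy2
    have : y ∈ M ∩ N := ⟨hy1, hy2⟩
    rw [hdisj] at this; exact this
  have h0M : (0:X) ∉ M := by
    intro h0
    have : (0:X) + n0 ∈ M := hstronger (Set.add_mem_add h0 hn0)
    rw [zero_add] at this
    exact hMN n0 this hn0
  obtain ⟨W, hWrank, hxW, hWM⟩ := hM x hxM
  have hxne : x ≠ 0 := fun h => h0M (h ▸ hxM)
  have hWV : Disjoint W V := by
    rw [Submodule.disjoint_def]
    intro y hyW hyV
    by_contra hy0
    have hyM : y ∈ M := (hWM hyW).resolve_right hy0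
    have hyN : y ∈ N := (hVN hyV).resolve_right hy0
    exact hMN y hyM hyN
  -- basis of W extending x
  set x' : W := ⟨x, hxW⟩ with hx'def
  have hx'ne : x' ≠ 0 := by
    intro h
    apply hxne
    exact congrArg (Subtype.val) h
  have hli : LinearIndepOn ℝ id ({x'} : Set W) :=
    (linearIndepOn_singleton_iff ℝ).mpr hx'ne
  set S : Set W := hli.extend (Set.subset_univ _) with hSdef
  have hx'S : x' ∈ S := hli.subset_extend _ rfl
  have hSli : LinearIndependent ℝ (Subtype.val : S → W) := by
    have := (Module.Basis.extend hli).linearIndependent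
    rwa [Module.Basis.coe_extend hli] at this
  have hScard : Cardinal.mk S = α := by
    rw [← hWrank]; exact (Module.Basis.extend hli).mk_eq_rank''
  set T : Set W := S \ {x'} with hTdef
  have hTS : T ⊆ S := Set.diff_subset
  have hTcard : Cardinal.mk T = α := by
    have h1 : Cardinal.mk T ≤ α := by
      rw [← hScard]; exact Cardinal.mk_le_mk_of_subset hTS
    have h2 : α ≤ Cardinal.mk T + 1 := by
      rw [← hScard]
      calc Cardinal.mk S ≤ Cardinal.mk ((insert x' T : Set W)) :=
            Cardinal.mk_le_mk_of_subset (by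
              intro z hz
              by_cases hzx : z = x'
              · exact Or.inl hzx
              · exact Or.inr ⟨hz, hzx⟩)
        _ = Cardinal.mk T + 1 := Cardinal.mk_insert (by simp [hTdef])
    have hTinf : Cardinal.aleph0 ≤ Cardinal.mk T := by
      by_contra hlt
      push_neg at hlt
      have : Cardinal.mk T + 1 < Cardinal.aleph0 :=
        Cardinal.add_lt_aleph0 hlt Cardinal.one_lt_aleph0
      exact absurd (lt_of_le_of_lt (hα.trans h2) this) (lt_irrefl _)
    have h3 : Cardinal.mk T + 1 = Cardinal.mk T := by
      exact Cardinal.add_one_eq hTinf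
    exact le_antisymm h1 (h3 ▸ h2)
  -- equivalence for index bookkeeping
  have hκ : Cardinal.mk (ℕ × (ULift.{u} (ℕ × ℕ) ⊕ T)) = Cardinal.mk T := by
    simp only [Cardinal.mk_prod, Cardinal.mk_sum, Cardinal.mk_uLift, Cardinal.mk_prod]
    simp only [Cardinal.mk_denumerable, Cardinal.lift_aleph0, Cardinal.lift_id', Cardinal.lift_id,
      Cardinal.aleph0_mul_aleph0]
    rw [hTcard, Cardinal.add_eq_right hα hα,
      Cardinal.mul_eq_right hα hα Cardinal.aleph0_ne_zero]
  obtain ⟨f⟩ := Cardinal.eq.mp hκ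
  -- base family indexed by Option (ℕ × κ)
  set e : Option (ℕ × (ULift.{u} (ℕ × ℕ) ⊕ T)) → S := fun i =>
    i.elim ⟨x', hx'S⟩ (fun q => ⟨(f q : W), (f q).2.1⟩) with hedef
  have he : Function.Injective e := by
    intro i j hij
    have hval : ((e i : W)) = ((e j : W)) := congrArg Subtype.val hij
    rcases i with _ | q <;> rcases j with _ | q'
    · rfl
    · exact absurd (Set.mem_singleton_iff.mpr hval.symm) (f q').2.2
    · exact absurd (Set.mem_singleton_iff.mpr hval) (f q).2.2
    · have h1 : f q = f q' := Subtype.val_injective hval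
      rw [f.injective h1]
  set Bb : Option (ℕ × (ULift.{u} (ℕ × ℕ) ⊕ T)) → X := fun i => ((e i : W) : X) with hBbdef
  have hBb : LinearIndependent ℝ Bb := by
    have hXli : LinearIndependent ℝ (fun z : S => ((z : W) : X)) :=
      hSli.map' W.subtype W.ker_subtype
    exact hXli.comp e he
  have hBbW : ∀ i, Bb i ∈ W := fun i => ((e i : W)).2
  have hBbnone : Bb none = x := rfl
  -- metric space structure
  letI : MetricSpace X := TopologicalSpace.metrizableSpaceMetric X
  haveI : Nonempty X := ⟨x⟩
  set d : ℕ → X := TopologicalSpace.denseSeq X with hddef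
  have hdd : DenseRange d := TopologicalSpace.denseRange_denseSeq X
  have hvexists : ∀ p : ℕ × ℕ, ∃ w ∈ (V : Set X), dist (d p.1) w < 1/(p.2+1) :=
    fun p => Metric.mem_closure_iff.mp (hVdense (d p.1)) (1/(p.2+1)) (by positivity)
  choose v hvV hvd using hvexists
  have hscexists : ∀ (k : ℕ) (p : ℕ × ℕ), ∃ t : ℝ, t ≠ 0 ∧
      dist (d p.1) (t • Bb (some (k, Sum.inl ⟨p⟩)) + v p) < 2/(p.2+1) := by
    intro k p
    set u : X := Bb (some (k, Sum.inl ⟨p⟩)) with hudef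
    have hcont : Continuous fun t : ℝ => t • u + v p :=
      (continuous_id.smul continuous_const).add continuous_const
    have htend : Filter.Tendsto (fun t : ℝ => t • u + v p) (nhds 0) (nhds (v p)) := by
      have h0 := hcont.tendsto 0
      simpa using h0
    have hev : ∀ᶠ t in nhds (0:ℝ), dist (t • u + v p) (v p) < 1/(p.2+1) :=
      Metric.tendsto_nhds.mp htend (1/(p.2+1)) (by positivity)
    have hev' : ∀ᶠ t in nhdsWithin (0:ℝ) {(0:ℝ)}ᶜ,
        dist (t • u + v p) (v p) < 1/(p.2+1) ∧ t ∈ ({(0:ℝ)}ᶜ : Set ℝ) :=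
      (hev.filter_mono nhdsWithin_le_nhds).and self_mem_nhdsWithin
    obtain ⟨t, htd, ht0⟩ := hev'.exists
    refine ⟨t, by simpa using ht0, ?_⟩
    calc dist (d p.1) (t • u + v p)
        ≤ dist (d p.1) (v p) + dist (v p) (t • u + v p) := dist_triangle _ _ _
      _ < 1/(p.2+1) + 1/(p.2+1) := by
          rw [dist_comm (v p)]
          exact add_lt_add (hvd p) htd
      _ = 2/(p.2+1) := by ring
  choose sc hsc0 hscd using hscexists
  -- perturbation data
  set sF : Option (ℕ × (ULift.{u} (ℕ × ℕ) ⊕ T)) → ℝ := fun i =>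
    i.elim 1 (fun q => Sum.elim (fun p => sc q.1 p.down) (fun _ => 1) q.2) with hsFdef
  set vF : Option (ℕ × (ULift.{u} (ℕ × ℕ) ⊕ T)) → X := fun i =>
    i.elim 0 (fun q => Sum.elim (fun p => v p.down) (fun _ => 0) q.2) with hvFdef
  have hsF : ∀ i, sF i ≠ 0 := by
    rintro (_ | ⟨k, p | t⟩) <;> simp [hsFdef, hsc0]
  have hvF : ∀ i, vF i ∈ V := by
    rintro (_ | ⟨k, p | t⟩)
    · exact V.zero_mem
    · exact hvV _
    · exact V.zero_mem
  set G : Option (ℕ × (ULift.{u} (ℕ × ℕ) ⊕ T)) → X := fun i => sF i • Bb i + vF i with hGdef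
  have hG : LinearIndependent ℝ G := perturb_linearIndependent hWV hBb hBbW hvF hsF
  have hGspanV : Disjoint (Submodule.span ℝ (Set.range G)) V :=
    perturb_span_disjoint hWV hBb hBbW hvF hsF
  have hGnone : G none = x := by
    simp [hGdef, hsFdef, hvFdef, hBbnone]
  have hGWV : ∀ i, G i ∈ W ⊔ V := fun i =>
    Submodule.add_mem_sup (W.smul_mem _ (hBbW i)) (hvF i)
  set A : ℕ → Set (Option (ℕ × (ULift.{u} (ℕ × ℕ) ⊕ T))) := fun k =>
    insert none (Set.range fun i : (ULift.{u} (ℕ × ℕ) ⊕ T) => some (k, i)) with hAdef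
  set Wk : ℕ → Submodule ℝ X := fun k => Submodule.span ℝ (G '' A k) with hWkdef
  have hsplit : ∀ m : ℕ, Wk m = Submodule.span ℝ {x} ⊔
      Submodule.span ℝ (G '' (Set.range fun i : (ULift.{u} (ℕ × ℕ) ⊕ T) => some (m, i))) := by
    intro m
    rw [hWkdef]
    simp only [hAdef]
    rw [Set.image_insert_eq, hGnone, Submodule.span_insert]
  refine ⟨Wk, fun k => ⟨?_, ?_, ?_, ?_, ?_⟩⟩
  · -- dense
    have hsub : Set.range d ⊆ closure (Wk k : Set X) := by
      rintro _ ⟨j, rfl⟩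
      rw [Metric.mem_closure_iff]
      intro ε hε
      obtain ⟨m, hm⟩ := exists_nat_one_div_lt (show (0:ℝ) < ε/2 by linarith)
      refine ⟨G (some (k, Sum.inl ⟨(j, m)⟩)), ?_, ?_⟩
      · apply Submodule.subset_span
        exact ⟨some (k, Sum.inl ⟨(j, m)⟩),
          Set.mem_insert_iff.mpr (Or.inr ⟨Sum.inl ⟨(j, m)⟩, rfl⟩), rfl⟩
      · have h1 := hscd k (j, m)
        have hGeq : G (some (k, Sum.inl ⟨(j, m)⟩))
            = sc k (j, m) • Bb (some (k, Sum.inl ⟨(j, m)⟩)) + v (j, m) := by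
          simp [hGdef, hsFdef, hvFdef]
        rw [hGeq]
        calc dist (d j) (sc k (j, m) • Bb (some (k, Sum.inl ⟨(j, m)⟩)) + v (j, m))
            < 2/((j, m).2+1) := h1
          _ = 2*(1/(m+1)) := by push_cast; ring
          _ < 2*(ε/2) := by
              have : (1:ℝ)/(m+1) < ε/2 := by exact_mod_cast hm
              linarith
          _ = ε := by ring
    have hdc : Dense (closure (Wk k : Set X)) := Dense.mono hsub hdd
    exact dense_closure.mp hdc
  · -- rank
    have hcomp : LinearIndependent ℝ (fun i : A k => G (i : Option (ℕ × (ULift.{u} (ℕ × ℕ) ⊕ T)))) :=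
      hG.comp Subtype.val Subtype.val_injective
    have hr := rank_span hcomp
    have himg : Set.range (fun i : A k => G (i : Option (ℕ × (ULift.{u} (ℕ × ℕ) ⊕ T)))) = G '' A k :=
      (Set.image_eq_range G (A k)).symm
    rw [himg] at hr
    rw [hWkdef]
    rw [hr]
    rw [Cardinal.mk_image_eq hG.injective]
    have hnone : (none : Option (ℕ × (ULift.{u} (ℕ × ℕ) ⊕ T))) ∉
        Set.range fun i : (ULift.{u} (ℕ × ℕ) ⊕ T) => some (k, i) := by
      rintro ⟨i, hi⟩; exact Option.some_ne_none _ hi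
    rw [hAdef]
    simp only []
    rw [Cardinal.mk_insert hnone]
    rw [Cardinal.mk_range_eq _ (fun a b hab => by simpa using hab)]
    simp only [Cardinal.mk_sum, Cardinal.mk_uLift, Cardinal.mk_prod, Cardinal.mk_denumerable,
      Cardinal.lift_aleph0, Cardinal.lift_id', Cardinal.aleph0_mul_aleph0, Cardinal.lift_id]
    rw [hTcard, Cardinal.add_eq_right hα hα, Cardinal.add_one_eq hα]
  · -- x ∈ Wk k
    exact Submodule.subset_span ⟨none, Set.mem_insert _ _, hGnone⟩
  · -- Wk k ⊆ M ∪ {0}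
    intro y hy
    rcases eq_or_ne y 0 with rfl | hy0
    · exact Or.inr rfl
    left
    have hyG : y ∈ Submodule.span ℝ (Set.range G) :=
      Submodule.span_mono (Set.image_subset_range G (A k)) hy
    have hle : Wk k ≤ W ⊔ V := by
      rw [hWkdef]
      exact Submodule.span_le.mpr (by rintro _ ⟨i, _, rfl⟩; exact hGWV i)
    obtain ⟨w, hw, vv, hvv, rfl⟩ := Submodule.mem_sup.mp (hle hy)
    rcases eq_or_ne w 0 with rfl | hwne
    · exfalso
      rw [zero_add] at hy0 hyG
      exact hy0 (Submodule.disjoint_def.mp hGspanV _ hyG hvv)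
    have hwM : w ∈ M := (hWM hw).resolve_right hwne
    rcases eq_or_ne vv 0 with rfl | hvvne
    · rw [add_zero]; exact hwM
    have hvvN : vv ∈ N := (hVN hvv).resolve_right hvvne
    exact hstronger (Set.add_mem_add hwM hvvN)
  · -- intersections
    intro l hl
    have hxle : Submodule.span ℝ {x} ≤ Wk l := by
      rw [hsplit l]; exact le_sup_left
    rw [hsplit k, sup_inf_assoc_of_le _ hxle]
    have hdisjkl : Disjoint
        (Submodule.span ℝ (G '' (Set.range fun i : (ULift.{u} (ℕ × ℕ) ⊕ T) => some (k, i))))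
        (Wk l) := by
      rw [hWkdef]
      apply hG.disjoint_span_image
      rw [Set.disjoint_left]
      rintro _ ⟨i, rfl⟩ hmem
      rw [hAdef] at hmem
      rcases Set.mem_insert_iff.mp hmem with h | ⟨i', hi'⟩
      · exact Option.some_ne_none _ h
      · injection hi' with h2
        exact hl (congrArg Prod.fst h2)
    rw [disjoint_iff.mp hdisjkl, sup_bot_eq]
end

section
/- Let X be a metrizable separable topological vector space over ℝ, let α be an infinite cardinal, and let M be a nonempty subset of X for which there exists a nonempty subset N ⊆ X such that M + N ⊆ M, M ∩ N = ∅, and there exists a dense linear subspace V of X with V ⊆ N ∪ {0}. If M is pointwise α-lineable, then M is pointwise α-dense lineable: for every x ∈ M there exists a dense linear subspace W of X with dim(W) = α and x ∈ W ⊆ M ∪ {0}. -/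
open Pointwise Set Filter Function Topology

set_option maxHeartbeats 1000000
set_option synthInstance.maxHeartbeats 200000

universe u

/-- In a metrizable separable topological vector space, if `M` is stronger
than a dense-lineable set `N` disjoint from `M`, then pointwise `α`-lineability of `M`
implies pointwise `α`-dense lineability of `M`. -/
theorem pointwise_lineable_to_pointwise_dense_lineable
    {X : Type u} [AddCommGroup X] [Module ℝ X] [TopologicalSpace X]
    [IsTopologicalAddGroup X] [ContinuousSMul ℝ X]
    [TopologicalSpace.MetrizableSpace X] [TopologicalSpace.SeparableSpace X]
    (α : Cardinal.{u}) (hα : Cardinal.aleph0 ≤ α)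
    (M N : Set X) (hMne : M.Nonempty) (hNne : N.Nonempty)
    (hstronger : M + N ⊆ M)
    (hdisj : M ∩ N = ∅)
    (hdenselin : ∃ V : Submodule ℝ X, Dense (V : Set X) ∧ (V : Set X) ⊆ N ∪ {0})
    (hM : ∀ x ∈ M, ∃ W : Submodule ℝ X,
      Module.rank ℝ W = α ∧ x ∈ W ∧ (W : Set X) ⊆ M ∪ {0}) :
    ∀ x ∈ M, ∃ W : Submodule ℝ X,
      Dense (W : Set X) ∧ Module.rank ℝ W = α ∧ x ∈ W ∧ (W : Set X) ⊆ M ∪ {0} := by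
  classical
  obtain ⟨V, hVd, hVsub⟩ := hdenselin
  obtain ⟨n₀, hn₀⟩ := hNne
  have h0M : (0 : X) ∉ M := by
    intro h0
    have h1 : (0 : X) + n₀ ∈ M + N := Set.add_mem_add h0 hn₀
    have h2 : n₀ ∈ M := by simpa using hstronger h1
    have : n₀ ∈ M ∩ N := ⟨h2, hn₀⟩
    rw [hdisj] at this
    exact this
  haveI : SecondCountableTopology (V : Set X) :=
    (TopologicalSpace.IsSeparable.of_separableSpace (V : Set X)).secondCountableTopology
  -- a countable dense (in X) subset of V
  obtain ⟨s, hsc, hsd⟩ := TopologicalSpace.exists_countable_dense (V : Set X)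
  have hDV : (Subtype.val '' s : Set X) ⊆ (V : Set X) := by
    rintro _ ⟨y, _, rfl⟩; exact y.2
  have hDd : Dense (Subtype.val '' s : Set X) := by
    have hVc : (V : Set X) ⊆ closure (Subtype.val '' s) := by
      intro q hq
      have h1 : (⟨q, hq⟩ : (V : Set X)) ∈ closure s := hsd _
      exact closure_subtype.mp h1
    intro a
    have h1 : closure (V : Set X) ⊆ closure (closure (Subtype.val '' s)) := closure_mono hVc
    rw [closure_closure] at h1
    exact h1 (hVd a)
  obtain ⟨v, hv⟩ := Set.Countable.exists_eq_range (hsc.image _) hDd.nonempty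
  have hvV : ∀ n, v n ∈ V := fun n => hDV (hv ▸ Set.mem_range_self n)
  have hvd : Dense (Set.range v) := hv ▸ hDd
  -- an antitone neighborhood basis of 0
  obtain ⟨U, hU⟩ := (𝓝 (0 : X)).exists_antitone_basis
  have hUmem : ∀ k, U k ∈ 𝓝 (0 : X) := fun k => hU.toHasBasis.mem_of_mem trivial
  intro x hx
  obtain ⟨W₀, hrank, hxW₀, hW₀sub⟩ := hM x hx
  have hx0 : x ≠ 0 := fun h => h0M (h ▸ hx)
  set x' : W₀ := ⟨x, hxW₀⟩ with hx'def
  have hx'0 : x' ≠ 0 := by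
    intro h
    exact hx0 (congrArg Subtype.val h)
  have hsx : LinearIndepOn ℝ id ({x'} : Set W₀) :=
    (linearIndepOn_singleton_iff ℝ).mpr hx'0
  set t : Set W₀ := hsx.extend (Set.subset_univ _) with htdef
  set B : Module.Basis t ℝ W₀ := Module.Basis.extend hsx with hBdef
  have hxt : x' ∈ t := hsx.subset_extend _ rfl
  have htcard : Cardinal.mk t = α := by rw [B.mk_eq_rank'']; exact hrank
  haveI : Infinite t := Cardinal.infinite_iff.mpr (htcard ▸ hα)
  have htinf : (t \ {x'}).Infinite :=
    (Set.infinite_coe_iff.mp ‹Infinite t›).diff (Set.finite_singleton x')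
  let g0 : ℕ ↪ ↥(t \ {x'}) := htinf.natEmbedding
  let e : ℕ × ℕ ≃ ℕ := Denumerable.eqv (ℕ × ℕ)
  let g : ℕ × ℕ → ↥t := fun p => ⟨(g0 (e p) : W₀), (g0 (e p)).2.1⟩
  have hginj : Function.Injective g := by
    intro p q hpq
    have h0 : ((g p : W₀)) = ((g q : W₀)) := congrArg Subtype.val hpq
    have h1 : g0 (e p) = g0 (e q) := Subtype.ext h0
    exact e.injective (g0.injective h1)
  have hgx : ∀ p, (g p : W₀) ≠ x' := fun p => (g0 (e p)).2.2
  -- choose small nonzero multiples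
  have hchoice : ∀ p : ℕ × ℕ, ∃ r : ℝ, r ≠ 0 ∧ r • ((g p : W₀) : X) ∈ U p.2 := by
    intro p
    have hcont : Filter.Tendsto (fun r : ℝ => r • ((g p : W₀) : X)) (𝓝 0) (𝓝 0) := by
      have h := (continuous_id.smul
        (continuous_const (y := ((g p : W₀) : X)))).tendsto (0 : ℝ)
      have h2 : Tendsto (fun r : ℝ => r • ((g p : W₀) : X)) (𝓝 0) (𝓝 ((0 : ℝ) • ((g p : W₀) : X))) := h
      rwa [zero_smul] at h2
    have hmem : {r : ℝ | r • ((g p : W₀) : X) ∈ U p.2} ∈ 𝓝 (0 : ℝ) := hcont (hUmem p.2)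
    have hmem' : {r : ℝ | r • ((g p : W₀) : X) ∈ U p.2} ∩ {(0 : ℝ)}ᶜ ∈ 𝓝[≠] (0 : ℝ) :=
      Filter.inter_mem (mem_nhdsWithin_of_mem_nhds hmem) self_mem_nhdsWithin
    obtain ⟨r, hr⟩ := Filter.nonempty_of_mem hmem'
    exact ⟨r, by simpa using hr.2, hr.1⟩
  choose c hc0 hcU using hchoice
  -- the perturbed family
  let ε : t → ℝ := fun y => if h : ∃ p, g p = y then c h.choose else 1
  let z : t → X := fun y => if h : ∃ p, g p = y then v h.choose.1 else 0
  let uu : t → X := fun y => ε y • ((y : W₀) : X)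
  let w : t → X := fun y => uu y + z y
  have hε : ∀ y, ε y ≠ 0 := by
    intro y
    simp only [ε]
    split
    · exact hc0 _
    · exact one_ne_zero
  have hzV : ∀ y, z y ∈ V := by
    intro y
    simp only [z]
    split
    · exact hvV _
    · exact V.zero_mem
  have hgspec : ∀ p, ε (g p) = c p ∧ z (g p) = v p.1 := by
    intro p
    have h : ∃ q, g q = g p := ⟨p, rfl⟩
    have hq : h.choose = p := hginj h.choose_spec
    constructor
    · simp only [ε, dif_pos h, hq]
    · simp only [z, dif_pos h, hq]
  have hwx : w ⟨x', hxt⟩ = x := by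
    have h : ¬∃ p, g p = ⟨x', hxt⟩ := by
      rintro ⟨p, hp⟩
      exact hgx p (congrArg Subtype.val hp)
    simp only [w, uu, z, ε, dif_neg h]
    simp [hx'def]
  -- linear independence of uu
  have huu : LinearIndependent ℝ uu := by
    have h1 := B.linearIndependent.units_smul (fun y => Units.mk0 (ε y) (hε y))
    have h2 := h1.map' W₀.subtype (Submodule.ker_subtype W₀)
    convert h2 using 1
    funext y
    simp only [uu, hBdef, comp_apply, Pi.smul_apply', Units.smul_def, Units.val_mk0,
      Submodule.coe_subtype, SetLike.val_smul, Module.Basis.extend_apply_self]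
    have h3 : ((Module.Basis.extend hsx) y : W₀) = (y : W₀) := Module.Basis.extend_apply_self hsx y
    rw [h3]
    rfl
  -- decomposition of finite sums
  have hsplit : ∀ a : t →₀ ℝ, (a.sum fun y r => r • w y)
      = (a.sum fun y r => r • uu y) + (a.sum fun y r => r • z y) := by
    intro a
    rw [Finsupp.sum, Finsupp.sum, Finsupp.sum, ← Finset.sum_add_distrib]
    refine Finset.sum_congr rfl fun y _ => ?_
    simp [w, smul_add]
  have hP_mem : ∀ a : t →₀ ℝ, (a.sum fun y r => r • uu y) ∈ W₀ := by
    intro a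
    rw [Finsupp.sum]
    exact Submodule.sum_mem _ fun y _ =>
      Submodule.smul_mem _ _ (Submodule.smul_mem _ _ (SetLike.coe_mem _))
  have hQ_mem : ∀ a : t →₀ ℝ, (a.sum fun y r => r • z y) ∈ V := by
    intro a
    rw [Finsupp.sum]
    exact Submodule.sum_mem _ fun y _ => Submodule.smul_mem _ _ (hzV y)
  have hP0 : ∀ a : t →₀ ℝ, (a.sum fun y r => r • uu y) = 0 → a = 0 := by
    intro a ha
    exact linearIndependent_iff.mp huu a (by rwa [Finsupp.linearCombination_apply])
  -- membership of all span elements in M ∪ {0}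
  have hcore : ∀ a : t →₀ ℝ, (a.sum fun y r => r • w y) ∈ M ∪ {0} := by
    intro a
    rw [hsplit a]
    by_cases hP : (a.sum fun y r => r • uu y) = 0
    · have ha0 : a = 0 := hP0 a hP
      have hQ0 : (a.sum fun y r => r • z y) = 0 := by simp [ha0]
      rw [hP, hQ0, add_zero]
      exact Or.inr rfl
    · have hPM : (a.sum fun y r => r • uu y) ∈ M :=
        (hW₀sub (hP_mem a)).resolve_right (by simpa using hP)
      rcases hVsub (hQ_mem a) with hQN | hQ0
      · exact Or.inl (hstronger (Set.add_mem_add hPM hQN))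
      · rw [Set.mem_singleton_iff] at hQ0
        rw [hQ0, add_zero]
        exact Or.inl hPM
  -- linear independence of w
  have hwli : LinearIndependent ℝ w := by
    rw [linearIndependent_iff]
    intro a ha
    rw [Finsupp.linearCombination_apply, hsplit a] at ha
    apply hP0 a
    by_contra hP
    have hPM : (a.sum fun y r => r • uu y) ∈ M :=
      (hW₀sub (hP_mem a)).resolve_right (by simpa using hP)
    rcases hVsub (hQ_mem a) with hQN | hQ0
    · have h1 : (a.sum fun y r => r • uu y) + (a.sum fun y r => r • z y) ∈ M :=
        hstronger (Set.add_mem_add hPM hQN)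
      rw [ha] at h1
      exact h0M h1
    · rw [Set.mem_singleton_iff] at hQ0
      rw [hQ0, add_zero] at ha
      exact hP ha
  refine ⟨Submodule.span ℝ (Set.range w), ?_, ?_, ?_, ?_⟩
  · -- density
    have hvW : ∀ n : ℕ, v n ∈ closure (Submodule.span ℝ (Set.range w) : Set X) := by
      intro n
      have hb : (𝓝 (v n)).HasBasis (fun _ : ℕ => True) (fun k => (v n + ·) '' U k) := by
        have h1 := hU.toHasBasis.map (fun y => v n + y)
        rwa [map_add_left_nhds_zero] at h1
      rw [mem_closure_iff_nhds_basis hb]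
      intro k _
      refine ⟨w (g (n, k)), Submodule.subset_span (Set.mem_range_self _), ?_⟩
      refine ⟨ε (g (n, k)) • ((g (n, k) : W₀) : X), ?_, ?_⟩
      · rw [(hgspec (n, k)).1]
        exact hcU (n, k)
      · show v n + ε (g (n, k)) • ((g (n, k) : W₀) : X) = w (g (n, k))
        rw [add_comm]
        show uu (g (n, k)) + v n = w (g (n, k))
        rw [← (hgspec (n, k)).2]
    intro a
    have h1 : Set.range v ⊆ closure (Submodule.span ℝ (Set.range w) : Set X) := by
      rintro _ ⟨n, rfl⟩
      exact hvW n
    have h2 := closure_mono h1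
    rw [closure_closure] at h2
    exact h2 (hvd a)
  · -- rank
    rw [rank_span hwli, Cardinal.mk_range_eq w hwli.injective]
    exact htcard
  · -- x ∈ W
    exact Submodule.subset_span ⟨⟨x', hxt⟩, hwx⟩
  · -- subset
    intro p hp
    rw [SetLike.mem_coe, Finsupp.mem_span_range_iff_exists_finsupp] at hp
    obtain ⟨a, rfl⟩ := hp
    exact hcore a
end

section
/- Let N ≥ 1 and let A ⊆ ℝ^N be not relatively compact (equivalently, unbounded). Then there exists a function w : ℝ^N → ℝ such that w is infinitely differentiable on ℝ^N, w ∈ L^p(ℝ^N) with respect to Lebesgue measure for every real p ∈ [1, ∞), and w is unbounded on A, i.e. sup_{x ∈ A} |w(x)| = +∞. -/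
open MeasureTheory Filter Topology
open scoped ENNReal NNReal

noncomputable section

/-- Euclidean space `ℝ^N`. -/
abbrev RN (N : ℕ) := EuclideanSpace ℝ (Fin N)

/-- The space `X = C^∞(ℝ^N) ∩ ⋂_{p ∈ [1,∞)} L^p(ℝ^N)` of infinitely differentiable
functions that are `p`-integrable for every real `p ≥ 1`. -/
def SmoothIntegrable (N : ℕ) : Set (RN N → ℝ) :=
  {f | ContDiff ℝ (⊤ : ℕ∞) f ∧
       ∀ p : ℝ, 1 ≤ p → MemLp f (ENNReal.ofReal p) volume}

/-- `f` is unbounded on `A`, i.e. `sup_{x ∈ A} |f x| = +∞`. -/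
def UnboundedOn {N : ℕ} (A : Set (RN N)) (f : RN N → ℝ) : Prop :=
  ∀ C : ℝ, ∃ x ∈ A, C < |f x|

/-- `nBC∞I(A) = {f ∈ X : f is unbounded on A}`. -/
def nBCI {N : ℕ} (A : Set (RN N)) : Set (RN N → ℝ) :=
  {f | f ∈ SmoothIntegrable N ∧ UnboundedOn A f}

/-- For any not relatively compact (= unbounded) `A ⊆ ℝ^N` there is a
smooth function, `p`-integrable for all `p ∈ [1,∞)`, which is unbounded on `A`. -/
theorem exists_smooth_integrable_unbounded (N : ℕ) (hN : 1 ≤ N)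
    (A : Set (RN N)) (hA : ¬ Bornology.IsBounded A) :
    ∃ w : RN N → ℝ, w ∈ SmoothIntegrable N ∧ UnboundedOn A w := by
  classical
  -- Step 1: a sequence in `A` escaping to infinity with norm gaps ≥ 5.
  have hA' : ∀ R : ℝ, ∃ x, x ∈ A ∧ R < ‖x‖ := by
    intro R
    by_contra h
    push_neg at h
    exact hA (isBounded_iff_forall_norm_le.2 ⟨R, fun x hx => h x hx⟩)
  choose g hg1 hg2 using hA'
  set a : ℕ → RN N := fun n => Nat.rec (g 5) (fun _ x => g (‖x‖ + 5)) n with ha_def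
  have ha_mem : ∀ n, a n ∈ A := by
    intro n; cases n
    · exact hg1 5
    · exact hg1 _
  have ha_gap : ∀ n, ‖a n‖ + 5 < ‖a (n + 1)‖ := fun n => hg2 (‖a n‖ + 5)
  have ha_lt : ∀ m n, m < n → ‖a m‖ + 5 ≤ ‖a n‖ := by
    intro m n h
    induction n with
    | zero => omega
    | succ k ih =>
      rcases Nat.lt_succ_iff_lt_or_eq.1 h with h' | h'
      · linarith [ih h', ha_gap k]
      · subst h'; exact (ha_gap m).le
  have ha_sep : ∀ m n, m ≠ n → (5 : ℝ) ≤ dist (a m) (a n) := by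
    have key : ∀ i j, i < j → (5 : ℝ) ≤ dist (a i) (a j) := by
      intro i j hij
      have h1 := ha_lt i j hij
      have h2 := abs_norm_sub_norm_le (a j) (a i)
      rw [dist_comm, dist_eq_norm]
      calc (5 : ℝ) ≤ ‖a j‖ - ‖a i‖ := by linarith
        _ ≤ |‖a j‖ - ‖a i‖| := le_abs_self _
        _ ≤ ‖a j - a i‖ := h2
    intro m n hmn
    rcases lt_or_gt_of_ne hmn with h | h
    · exact key m n h
    · rw [dist_comm]; exact key n m h
  -- Step 2: bump functions
  have hhalf : (0 : ℝ) < 1 / 2 := by norm_num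
  let φ : ∀ n : ℕ, ContDiffBump (a n) := fun n =>
    ⟨(1 / 2 : ℝ) ^ (n + 2), (1 / 2 : ℝ) ^ (n + 1), by positivity, by
      rw [pow_succ]
      nlinarith [pow_pos hhalf (n + 1)]⟩
  have hrOut : ∀ n, (φ n).rOut = (1 / 2 : ℝ) ^ (n + 1) := fun n => rfl
  have hrOut_le : ∀ n : ℕ, ((1 : ℝ) / 2) ^ (n + 1) ≤ 1 / 2 := by
    intro n
    calc ((1 : ℝ) / 2) ^ (n + 1) ≤ (1 / 2 : ℝ) ^ 1 :=
          pow_le_pow_of_le_one (by norm_num) (by norm_num) (by omega)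
      _ = 1 / 2 := pow_one _
  set f : ℕ → RN N → ℝ := fun n x => (n : ℝ) * φ n x with hf_def
  have hf_cont : ∀ n, ContDiff ℝ (⊤ : ℕ∞) (f n) := fun n => contDiff_const.mul (φ n).contDiff
  have hf_zero : ∀ n x, (1 : ℝ) / 2 ≤ dist x (a n) → f n x = 0 := by
    intro n x hx
    have h0 : φ n x = 0 := (φ n).zero_of_le_dist (by rw [hrOut]; linarith [hrOut_le n])
    simp [hf_def, h0]
  set w : RN N → ℝ := fun x => ∑' n, f n x with hw_def
  -- Step 3: local structure of `w`
  have hloc : ∀ x₀ : RN N, (∀ x ∈ Metric.ball x₀ 1, w x = 0) ∨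
      ∃ n, ∀ x ∈ Metric.ball x₀ 1, w x = f n x := by
    intro x₀
    by_cases hx : ∃ n, dist x₀ (a n) < 3 / 2
    · obtain ⟨n, hn⟩ := hx
      right
      refine ⟨n, fun x hx' => ?_⟩
      refine tsum_eq_single n fun m hm => ?_
      apply hf_zero
      have h5 := ha_sep n m (fun h => hm h.symm)
      have hxx : dist x x₀ < 1 := Metric.mem_ball.1 hx'
      have t1 : dist (a n) (a m) ≤ dist (a n) x₀ + dist x₀ x + dist x (a m) :=
        dist_triangle4 _ _ _ _
      have e1 : dist (a n) x₀ = dist x₀ (a n) := dist_comm _ _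
      have e2 : dist x₀ x = dist x x₀ := dist_comm _ _
      linarith
    · left
      push_neg at hx
      intro x hx'
      have hz : ∀ n, f n x = 0 := by
        intro n
        apply hf_zero
        have hxx : dist x x₀ < 1 := Metric.mem_ball.1 hx'
        have t := dist_triangle x₀ x (a n)
        have e : dist x₀ x = dist x x₀ := dist_comm _ _
        have := hx n
        linarith
      calc w x = ∑' n : ℕ, (0 : ℝ) := tsum_congr fun n => hz n
        _ = 0 := tsum_zero
  -- Step 4: smoothness
  have hw_smooth : ContDiff ℝ (⊤ : ℕ∞) w := by
    rw [contDiff_iff_contDiffAt]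
    intro x₀
    rcases hloc x₀ with h | ⟨n, h⟩
    · have he : w =ᶠ[𝓝 x₀] fun _ => (0 : ℝ) :=
        eventually_of_mem (Metric.ball_mem_nhds x₀ one_pos) h
      exact (contDiffAt_const (c := (0 : ℝ))).congr_of_eventuallyEq he
    · have he : w =ᶠ[𝓝 x₀] f n :=
        eventually_of_mem (Metric.ball_mem_nhds x₀ one_pos) h
      exact ((hf_cont n).contDiffAt).congr_of_eventuallyEq he
  -- Step 5: values at the points `a n`
  have hw_val : ∀ n, w (a n) = n := by
    intro n
    have hz : ∀ m, m ≠ n → f m (a n) = 0 := by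
      intro m hm
      apply hf_zero
      have h5 := ha_sep m n hm
      have : dist (a n) (a m) = dist (a m) (a n) := dist_comm _ _
      linarith
    have h1 : φ n (a n) = 1 :=
      (φ n).one_of_mem_closedBall (by
        simp only [Metric.mem_closedBall, dist_self]
        positivity)
    calc w (a n) = f n (a n) := tsum_eq_single n hz
      _ = n := by simp [hf_def, h1]
  refine ⟨w, ⟨hw_smooth, ?_⟩, ?_⟩
  · -- membership in all L^p
    intro p hp
    have hp0 : (0 : ℝ) < p := by linarith
    have hq0 : (ENNReal.ofReal p) ≠ 0 := by
      simp only [ne_eq, ENNReal.ofReal_eq_zero, not_le]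
      linarith
    refine ⟨hw_smooth.continuous.aestronglyMeasurable, ?_⟩
    rw [eLpNorm_eq_lintegral_rpow_enorm_toReal hq0 ENNReal.ofReal_ne_top,
      ENNReal.toReal_ofReal hp0.le]
    have key : (∫⁻ x, (‖w x‖₊ : ℝ≥0∞) ^ p ∂volume) < ⊤ := by
      have hpt : ∀ x, (‖w x‖₊ : ℝ≥0∞) ^ p = ∑' n, (‖f n x‖₊ : ℝ≥0∞) ^ p := by
        intro x
        by_cases hx : ∃ n, dist x (a n) < 1 / 2
        · obtain ⟨n, hn⟩ := hx
          have hz : ∀ m, m ≠ n → f m x = 0 := by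
            intro m hm
            apply hf_zero
            have h5 := ha_sep m n hm
            have t : dist (a m) (a n) ≤ dist (a m) x + dist x (a n) := dist_triangle _ _ _
            have e : dist (a m) x = dist x (a m) := dist_comm _ _
            linarith
          have hw_x : w x = f n x := tsum_eq_single n hz
          rw [hw_x, tsum_eq_single n]
          intro m hm
          rw [hz m hm]
          simp [ENNReal.zero_rpow_of_pos hp0]
        · push_neg at hx
          have hz : ∀ m, f m x = 0 := fun m => hf_zero m x (hx m)
          have hw_x : w x = 0 := by
            calc w x = ∑' m : ℕ, (0 : ℝ) := tsum_congr fun m => hz m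
              _ = 0 := tsum_zero
          rw [hw_x]
          simp [hz, ENNReal.zero_rpow_of_pos hp0]
      have hmeas : ∀ n : ℕ, AEMeasurable (fun x => (‖f n x‖₊ : ℝ≥0∞) ^ p) volume := by
        intro n
        exact (ENNReal.continuous_rpow_const.measurable.comp
          ((hf_cont n).continuous.measurable.nnnorm.coe_nnreal_ennreal)).aemeasurable
      rw [lintegral_congr hpt, lintegral_tsum hmeas]
      set C : ℝ≥0∞ := volume (Metric.ball (0 : RN N) 1) with hC_def
      have hC_top : C < ⊤ := measure_ball_lt_top
      have hbound : ∀ n : ℕ, (∫⁻ x, (‖f n x‖₊ : ℝ≥0∞) ^ p ∂volume) ≤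
          ENNReal.ofReal ((n : ℝ) ^ p * (1 / 2 : ℝ) ^ (n + 1)) * C := by
        intro n
        have hr0 : (0 : ℝ) ≤ (1 / 2 : ℝ) ^ (n + 1) := by positivity
        have hstep : ∀ x, (‖f n x‖₊ : ℝ≥0∞) ^ p ≤
            (Metric.closedBall (a n) ((1 / 2 : ℝ) ^ (n + 1))).indicator
              (fun _ => ENNReal.ofReal ((n : ℝ) ^ p)) x := by
          intro x
          by_cases hx : x ∈ Metric.closedBall (a n) ((1 / 2 : ℝ) ^ (n + 1))
          · rw [Set.indicator_of_mem hx]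
            have h1 : ‖f n x‖ ≤ (n : ℝ) := by
              have hb0 := (φ n).nonneg (x := x)
              have hb1 := (φ n).le_one (x := x)
              calc ‖f n x‖ = (n : ℝ) * φ n x := by
                    rw [hf_def]
                    rw [Real.norm_eq_abs, abs_of_nonneg (mul_nonneg (Nat.cast_nonneg n) hb0)]
                _ ≤ (n : ℝ) * 1 := mul_le_mul_of_nonneg_left hb1 (Nat.cast_nonneg n)
                _ = n := mul_one _
            calc (‖f n x‖₊ : ℝ≥0∞) ^ p = (ENNReal.ofReal ‖f n x‖) ^ p := by
                  exact congrArg (· ^ p) (ofReal_norm _).symm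
              _ ≤ (ENNReal.ofReal (n : ℝ)) ^ p :=
                  ENNReal.rpow_le_rpow (ENNReal.ofReal_le_ofReal h1) hp0.le
              _ = ENNReal.ofReal ((n : ℝ) ^ p) :=
                  ENNReal.ofReal_rpow_of_nonneg (Nat.cast_nonneg n) hp0.le
          · rw [Set.indicator_of_notMem hx]
            have hd : (1 / 2 : ℝ) ^ (n + 1) < dist x (a n) := by
              simpa [Metric.mem_closedBall, not_le] using hx
            have h0 : φ n x = 0 := (φ n).zero_of_le_dist (by rw [hrOut]; exact hd.le)
            simp [hf_def, h0, ENNReal.zero_rpow_of_pos hp0]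
        have hvol : volume (Metric.closedBall (a n) ((1 / 2 : ℝ) ^ (n + 1))) ≤
            ENNReal.ofReal ((1 / 2 : ℝ) ^ (n + 1)) * C := by
          rw [Measure.addHaar_closedBall (volume : Measure (RN N)) (a n) hr0, hC_def]
          gcongr
          have hfr : Module.finrank ℝ (RN N) = N := by
            simp [finrank_euclideanSpace]
          rw [hfr]
          calc ((1 / 2 : ℝ) ^ (n + 1)) ^ N ≤ ((1 / 2 : ℝ) ^ (n + 1)) ^ 1 :=
                pow_le_pow_of_le_one hr0 (by linarith [hrOut_le n]) hN
            _ = (1 / 2 : ℝ) ^ (n + 1) := pow_one _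
        calc (∫⁻ x, (‖f n x‖₊ : ℝ≥0∞) ^ p ∂volume)
            ≤ ∫⁻ x, (Metric.closedBall (a n) ((1 / 2 : ℝ) ^ (n + 1))).indicator
                (fun _ => ENNReal.ofReal ((n : ℝ) ^ p)) x ∂volume := lintegral_mono hstep
          _ = ENNReal.ofReal ((n : ℝ) ^ p) *
                volume (Metric.closedBall (a n) ((1 / 2 : ℝ) ^ (n + 1))) :=
              lintegral_indicator_const measurableSet_closedBall _
          _ ≤ ENNReal.ofReal ((n : ℝ) ^ p) * (ENNReal.ofReal ((1 / 2 : ℝ) ^ (n + 1)) * C) := by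
              gcongr
          _ = ENNReal.ofReal ((n : ℝ) ^ p * (1 / 2 : ℝ) ^ (n + 1)) * C := by
              rw [← mul_assoc, ← ENNReal.ofReal_mul (Real.rpow_nonneg (Nat.cast_nonneg n) p)]
      have hnn : ∀ n : ℕ, 0 ≤ (n : ℝ) ^ p * (1 / 2 : ℝ) ^ (n + 1) := by
        intro n
        exact mul_nonneg (Real.rpow_nonneg (Nat.cast_nonneg n) p) (by positivity)
      have hsum : Summable (fun n : ℕ => (n : ℝ) ^ p * (1 / 2 : ℝ) ^ (n + 1)) := by
        have hs : Summable (fun n : ℕ => (n : ℝ) ^ (⌈p⌉₊ : ℕ) * (1 / 2 : ℝ) ^ n) :=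
          summable_pow_mul_geometric_of_norm_lt_one _ (by rw [Real.norm_eq_abs, abs_of_pos hhalf]; norm_num)
        refine Summable.of_nonneg_of_le hnn (fun n => ?_) hs
        have h2 : ((1 : ℝ) / 2) ^ (n + 1) ≤ (1 / 2 : ℝ) ^ n :=
          pow_le_pow_of_le_one (by norm_num) (by norm_num) (by omega)
        have h1 : (n : ℝ) ^ p ≤ (n : ℝ) ^ (⌈p⌉₊ : ℕ) := by
          rcases Nat.eq_zero_or_pos n with rfl | hn
          · rw [Nat.cast_zero, Real.zero_rpow hp0.ne']
            positivity
          · have h1n : (1 : ℝ) ≤ n := by exact_mod_cast hn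
            calc (n : ℝ) ^ p ≤ (n : ℝ) ^ ((⌈p⌉₊ : ℕ) : ℝ) :=
                  Real.rpow_le_rpow_of_exponent_le h1n (Nat.le_ceil p)
              _ = (n : ℝ) ^ (⌈p⌉₊ : ℕ) := Real.rpow_natCast _ _
        exact mul_le_mul h1 h2 (by positivity) (by positivity)
      calc (∑' n : ℕ, ∫⁻ x, (‖f n x‖₊ : ℝ≥0∞) ^ p ∂volume)
          ≤ ∑' n : ℕ, ENNReal.ofReal ((n : ℝ) ^ p * (1 / 2 : ℝ) ^ (n + 1)) * C :=
            ENNReal.tsum_le_tsum hbound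
        _ = (∑' n : ℕ, ENNReal.ofReal ((n : ℝ) ^ p * (1 / 2 : ℝ) ^ (n + 1))) * C :=
            ENNReal.tsum_mul_right
        _ < ⊤ := by
            refine ENNReal.mul_lt_top ?_ hC_top
            rw [← ENNReal.ofReal_tsum_of_nonneg hnn hsum]
            exact ENNReal.ofReal_lt_top
    exact ENNReal.rpow_lt_top_of_nonneg (by positivity) key.ne
  · -- unboundedness on A
    intro C
    obtain ⟨n, hn⟩ := exists_nat_gt C
    refine ⟨a n, ha_mem n, ?_⟩
    rw [hw_val n, abs_of_nonneg (Nat.cast_nonneg n)]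
    exact hn
end
end

section
/- Let N ≥ 1 and let A ⊆ ℝ^N be not relatively compact (equivalently, unbounded). Then the set nBC∞I(A) is pointwise 𝔠-lineable in X: for every f ∈ nBC∞I(A) there exists a linear subspace W of the space of functions ℝ^N → ℝ such that dim(W) = 𝔠, f ∈ W, and W ⊆ nBC∞I(A) ∪ {0}. -/
open MeasureTheory Filter Topology

noncomputable section

open Polynomial in
lemma vdm {ι : Type*} [DecidableEq ι] (s : Finset ι) (c : ι → ℝ) (hc : Set.InjOn c s) (b : ι → ℝ)
    (h : ∀ n : ℕ, ∑ i ∈ s, b i * c i ^ n = 0) : ∀ i ∈ s, b i = 0 := by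
  intro i₀ hi₀
  set P : Polynomial ℝ := ∏ i ∈ s.erase i₀, (X - C (c i)) with hP
  have hsum : ∑ i ∈ s, b i * P.eval (c i) = 0 := by
    calc ∑ i ∈ s, b i * P.eval (c i)
        = ∑ i ∈ s, ∑ n ∈ Finset.range (P.natDegree+1), P.coeff n * (b i * c i ^ n) := by
          refine Finset.sum_congr rfl fun i _ => ?_
          rw [Polynomial.eval_eq_sum_range, Finset.mul_sum]
          exact Finset.sum_congr rfl fun n _ => by ring
      _ = ∑ n ∈ Finset.range (P.natDegree+1), P.coeff n * ∑ i ∈ s, b i * c i ^ n := by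
          rw [Finset.sum_comm]
          exact Finset.sum_congr rfl fun n _ => by rw [Finset.mul_sum]
      _ = 0 := by simp [h]
  have hred : ∑ i ∈ s, b i * P.eval (c i) = b i₀ * P.eval (c i₀) := by
    refine Finset.sum_eq_single_of_mem i₀ hi₀ fun i hi hne => ?_
    have : P.eval (c i) = 0 := by
      rw [hP, Polynomial.eval_prod]
      exact Finset.prod_eq_zero (Finset.mem_erase.2 ⟨hne, hi⟩) (by simp)
    simp [this]
  have hP0 : P.eval (c i₀) ≠ 0 := by
    rw [hP, Polynomial.eval_prod]
    refine Finset.prod_ne_zero_iff.2 fun i hi => ?_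
    have hi' := Finset.mem_erase.1 hi
    have : c i ≠ c i₀ := fun hcc => hi'.1 (hc hi'.2 hi₀ hcc)
    simp [sub_eq_zero]
    exact fun hcc => this hcc.symm
  have := hred ▸ hsum
  exact (mul_eq_zero.1 this).resolve_right hP0

lemma iteratedDeriv_expsum {ι : Type*} (s : Finset ι) (a c : ι → ℝ) (n : ℕ) :
    iteratedDeriv n (fun t => ∑ i ∈ s, a i * Real.exp (c i * t)) =
    fun t => ∑ i ∈ s, a i * c i ^ n * Real.exp (c i * t) := by
  induction n with
  | zero => simp
  | succ n ih =>
    rw [iteratedDeriv_succ, ih]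
    funext t
    have key : ∀ i ∈ s, HasDerivAt (fun t => a i * c i ^ n * Real.exp (c i * t))
        (a i * c i ^ (n+1) * Real.exp (c i * t)) t := by
      intro i _
      have h1 : HasDerivAt (fun t => c i * t) (c i) t := by simpa using (hasDerivAt_id t).const_mul (c i)
      have h2 := (h1.exp).const_mul (a i * c i ^ n)
      exact h2.congr_deriv (by ring)
    exact (HasDerivAt.fun_sum key).deriv

lemma expsum_coeffs_zero {ι : Type*} [DecidableEq ι] (s : Finset ι) (a c : ι → ℝ)
    (hc : Set.InjOn c s)
    (h : ∀ t ∈ Set.Icc (0:ℝ) 1, ∑ i ∈ s, a i * Real.exp (c i * t) = 0) :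
    ∀ i ∈ s, a i = 0 := by
  have hmem : Set.Ioo (0:ℝ) 1 ∈ nhds (2⁻¹ : ℝ) :=
    Ioo_mem_nhds (by norm_num) (by norm_num)
  have hev : (fun t => ∑ i ∈ s, a i * Real.exp (c i * t)) =ᶠ[nhds (2⁻¹ : ℝ)] (fun _ => 0) := by
    filter_upwards [hmem] with t ht
    exact h t (Set.Ioo_subset_Icc_self ht)
  have hm : ∀ n : ℕ, ∑ i ∈ s, (a i * Real.exp (c i * 2⁻¹)) * c i ^ n = 0 := by
    intro n
    have h1 : iteratedDeriv n (fun t => ∑ i ∈ s, a i * Real.exp (c i * t)) 2⁻¹ = 0 := by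
      rw [hev.iteratedDeriv_eq n]
      have : (fun _ : ℝ => (0:ℝ)) = fun t => ∑ i ∈ (∅ : Finset ι), a i * Real.exp (c i * t) := by simp
      rw [this, iteratedDeriv_expsum]
      simp
    rw [iteratedDeriv_expsum] at h1
    rw [← h1]
    exact Finset.sum_congr rfl fun i _ => by ring
  intro i hi
  have := vdm s c hc _ hm i hi
  have hexp : Real.exp (c i * 2⁻¹) ≠ 0 := Real.exp_ne_zero _
  exact (mul_eq_zero.1 this).resolve_right hexp

lemma exists_u (N : ℕ) (y : ℕ → RN N) (hy : ∀ j k, j ≠ k → 6 ≤ dist (y j) (y k))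
    (v : ℕ → ℝ) (hv : ∀ k, v k ∈ Set.Icc (0:ℝ) 1) :
    ∃ u : RN N → ℝ, ContDiff ℝ (⊤ : ℕ∞) u ∧ (∀ x, u x ∈ Set.Icc (0:ℝ) 1) ∧
      ∀ k, u (y k) = v k := by
  obtain ⟨b, hbIn, hbOut⟩ : ∃ b : ContDiffBump (0 : RN N), b.rIn = 1 ∧ b.rOut = 2 :=
    ⟨⟨1, 2, one_pos, one_lt_two⟩, rfl, rfl⟩
  set u : RN N → ℝ := fun x => ∑' k, v k * b (x - y k) with hu
  have hzero : ∀ (x : RN N) (j : ℕ), 2 ≤ dist x (y j) → b (x - y j) = 0 := by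
    intro x j hd
    apply b.zero_of_le_dist
    rw [hbOut]
    simpa [dist_eq_norm] using hd
  have hsingle : ∀ (x : RN N) (k : ℕ), (∀ j, j ≠ k → 2 ≤ dist x (y j)) →
      u x = v k * b (x - y k) := by
    intro x k h
    exact tsum_eq_single k fun j hj => by rw [hzero x j (h j hj)]; ring
  have hnone : ∀ (x : RN N), (∀ j, 2 ≤ dist x (y j)) → u x = 0 := by
    intro x h
    have : ∀ j : ℕ, v j * b (x - y j) = 0 := fun j => by rw [hzero x j (h j)]; ring
    rw [hu]; simp only [this, tsum_zero]
  have hval : ∀ k, u (y k) = v k := by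
    intro k
    have h6 : ∀ j, j ≠ k → 2 ≤ dist (y k) (y j) := by
      intro j hj
      have := hy k j (fun h => hj h.symm)
      linarith
    rw [hsingle (y k) k h6]
    have hb1 : b ((y k) - (y k)) = 1 := by
      rw [sub_self]
      exact b.one_of_mem_closedBall (by simp [hbIn])
    rw [hb1, mul_one]
  have hbounds : ∀ x, u x ∈ Set.Icc (0:ℝ) 1 := by
    intro x
    by_cases hx : ∃ k, dist x (y k) < 2
    · obtain ⟨k, hk⟩ := hx
      have hothers : ∀ j, j ≠ k → 2 ≤ dist x (y j) := by
        intro j hj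
        by_contra h
        push_neg at h
        have t1 : dist (y j) (y k) ≤ dist (y j) x + dist x (y k) := dist_triangle _ _ _
        rw [dist_comm (y j) x] at t1
        have := hy j k hj
        linarith
      rw [hsingle x k hothers]
      exact ⟨mul_nonneg (hv k).1 b.nonneg, mul_le_one₀ (hv k).2 b.nonneg b.le_one⟩
    · push_neg at hx
      rw [hnone x hx]
      exact ⟨le_refl 0, zero_le_one⟩
  have hsmooth : ContDiff ℝ (⊤ : ℕ∞) u := by
    rw [contDiff_iff_contDiffAt]
    intro z
    by_cases hz : ∃ k, dist z (y k) < 3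
    · obtain ⟨k, hk⟩ := hz
      have hsm : ContDiff ℝ (⊤:ℕ∞) (fun x : RN N => v k * b (x - y k)) :=
        contDiff_const.mul (b.contDiff.comp (contDiff_id.sub contDiff_const))
      apply hsm.contDiffAt.congr_of_eventuallyEq
      filter_upwards [Metric.ball_mem_nhds z one_pos] with x hx
      apply hsingle x k
      intro j hj
      have t1 : dist (y j) (y k) ≤ dist (y j) x + dist x z + dist z (y k) :=
        dist_triangle4 _ _ _ _
      have h6 := hy j k hj
      have hxz : dist x z < 1 := by rwa [Metric.mem_ball] at hx
      rw [dist_comm (y j) x] at t1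
      linarith
    · push_neg at hz
      apply (contDiffAt_const (c := (0:ℝ))).congr_of_eventuallyEq
      filter_upwards [Metric.ball_mem_nhds z one_pos] with x hx
      apply hnone x
      intro j
      have t1 : dist z (y j) ≤ dist z x + dist x (y j) := dist_triangle _ _ _
      have hxz : dist x z < 1 := by rwa [Metric.mem_ball] at hx
      rw [dist_comm z x] at t1
      linarith [hz j]
  exact ⟨u, hsmooth, hbounds, hval⟩

lemma exists_y {N : ℕ} {A : Set (RN N)} {f : RN N → ℝ} (hf : Continuous f)
    (hu : UnboundedOn A f) :
    ∃ y : ℕ → RN N, (∀ k, y k ∈ A) ∧ (∀ k : ℕ, (k:ℝ) < |f (y k)|) ∧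
      ∀ j k, j ≠ k → 6 ≤ dist (y j) (y k) := by
  have exists_pt : ∀ R C : ℝ, ∃ x, x ∈ A ∧ C < |f x| ∧ R < ‖x‖ := by
    intro R C
    obtain ⟨M, hM⟩ := (isCompact_closedBall (0 : RN N) R).exists_bound_of_continuousOn
      hf.continuousOn
    obtain ⟨x, hxA, hxf⟩ := hu (max C M)
    refine ⟨x, hxA, lt_of_le_of_lt (le_max_left _ _) hxf, ?_⟩
    by_contra h
    push_neg at h
    have hx : x ∈ Metric.closedBall (0 : RN N) R := by
      simpa [Metric.mem_closedBall, dist_eq_norm] using h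
    have := hM x hx
    rw [Real.norm_eq_abs] at this
    have := lt_of_le_of_lt (le_max_right C M) hxf
    linarith
  choose pt hptA hptf hptn using exists_pt
  set y : ℕ → RN N := fun k =>
    Nat.rec (pt 0 0) (fun k prev => pt (‖prev‖ + 6) ((k : ℝ) + 1)) k with hy
  have hys : ∀ k, y (k+1) = pt (‖y k‖ + 6) ((k:ℝ)+1) := fun k => rfl
  have hA : ∀ k, y k ∈ A := by
    intro k
    cases k with
    | zero => exact hptA 0 0
    | succ k => rw [hys]; exact hptA _ _
  have hfy : ∀ k : ℕ, (k:ℝ) < |f (y k)| := by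
    intro k
    cases k with
    | zero => rw [show y 0 = pt 0 0 from rfl]; simpa using hptf 0 0
    | succ k => rw [hys]; push_cast; exact hptf _ _
  have hgrow : ∀ k, ‖y k‖ + 6 < ‖y (k+1)‖ := by
    intro k
    rw [hys]
    exact hptn _ _
  have hmono : ∀ j k, j < k → ‖y j‖ + 6 ≤ ‖y k‖ := by
    intro j k hjk
    induction k with
    | zero => omega
    | succ k ih =>
      rcases Nat.lt_succ_iff_lt_or_eq.1 hjk with h | h
      · have h1 := ih h
        have h2 := hgrow k
        linarith
      · subst h
        exact (hgrow j).le
  have hdist : ∀ j k, j ≠ k → 6 ≤ dist (y j) (y k) := by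
    have key : ∀ j k, j < k → 6 ≤ dist (y j) (y k) := by
      intro j k hjk
      have h1 := hmono j k hjk
      have h2 : ‖y k‖ - ‖y j‖ ≤ ‖y k - y j‖ := norm_sub_norm_le _ _
      rw [dist_comm, dist_eq_norm]
      linarith
    intro j k hjk
    rcases lt_or_gt_of_ne hjk with h | h
    · exact key j k h
    · rw [dist_comm]; exact key k j h
  exact ⟨y, hA, hfy, hdist⟩

lemma exists_d : ∃ d : ℕ → ℝ, (∀ m, d m ∈ Set.Icc (0:ℝ) 1) ∧
    ∀ g : ℝ → ℝ, Continuous g → (∀ m, g (d m) = 0) →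
      ∀ t ∈ Set.Icc (0:ℝ) 1, g t = 0 := by
  set e : ℕ → ℚ := fun m => (Denumerable.eqv ℚ).symm m with he
  set d : ℕ → ℝ := fun m => min 1 (max 0 ((e m : ℝ))) with hd
  have hmem : ∀ m, d m ∈ Set.Icc (0:ℝ) 1 := by
    intro m
    constructor
    · exact le_min zero_le_one (le_max_left _ _)
    · exact min_le_left _ _
  have hdense : Set.Icc (0:ℝ) 1 ⊆ closure (Set.range d) := by
    intro t ht
    rw [Metric.mem_closure_iff]
    intro ε hε
    obtain ⟨q, hq⟩ := exists_rat_near t hε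
    refine ⟨d ((Denumerable.eqv ℚ) q), Set.mem_range_self _, ?_⟩
    have heq : e ((Denumerable.eqv ℚ) q) = q := (Denumerable.eqv ℚ).symm_apply_apply q
    have hcl : |t - d ((Denumerable.eqv ℚ) q)| ≤ |t - (q:ℝ)| := by
      rw [hd]
      simp only [heq]
      rcases le_total ((q:ℝ)) 0 with h | h
      · rw [max_eq_left h, min_eq_right zero_le_one]
        rw [abs_of_nonneg (by linarith [ht.1]), abs_of_nonneg (by linarith [ht.1])]
        linarith
      · rw [max_eq_right h]
        rcases le_total ((q:ℝ)) 1 with h1 | h1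
        · rw [min_eq_right h1]
        · rw [min_eq_left h1]
          rw [abs_of_nonpos (by linarith [ht.2]), abs_of_nonpos (by linarith [ht.2])]
          linarith
    rw [Real.dist_eq]
    exact lt_of_le_of_lt hcl hq
  refine ⟨d, hmem, ?_⟩
  intro g hg hgz t ht
  have heqon : Set.EqOn g 0 (Set.range d) := by
    rintro x ⟨m, rfl⟩
    exact hgz m
  exact heqon.closure hg continuous_zero (hdense ht)

/-- `nBC∞I(A)` is pointwise `𝔠`-lineable. -/
theorem nBCI_pointwise_continuum_lineable (N : ℕ) (hN : 1 ≤ N)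
    (A : Set (RN N)) (hA : ¬ Bornology.IsBounded A) :
    ∀ f ∈ nBCI A, ∃ W : Submodule ℝ (RN N → ℝ),
      Module.rank ℝ W = Cardinal.continuum ∧ f ∈ W ∧
      (W : Set (RN N → ℝ)) ⊆ nBCI A ∪ {0} := by
  classical
  rintro f ⟨⟨hfsm, hfLp⟩, hfub⟩
  obtain ⟨y, hyA, hyf, hydist⟩ := exists_y hfsm.continuous hfub
  obtain ⟨d, hd01, hdzero⟩ := exists_d
  set v : ℕ → ℝ := fun k => d (Nat.unpair k).1 with hv
  obtain ⟨u, husm, hub, huy⟩ := exists_u N y hydist v (fun k => hd01 _)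
  set F : Set.Icc (0:ℝ) 1 → (RN N → ℝ) :=
    fun c => fun x => f x * Real.exp ((c : ℝ) * u x) with hF
  set W : Submodule ℝ (RN N → ℝ) := Submodule.span ℝ (Set.range F) with hW
  -- representation of sums
  have hrep : ∀ (l : Set.Icc (0:ℝ) 1 →₀ ℝ) (x : RN N),
      (l.sum fun i a => a • F i) x
        = f x * ∑ c ∈ l.support, l c * Real.exp ((c : ℝ) * u x) := by
    intro l x
    rw [Finsupp.sum, Finset.sum_apply, Finset.mul_sum]
    refine Finset.sum_congr rfl fun c _ => ?_
    simp [hF, smul_eq_mul]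
    ring
  -- each member is smooth and integrable
  have hX : ∀ w ∈ W, w ∈ SmoothIntegrable N := by
    intro w hw
    refine Submodule.span_induction ?_ ?_ ?_ ?_ hw
    · rintro w ⟨c, rfl⟩
      constructor
      · exact hfsm.mul (Real.contDiff_exp.comp (contDiff_const.mul husm))
      · intro p hp
        refine MemLp.of_le_mul (c := Real.exp 1) (hfLp p hp) ?_ ?_
        · exact ((hfsm.continuous.mul (Real.continuous_exp.comp
            (continuous_const.mul husm.continuous)))).aestronglyMeasurable
        · refine Filter.Eventually.of_forall fun x => ?_
          have h1 : (c : ℝ) * u x ≤ 1 := by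
            have := (hub x).2
            have := (hub x).1
            have := c.2.1
            have := c.2.2
            nlinarith
          have h2 : Real.exp ((c:ℝ) * u x) ≤ Real.exp 1 := Real.exp_le_exp.2 h1
          simp only [Real.norm_eq_abs, hF]
          rw [abs_mul, abs_of_nonneg (Real.exp_pos _).le, mul_comm (Real.exp 1) _]
          exact mul_le_mul_of_nonneg_left h2 (abs_nonneg _)
    · exact ⟨contDiff_const, fun p hp => by simpa using zero_memLp (p := ENNReal.ofReal p)⟩
    · rintro w₁ w₂ _ _ ⟨h1s, h1p⟩ ⟨h2s, h2p⟩
      exact ⟨h1s.add h2s, fun p hp => (h1p p hp).add (h2p p hp)⟩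
    · rintro a w _ ⟨hs, hp⟩
      exact ⟨hs.const_smul a, fun p h => (hp p h).const_smul a⟩
  -- the key dichotomy
  have hkey : ∀ (l : Set.Icc (0:ℝ) 1 →₀ ℝ),
      (l.sum fun i a => a • F i) = 0 ∨ UnboundedOn A (l.sum fun i a => a • F i) := by
    intro l
    set g : ℝ → ℝ := fun t => ∑ c ∈ l.support, l c * Real.exp ((c : ℝ) * t) with hg
    by_cases hgz : ∀ m, g (d m) = 0
    · left
      have hgcont : Continuous g := by
        apply continuous_finset_sum
        intro c _
        exact continuous_const.mul (Real.continuous_exp.comp (continuous_const.mul continuous_id))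
      have hzicc := hdzero g hgcont hgz
      funext x
      rw [hrep l x]
      have : g (u x) = 0 := hzicc (u x) (hub x)
      rw [hg] at this
      simp [this]
    · right
      push_neg at hgz
      obtain ⟨m, hm⟩ := hgz
      intro C
      set j : ℕ := ⌈C / |g (d m)|⌉₊ with hj
      set k : ℕ := Nat.pair m j with hk
      refine ⟨y k, hyA k, ?_⟩
      have huyk : u (y k) = d m := by
        rw [huy k, hv]
        simp [hk, Nat.unpair_pair]
      have habs : |(l.sum fun i a => a • F i) (y k)| = |f (y k)| * |g (d m)| := by
        rw [hrep l (y k), abs_mul, huyk]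
      rw [habs]
      have hgpos : 0 < |g (d m)| := abs_pos.2 hm
      have hfk : (k : ℝ) < |f (y k)| := hyf k
      have hjk : (j : ℝ) ≤ (k : ℝ) := by exact_mod_cast Nat.right_le_pair m j
      have hCj : C / |g (d m)| ≤ (j : ℝ) := Nat.le_ceil _
      have : C ≤ (j : ℝ) * |g (d m)| := by
        rw [div_le_iff₀ hgpos] at hCj
        linarith
      calc C ≤ (j : ℝ) * |g (d m)| := this
        _ ≤ (k : ℝ) * |g (d m)| := by
            exact mul_le_mul_of_nonneg_right hjk hgpos.le
        _ < |f (y k)| * |g (d m)| := by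
            exact mul_lt_mul_of_pos_right hfk hgpos
  -- linear independence
  have hli : LinearIndependent ℝ F := by
    rw [linearIndependent_iff]
    intro l hl
    rw [Finsupp.linearCombination_apply] at hl
    have hgz : ∀ m, (∑ c ∈ l.support, l c * Real.exp ((c : ℝ) * d m)) = 0 := by
      intro m
      have hx := hrep l (y (Nat.pair m 0))
      rw [hl] at hx
      have huyk : u (y (Nat.pair m 0)) = d m := by
        rw [huy _, hv]
        simp [Nat.unpair_pair]
      rw [huyk] at hx
      have hf0 : f (y (Nat.pair m 0)) ≠ 0 := by
        have := hyf (Nat.pair m 0)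
        intro h
        rw [h] at this
        simp at this
        exact absurd this (not_lt.2 (Nat.cast_nonneg _))
      have := hx.symm
      simp only [Pi.zero_apply] at this
      rcases mul_eq_zero.1 this with h | h
      · exact absurd h hf0
      · exact h
    have hicc : ∀ t ∈ Set.Icc (0:ℝ) 1,
        (∑ c ∈ l.support, l c * Real.exp ((c : ℝ) * t)) = 0 := by
      apply hdzero
      · apply continuous_finset_sum
        intro c _
        exact continuous_const.mul (Real.continuous_exp.comp (continuous_const.mul continuous_id))
      · exact hgz
    have := expsum_coeffs_zero l.support (fun c => l c) (fun c => (c : ℝ))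
      (Subtype.val_injective.injOn) hicc
    ext c
    by_cases hc : c ∈ l.support
    · exact this c hc
    · exact Finsupp.notMem_support_iff.1 hc
  refine ⟨W, ?_, ?_, ?_⟩
  · rw [hW, rank_span hli, Cardinal.mk_range_eq F hli.injective]
    exact Cardinal.mk_Icc_real zero_lt_one
  · have : F ⟨0, by norm_num⟩ = f := by
      funext x
      simp [hF]
    rw [hW, ← this]
    exact Submodule.subset_span (Set.mem_range_self _)
  · intro w hw
    obtain ⟨l, hl⟩ := (Finsupp.mem_span_range_iff_exists_finsupp).1 hw
    rcases hkey l with h | h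
    · right
      rw [← hl, h]
      rfl
    · left
      exact ⟨hX w hw, hl ▸ h⟩
end
end

section
/- Let N ≥ 1 and let A ⊆ ℝ^N be not relatively compact (equivalently, unbounded). Then for every f ∈ nBC∞I(A) there exists a linear subspace W of the space of functions ℝ^N → ℝ such that: (i) dim(W) = 𝔠; (ii) f ∈ W; (iii) W ⊆ nBC∞I(A) ∪ {0}; and (iv) whenever (H_l)_{l∈ℕ} is a sequence in W converging pointwise on ℝ^N to a function h with h ≠ 0, the function h is unbounded on A. (In particular W, being contained in X and closed under limits in any topology finer than pointwise convergence, witnesses the pointwise 𝔠-spaceability of nBC∞I(A) in the Fréchet space X.) -/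
open MeasureTheory Filter Topology

noncomputable section

namespace NBCIAux

open scoped Classical
open Cardinal

/-- chain index of a point index -/
def chain (i : ℕ) : ℕ := (Nat.unpair i).1

/-- a fixed bump function on `ℝ^N`, equal to 1 on the ball of radius 1/4,
supported in the ball of radius 3/8. -/
def θ (N : ℕ) : ContDiffBump (0 : RN N) := ⟨1/4, 3/8, by norm_num, by norm_num⟩

variable {N : ℕ} (b : ℕ → RN N)

/-- `x` is within 1/2 of a bumped center. -/
def P (x : RN N) : Prop := ∃ i, 1 ≤ chain i ∧ dist x (b i) < 1/2

/-- index of the bumped center near `x` (or 0). -/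
def idx (x : RN N) : ℕ := if h : P b x then h.choose else 0

/-- the global bump function. -/
def chi (x : RN N) : ℝ := if P b x then θ N (x - b (idx b x)) else 0

/-- chain index of the bumped center near `x` (or 0). -/
def kap (x : RN N) : ℕ := chain (idx b x)

/-- base point of chain `k`. -/
def beta (k : ℕ) : RN N := b (Nat.pair k 0)

variable (f : RN N → ℝ) (x₀ : RN N)

/-- The pointwise linear relation cutting out the subspace `W`. -/
def Rel (g : RN N → ℝ) : Prop := ∀ x : RN N,
  g x * (f x₀ * f (beta b (kap b x)))
    = f x * ((1 - chi b x) * (f (beta b (kap b x)) * g x₀)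
        + chi b x * (f x₀ * g (beta b (kap b x))))

/-- Hypotheses on the chosen points. -/
structure Good (A : Set (RN N)) (f : RN N → ℝ) (b : ℕ → RN N) (x₀ : RN N) : Prop where
  mem : ∀ i, b i ∈ A
  big : ∀ i : ℕ, (i : ℝ) + 1 ≤ |f (b i)|
  sep : ∀ i j, i ≠ j → 3 ≤ dist (b i) (b j)
  fx₀ : f x₀ ≠ 0
  farx₀ : ∀ i, 3 ≤ dist x₀ (b i)

variable {A : Set (RN N)} {b} {f} {x₀}

namespace Good

variable (hG : Good A f b x₀)
include hG

theorem fb_ne (i : ℕ) : f (b i) ≠ 0 := by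
  have h1 := hG.big i
  intro h
  rw [h, abs_zero] at h1
  have h2 : (0:ℝ) ≤ (i:ℝ) := Nat.cast_nonneg i
  linarith

theorem fbeta_ne (k : ℕ) : f (beta b k) ≠ 0 := hG.fb_ne _

theorem idx_eq {x : RN N} {i : ℕ} (h1 : 1 ≤ chain i) (h2 : dist x (b i) < 1/2) :
    P b x ∧ idx b x = i := by
  have hP : P b x := ⟨i, h1, h2⟩
  refine ⟨hP, ?_⟩
  rw [idx, dif_pos hP]
  obtain ⟨-, hc2⟩ := hP.choose_spec
  by_contra hne
  have h3 := hG.sep _ _ hne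
  have h4 := dist_triangle (b hP.choose) x (b i)
  rw [dist_comm (b hP.choose) x] at h4
  linarith

theorem chi_center {i : ℕ} (h1 : 1 ≤ chain i) :
    chi b (b i) = 1 ∧ kap b (b i) = chain i := by
  obtain ⟨hP, hidx⟩ := hG.idx_eq (x := b i) h1 (by rw [dist_self]; norm_num)
  constructor
  · rw [chi, if_pos hP, hidx]
    apply ContDiffBump.one_of_mem_closedBall
    norm_num [θ, Metric.mem_closedBall]
  · rw [kap, hidx]

omit hG in theorem notP {x : RN N} (hx : ∀ i, 1 ≤ chain i → ¬ dist x (b i) < 1/2) :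
    chi b x = 0 ∧ kap b x = 0 := by
  have hP : ¬ P b x := by
    rintro ⟨i, h1, h2⟩; exact hx i h1 h2
  constructor
  · rw [chi, if_neg hP]
  · rw [kap, idx, dif_neg hP]; rfl

theorem chi_x₀ : chi b x₀ = 0 ∧ kap b x₀ = 0 := by
  apply notP
  intro i _ h
  have := hG.farx₀ i
  linarith

theorem chi_d (j : ℕ) : chi b (b (Nat.pair 0 j)) = 0 ∧ kap b (b (Nat.pair 0 j)) = 0 := by
  apply notP
  intro i hi h
  have hne : i ≠ Nat.pair 0 j := by
    intro he
    rw [he] at hi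
    simp [chain, Nat.unpair_pair] at hi
  have := hG.sep i (Nat.pair 0 j) hne
  rw [dist_comm] at this
  linarith

omit hG in theorem kap_pos {x : RN N} (h : P b x) : 1 ≤ kap b x := by
  rw [kap, idx, dif_pos h]
  exact h.choose_spec.1


section RelLemmas

variable (hG : Good A f b x₀) {g : RN N → ℝ}
include hG

/-- At a point not close to a bumped center, the relation reads `g x * f x₀ = f x * g x₀`. -/
theorem rel_far (hR : Rel b f x₀ g) {x : RN N}
    (hx : ∀ i, 1 ≤ chain i → ¬ dist x (b i) < 1/2) :
    g x * f x₀ = f x * g x₀ := by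
  obtain ⟨hc, hk⟩ := notP (b := b) (x := x) hx
  have h := hR x
  rw [hc, hk] at h
  have hβ : f (beta b 0) ≠ 0 := hG.fbeta_ne 0
  have h' : (g x * f x₀) * f (beta b 0) = (f x * g x₀) * f (beta b 0) := by ring_nf; ring_nf at h; linarith
  exact mul_right_cancel₀ hβ h'

/-- At a bumped center of chain `k ≥ 1`, the relation reads
`g (b i) * f (β k) = f (b i) * g (β k)`. -/
theorem rel_chain (hR : Rel b f x₀ g) {i : ℕ} (h1 : 1 ≤ chain i) :
    g (b i) * f (beta b (chain i)) = f (b i) * g (beta b (chain i)) := by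
  obtain ⟨hc, hk⟩ := hG.chi_center h1
  have h := hR (b i)
  rw [hc, hk] at h
  have hx₀ : f x₀ ≠ 0 := hG.fx₀
  have h' : (g (b i) * f (beta b (chain i))) * f x₀
      = (f (b i) * g (beta b (chain i))) * f x₀ := by ring_nf; ring_nf at h; linarith
  exact mul_right_cancel₀ hx₀ h'

/-- Growth along a chain gives unboundedness on `A`. -/
theorem unb_of_seq {h : RN N → ℝ} (k₀ : ℕ) {u v : ℝ} (hu : u ≠ 0) (hv : v ≠ 0)
    (heq : ∀ j : ℕ, h (b (Nat.pair k₀ j)) * u = f (b (Nat.pair k₀ j)) * v) :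
    UnboundedOn A h := by
  intro C
  have hu0 : 0 < |u| := abs_pos.mpr hu
  have hv0 : 0 < |v| := abs_pos.mpr hv
  obtain ⟨j, hj⟩ := exists_nat_gt (max C 0 * |u| / |v|)
  refine ⟨b (Nat.pair k₀ j), hG.mem _, ?_⟩
  have h1 : |h (b (Nat.pair k₀ j))| * |u| = |f (b (Nat.pair k₀ j))| * |v| := by
    rw [← abs_mul, heq j, abs_mul]
  have h2 : (j : ℝ) ≤ |f (b (Nat.pair k₀ j))| := by
    have := hG.big (Nat.pair k₀ j)
    have h3 : (j : ℕ) ≤ Nat.pair k₀ j := Nat.right_le_pair k₀ j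
    have h4 : (j : ℝ) ≤ (Nat.pair k₀ j : ℝ) := by exact_mod_cast h3
    linarith
  have h5 : max C 0 * |u| < (j : ℝ) * |v| := by
    rw [div_lt_iff₀ hv0] at hj
    linarith
  have h6 : C * |u| < |h (b (Nat.pair k₀ j))| * |u| := by
    have := le_max_left C 0
    nlinarith
  exact lt_of_mul_lt_mul_right h6 (le_of_lt hu0)

/-- Any nonzero solution of the relation is unbounded on `A`. -/
theorem unbounded_of_rel {h : RN N → ℝ} (hR : Rel b f x₀ h) (hne : h ≠ 0) :
    UnboundedOn A h := by
  have hd : ∀ j : ℕ, h (b (Nat.pair 0 j)) * f x₀ = f (b (Nat.pair 0 j)) * h x₀ := by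
    intro j
    apply hG.rel_far hR
    intro i hi hdist
    have hne' : i ≠ Nat.pair 0 j := by
      intro he; rw [he] at hi; simp [chain, Nat.unpair_pair] at hi
    have := hG.sep i (Nat.pair 0 j) hne'
    rw [dist_comm] at this
    linarith
  by_cases hx0 : h x₀ ≠ 0
  · exact hG.unb_of_seq 0 hG.fx₀ hx0 hd
  push_neg at hx0
  -- h x₀ = 0; find a chain with nonzero base value
  obtain ⟨x, hx⟩ : ∃ x, h x ≠ 0 := by
    by_contra hno
    push_neg at hno
    exact hne (funext hno)
  have hrx := hR x
  have hLHS : h x * (f x₀ * f (beta b (kap b x))) ≠ 0 := by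
    apply mul_ne_zero hx
    exact mul_ne_zero hG.fx₀ (hG.fbeta_ne _)
  rw [hrx] at hLHS
  have hβ : h (beta b (kap b x)) ≠ 0 := by
    intro hz
    rw [hx0, hz] at hLHS
    simp at hLHS
  set m := kap b x with hm
  have hm1 : 1 ≤ m := by
    by_contra hm0
    push_neg at hm0
    interval_cases m
    · -- m = 0 : beta b 0 = b (pair 0 0), use hd at j = 0
      have := hd 0
      rw [hx0, mul_zero] at this
      have : h (b (Nat.pair 0 0)) = 0 := (mul_eq_zero.mp this).resolve_right hG.fx₀
      exact hβ (by simpa [beta] using this)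
  -- chain m: points b (pair m j)
  have hc : ∀ j : ℕ, h (b (Nat.pair m j)) * f (beta b m) = f (b (Nat.pair m j)) * h (beta b m) := by
    intro j
    have hch : chain (Nat.pair m j) = m := by simp [chain, Nat.unpair_pair]
    have := hG.rel_chain hR (i := Nat.pair m j) (by rw [hch]; exact hm1)
    rwa [hch] at this
  exact hG.unb_of_seq m (hG.fbeta_ne m) hβ hc

omit hG in
/-- The relation is stable under pointwise limits. -/
theorem rel_of_tendsto {H : ℕ → RN N → ℝ} {h : RN N → ℝ}
    (hH : ∀ l, Rel b f x₀ (H l))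
    (hlim : ∀ x : RN N, Tendsto (fun l => H l x) atTop (𝓝 (h x))) :
    Rel b f x₀ h := by
  intro x
  have t1 : Tendsto (fun l => H l x * (f x₀ * f (beta b (kap b x)))) atTop
      (𝓝 (h x * (f x₀ * f (beta b (kap b x))))) := (hlim x).mul_const _
  have t2 : Tendsto (fun l => f x * ((1 - chi b x) * (f (beta b (kap b x)) * H l x₀)
        + chi b x * (f x₀ * H l (beta b (kap b x))))) atTop
      (𝓝 (f x * ((1 - chi b x) * (f (beta b (kap b x)) * h x₀)
        + chi b x * (f x₀ * h (beta b (kap b x)))))) := by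
    apply Tendsto.const_mul
    exact (((hlim x₀).const_mul _).const_mul _).add
      (((hlim (beta b (kap b x))).const_mul _).const_mul _)
  have t1' : Tendsto (fun l => H l x * (f x₀ * f (beta b (kap b x)))) atTop
      (𝓝 (f x * ((1 - chi b x) * (f (beta b (kap b x)) * h x₀)
        + chi b x * (f x₀ * h (beta b (kap b x)))))) := by
    apply t2.congr
    intro l
    exact (hH l x).symm
  exact tendsto_nhds_unique t1 t1'

end RelLemmas

end Good

section WDef

variable (b f x₀) in
/-- The witnessing subspace. -/
def Wsub : Submodule ℝ (RN N → ℝ) where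
  carrier := {g | g ∈ SmoothIntegrable N ∧ Rel b f x₀ g}
  add_mem' := by
    rintro g1 g2 ⟨⟨hs1, hp1⟩, hr1⟩ ⟨⟨hs2, hp2⟩, hr2⟩
    refine ⟨⟨hs1.add hs2, fun p hp => (hp1 p hp).add (hp2 p hp)⟩, fun x => ?_⟩
    have e1 := hr1 x
    have e2 := hr2 x
    simp only [Pi.add_apply]
    linear_combination e1 + e2
  zero_mem' := by
    refine ⟨⟨contDiff_const, fun p hp => MemLp.zero⟩, fun x => ?_⟩
    simp
  smul_mem' := by
    rintro c g ⟨⟨hs, hp⟩, hr⟩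
    refine ⟨⟨hs.const_smul c, fun p hp' => (hp p hp').const_smul c⟩, fun x => ?_⟩
    have e := hr x
    simp only [Pi.smul_apply, smul_eq_mul]
    linear_combination c * e

theorem mem_Wsub {g : RN N → ℝ} :
    g ∈ Wsub b f x₀ ↔ g ∈ SmoothIntegrable N ∧ Rel b f x₀ g := Iff.rfl

variable (b f) in
/-- The witness functions. -/
def gi (t : ℝ) : RN N → ℝ := fun x => f x * (t ^ (kap b x - 1) * chi b x)

theorem chi_nonneg (x : RN N) : 0 ≤ chi b x := by
  rw [chi]
  split
  · exact (θ N).nonneg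
  · exact le_refl 0

theorem chi_le_one (x : RN N) : chi b x ≤ 1 := by
  rw [chi]
  split
  · exact (θ N).le_one
  · norm_num

variable (hG : Good A f b x₀)
include hG

theorem gi_smooth (hf : ContDiff ℝ (⊤ : ℕ∞) f) (t : ℝ) :
    ContDiff ℝ (⊤ : ℕ∞) (gi b f t) := by
  rw [contDiff_iff_contDiffAt]
  intro x
  by_cases hex : ∃ i, dist x (b i) < 1/2
  · obtain ⟨i, hi⟩ := hex
    by_cases hch : 1 ≤ chain i
    · have hsm : ContDiffAt ℝ (⊤ : ℕ∞) (fun y => f y * (t ^ (chain i - 1) * θ N (y - b i))) x :=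
        (hf.mul (contDiff_const.mul
          (((θ N).contDiff).comp (contDiff_id.sub contDiff_const)))).contDiffAt
      apply hsm.congr_of_eventuallyEq
      filter_upwards [Metric.isOpen_ball.mem_nhds (Metric.mem_ball.mpr hi)] with y hy
      rw [Metric.mem_ball] at hy
      obtain ⟨hP, hidx⟩ := hG.idx_eq hch hy
      rw [gi, kap, hidx, chi, if_pos hP, hidx]
    · have hP0 : ∀ y ∈ Metric.ball (b i) (1/2), gi b f t y = 0 := by
        intro y hy
        rw [Metric.mem_ball] at hy
        have hnP : ¬ P b y := by
          rintro ⟨i', h1, h2⟩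
          have hne : i' ≠ i := by intro he; rw [he] at h1; omega
          have h3 := hG.sep i' i hne
          have h4 := dist_triangle (b i') y (b i)
          rw [dist_comm (b i') y] at h4
          linarith
        rw [gi, chi, if_neg hnP, mul_zero, mul_zero]
      apply contDiffAt_const (c := (0:ℝ)) |>.congr_of_eventuallyEq
      filter_upwards [Metric.isOpen_ball.mem_nhds (Metric.mem_ball.mpr hi)] with y hy
      exact hP0 y hy
  · push_neg at hex
    have hP0 : ∀ y ∈ Metric.ball x (1/8), gi b f t y = 0 := by
      intro y hy
      rw [Metric.mem_ball] at hy
      have hchi : chi b y = 0 := by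
        by_cases hP : P b y
        · rw [chi, if_pos hP]
          have hidx : dist y (b (idx b y)) < 1/2 := by
            rw [idx, dif_pos hP]
            exact hP.choose_spec.2
          apply ContDiffBump.zero_of_le_dist
          have h1 := hex (idx b y)
          have h2 := dist_triangle x y (b (idx b y))
          have h5 : dist x y = dist y x := dist_comm x y
          rw [dist_zero_right, ← dist_eq_norm]
          show (3:ℝ)/8 ≤ dist y (b (idx b y))
          linarith
        · rw [chi, if_neg hP]
      rw [gi, hchi, mul_zero, mul_zero]
    apply contDiffAt_const (c := (0:ℝ)) |>.congr_of_eventuallyEq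
    filter_upwards [Metric.isOpen_ball.mem_nhds (Metric.mem_ball.mpr (by norm_num : dist x x < 1/8))] with y hy
    exact hP0 y hy

theorem gi_x₀ (t : ℝ) : gi b f t x₀ = 0 := by
  rw [gi, (hG.chi_x₀).1, mul_zero, mul_zero]

theorem gi_beta (t : ℝ) (k : ℕ) :
    gi b f t (beta b (k + 1)) = f (beta b (k + 1)) * t ^ k := by
  have hch : chain (Nat.pair (k+1) 0) = k + 1 := by simp [chain, Nat.unpair_pair]
  obtain ⟨hcb, hkb⟩ := hG.chi_center (i := Nat.pair (k+1) 0) (by omega)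
  rw [gi, beta, hcb, hkb, hch]
  norm_num

theorem gi_rel (t : ℝ) : Rel b f x₀ (gi b f t) := by
  intro x
  by_cases hP : P b x
  · have hk1 : 1 ≤ kap b x := Good.kap_pos hP
    obtain ⟨k, hk⟩ : ∃ k, kap b x = k + 1 := ⟨kap b x - 1, by omega⟩
    have h1 : gi b f t x = f x * (t ^ k * chi b x) := by rw [gi, hk]; norm_num
    rw [h1, gi_x₀ hG, hk, gi_beta hG]
    ring
  · have hchi : chi b x = 0 := by rw [chi, if_neg hP]
    have h1 : gi b f t x = 0 := by rw [gi, hchi, mul_zero, mul_zero]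
    rw [h1, hchi, gi_x₀ hG]
    ring

theorem gi_mem (hf : f ∈ SmoothIntegrable N) {t : ℝ} (ht : t ∈ Set.Ioo (0:ℝ) 1) :
    gi b f t ∈ Wsub b f x₀ := by
  refine ⟨⟨gi_smooth hG hf.1 t, fun p hp => ?_⟩, gi_rel hG t⟩
  apply MemLp.of_le (hf.2 p hp) (gi_smooth hG hf.1 t).continuous.aestronglyMeasurable
  apply Filter.Eventually.of_forall
  intro x
  rw [Real.norm_eq_abs, Real.norm_eq_abs, gi, abs_mul]
  have h1 : |t ^ (kap b x - 1) * chi b x| ≤ 1 := by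
    rw [abs_mul]
    have h2 : |t ^ (kap b x - 1)| ≤ 1 := by
      rw [abs_pow]
      apply pow_le_one₀ (abs_nonneg t)
      rw [abs_of_pos ht.1]
      exact le_of_lt ht.2
    have h3 : |chi b x| ≤ 1 := by
      rw [abs_of_nonneg (chi_nonneg x)]
      exact chi_le_one x
    nlinarith [abs_nonneg (t ^ (kap b x - 1)), abs_nonneg (chi b x)]
  nlinarith [abs_nonneg (f x)]

theorem f_mem (hf : f ∈ SmoothIntegrable N) : f ∈ Wsub b f x₀ :=
  ⟨hf, fun x => by ring⟩

end WDef


section Points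

variable {A : Set (RN N)} {f : RN N → ℝ}

theorem exists_far_big (hfc : Continuous f) (hfU : UnboundedOn A f) :
    ∀ R c : ℝ, ∃ y, y ∈ A ∧ c ≤ |f y| ∧ R + 3 ≤ ‖y‖ := by
  intro R c
  obtain ⟨C, hC⟩ := (isCompact_closedBall (0 : RN N) (R + 3)).exists_bound_of_continuousOn
    hfc.continuousOn
  obtain ⟨y, hyA, hy⟩ := hfU (max C c)
  refine ⟨y, hyA, le_of_lt (lt_of_le_of_lt (le_max_right C c) hy), ?_⟩
  by_contra hball
  push_neg at hball
  have h1 : y ∈ Metric.closedBall (0 : RN N) (R + 3) := by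
    rw [Metric.mem_closedBall, dist_zero_right]
    exact le_of_lt hball
  have h2 := hC y h1
  rw [Real.norm_eq_abs] at h2
  have h3 := le_max_left C c
  linarith

theorem exists_good (hfc : Continuous f) (hfU : UnboundedOn A f) {x₀ : RN N}
    (hx₀ : f x₀ ≠ 0) : ∃ b : ℕ → RN N, Good A f b x₀ := by
  have key := exists_far_big hfc hfU
  set b : ℕ → RN N := fun n =>
    Nat.rec ((key ‖x₀‖ 1).choose) (fun i prev => (key ‖prev‖ ((i : ℝ) + 2)).choose) n with hb
  have hb0 : b 0 ∈ A ∧ 1 ≤ |f (b 0)| ∧ ‖x₀‖ + 3 ≤ ‖b 0‖ := (key ‖x₀‖ 1).choose_spec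
  have hbs : ∀ i : ℕ, b (i+1) ∈ A ∧ ((i : ℝ) + 2) ≤ |f (b (i+1))| ∧ ‖b i‖ + 3 ≤ ‖b (i+1)‖ :=
    fun i => (key ‖b i‖ ((i : ℝ) + 2)).choose_spec
  have hmem : ∀ i, b i ∈ A := by
    intro i
    cases i with
    | zero => exact hb0.1
    | succ i => exact (hbs i).1
  have hbig : ∀ i : ℕ, (i : ℝ) + 1 ≤ |f (b i)| := by
    intro i
    cases i with
    | zero => simpa using hb0.2.1
    | succ i =>
      have := (hbs i).2.1
      push_cast
      push_cast at this
      linarith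
  have hmono : ∀ i j : ℕ, i < j → ‖b i‖ + 3 ≤ ‖b j‖ := by
    intro i j hij
    induction j with
    | zero => omega
    | succ j ih =>
      rcases Nat.lt_succ_iff_lt_or_eq.mp hij with h | h
      · have h1 := ih h
        have h2 := (hbs j).2.2
        linarith
      · rw [← h]
        exact (hbs i).2.2
  have hx₀far : ∀ i, ‖x₀‖ + 3 ≤ ‖b i‖ := by
    intro i
    cases i with
    | zero => exact hb0.2.2
    | succ i =>
      have h1 := hmono 0 (i+1) (Nat.succ_pos i)
      linarith [hb0.2.2]
  refine ⟨b, hmem, hbig, ?_, hx₀, ?_⟩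
  · intro i j hij
    rcases Nat.lt_or_ge i j with h | h
    · have h1 := hmono i j h
      have h2 : ‖b j‖ - ‖b i‖ ≤ ‖b j - b i‖ := by
        have := norm_sub_norm_le (b j) (b i)
        linarith
      rw [dist_eq_norm]
      rw [show ‖b i - b j‖ = ‖b j - b i‖ from norm_sub_rev _ _]
      linarith
    · have hji : j < i := lt_of_le_of_ne h (fun he => hij he.symm)
      have h1 := hmono j i hji
      have h2 : ‖b i‖ - ‖b j‖ ≤ ‖b i - b j‖ := by
        have := norm_sub_norm_le (b i) (b j)
        linarith
      rw [dist_eq_norm]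
      linarith
  · intro i
    have h1 := hx₀far i
    have h2 : ‖b i‖ - ‖x₀‖ ≤ ‖x₀ - b i‖ := by
      have := norm_sub_norm_le (b i) x₀
      rw [show ‖b i - x₀‖ = ‖x₀ - b i‖ from norm_sub_rev _ _] at this
      linarith
    rw [dist_eq_norm]
    linarith

end Points


section Rank

variable {A : Set (RN N)} {b : ℕ → RN N} {f : RN N → ℝ} {x₀ : RN N}

variable (b x₀) in
/-- Evaluation at `x₀` and the chain base points. -/
def Dmap : (RN N → ℝ) →ₗ[ℝ] (ℕ → ℝ) where
  toFun g := fun n => Nat.casesOn n (g x₀) (fun k => g (beta b k))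
  map_add' g1 g2 := by funext n; cases n <;> simp
  map_smul' c g := by funext n; cases n <;> simp

theorem wsub_rank_le (hG : Good A f b x₀) :
    Module.rank ℝ (Wsub b f x₀) ≤ Cardinal.continuum := by
  have hinj : Function.Injective ((Dmap b x₀).comp (Wsub b f x₀).subtype) := by
    rw [← LinearMap.ker_eq_bot, LinearMap.ker_eq_bot']
    intro g hg
    have h0 : g.val x₀ = 0 := congrFun hg 0
    have hk : ∀ k : ℕ, g.val (beta b k) = 0 := fun k => congrFun hg (k + 1)
    apply Subtype.ext
    funext x
    have hrel := g.2.2 x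
    rw [h0, hk] at hrel
    have hne : f x₀ * f (beta b (kap b x)) ≠ 0 := mul_ne_zero hG.fx₀ (hG.fbeta_ne _)
    have : g.val x * (f x₀ * f (beta b (kap b x))) = 0 := by rw [hrel]; ring
    exact (mul_eq_zero.mp this).resolve_right hne
  have h1 : Module.rank ℝ (Wsub b f x₀) ≤ Module.rank ℝ (ℕ → ℝ) :=
    LinearMap.rank_le_of_injective _ hinj
  have h2 : Module.rank ℝ (ℕ → ℝ) ≤ #(ℕ → ℝ) := rank_le_card ℝ (ℕ → ℝ)
  have h3 : #(ℕ → ℝ) = Cardinal.continuum := by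
    rw [← Cardinal.power_def, Cardinal.mk_real, Cardinal.mk_nat,
      Cardinal.continuum_power_aleph0]
  rw [h3] at h2
  exact le_trans h1 h2

variable (b f) in
/-- Normalized evaluation along base points of bumped chains. -/
def Emap : (RN N → ℝ) →ₗ[ℝ] (ℕ → ℝ) where
  toFun g := fun k => (f (beta b (k + 1)))⁻¹ * g (beta b (k + 1))
  map_add' g1 g2 := by funext k; simp [Pi.add_apply]; ring
  map_smul' c g := by funext k; simp [Pi.smul_apply, smul_eq_mul]; ring

/-- Reindexing along `Multiplicative.ofAdd`. -/
def Tmap : (Multiplicative ℕ → ℝ) →ₗ[ℝ] (ℕ → ℝ) where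
  toFun g := fun k => g (Multiplicative.ofAdd k)
  map_add' _ _ := rfl
  map_smul' _ _ := rfl

theorem pow_li :
    LinearIndependent ℝ (fun (t : Set.Ioo (0:ℝ) 1) => (fun k : ℕ => (t : ℝ) ^ k)) := by
  have hchar := linearIndependent_monoidHom (Multiplicative ℕ) ℝ
  have hinj : Function.Injective (fun t : Set.Ioo (0:ℝ) 1 => powersHom ℝ (t : ℝ)) :=
    fun a c hac => Subtype.ext ((powersHom ℝ).injective hac)
  have h1 := hchar.comp _ hinj
  have hker : LinearMap.ker (Tmap) = ⊥ := by
    rw [LinearMap.ker_eq_bot]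
    intro g1 g2 hg
    funext n
    exact congrFun hg n.toAdd
  have h2 := h1.map' (Tmap) hker
  have heq : (⇑(Tmap)) ∘ ((fun g : Multiplicative ℕ →* ℝ => (g : Multiplicative ℕ → ℝ)) ∘
      (fun t : Set.Ioo (0:ℝ) 1 => powersHom ℝ (t : ℝ)))
      = fun (t : Set.Ioo (0:ℝ) 1) => (fun k : ℕ => (t : ℝ) ^ k) := by
    funext t k
    simp [Tmap, powersHom_apply]
  rwa [heq] at h2

theorem wsub_rank_ge (hG : Good A f b x₀) (hf : f ∈ SmoothIntegrable N) :
    Cardinal.continuum ≤ Module.rank ℝ (Wsub b f x₀) := by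
  have hli : LinearIndependent ℝ
      (fun t : Set.Ioo (0:ℝ) 1 => (⟨gi b f t, gi_mem hG hf t.2⟩ : Wsub b f x₀)) := by
    apply LinearIndependent.of_comp ((Emap b f).comp (Wsub b f x₀).subtype)
    have heq : (⇑((Emap b f).comp (Wsub b f x₀).subtype)) ∘
        (fun t : Set.Ioo (0:ℝ) 1 => (⟨gi b f t, gi_mem hG hf t.2⟩ : Wsub b f x₀))
        = fun (t : Set.Ioo (0:ℝ) 1) => (fun k : ℕ => (t : ℝ) ^ k) := by
      funext t k
      simp only [Function.comp_apply, LinearMap.comp_apply, Submodule.subtype_apply, Emap,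
        LinearMap.coe_mk, AddHom.coe_mk]
      rw [gi_beta hG, ← mul_assoc, inv_mul_cancel₀ (hG.fbeta_ne _), one_mul]
    rw [heq]
    exact pow_li
  have h1 := hli.cardinal_le_rank
  rwa [Cardinal.mk_Ioo_real (by norm_num : (0:ℝ) < 1)] at h1

end Rank

end NBCIAux

/-- `nBC∞I(A)` is pointwise `𝔠`-spaceable: the witnessing subspace is
moreover closed under nonzero pointwise limits within `nBC∞I(A)`. -/
theorem nBCI_pointwise_continuum_spaceable (N : ℕ) (hN : 1 ≤ N)
    (A : Set (RN N)) (hA : ¬ Bornology.IsBounded A) :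
    ∀ f ∈ nBCI A, ∃ W : Submodule ℝ (RN N → ℝ),
      Module.rank ℝ W = Cardinal.continuum ∧ f ∈ W ∧
      (W : Set (RN N → ℝ)) ⊆ nBCI A ∪ {0} ∧
      ∀ H : ℕ → (RN N → ℝ), (∀ l : ℕ, H l ∈ W) →
        ∀ h : RN N → ℝ, (∀ x : RN N, Tendsto (fun l => H l x) atTop (𝓝 (h x))) →
          h ≠ 0 → UnboundedOn A h := by
  intro f hf
  obtain ⟨hfX, hfU⟩ := hf
  obtain ⟨x₀, hx₀A, hx₀pos⟩ := hfU 0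
  have hx₀ : f x₀ ≠ 0 := by
    intro h
    rw [h, abs_zero] at hx₀pos
    linarith
  obtain ⟨b, hG⟩ := NBCIAux.exists_good hfX.1.continuous hfU hx₀
  refine ⟨NBCIAux.Wsub b f x₀, ?_, NBCIAux.f_mem hG hfX, ?_, ?_⟩
  · exact le_antisymm (NBCIAux.wsub_rank_le hG) (NBCIAux.wsub_rank_ge hG hfX)
  · intro g hg
    obtain ⟨hgX, hgR⟩ := NBCIAux.mem_Wsub.mp hg
    by_cases hg0 : g = 0
    · right
      rw [hg0]
      exact Set.mem_singleton _
    · left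
      exact ⟨hgX, hG.unbounded_of_rel hgR hg0⟩
  · intro H hH h hlim hne
    exact hG.unbounded_of_rel
      (NBCIAux.Good.rel_of_tendsto (fun l => (NBCIAux.mem_Wsub.mp (hH l)).2) hlim) hne

end
end

section
/- Let N ≥ 1 and let A ⊆ ℝ^N be not relatively compact (equivalently, unbounded). Then nBC∞I(A) is infinitely pointwise 𝔠-lineable: for every f ∈ nBC∞I(A) there exists a countable family (W_k)_{k∈ℕ} of linear subspaces of the space of functions ℝ^N → ℝ such that for every k ∈ ℕ: dim(W_k) = 𝔠, f ∈ W_k ⊆ nBC∞I(A) ∪ {0}, and W_k ∩ W_l = span{f} for every l ∈ ℕ with l ≠ k. -/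
open MeasureTheory Filter Topology Metric
open scoped ENNReal NNReal

noncomputable section

namespace AuxNBCI
variable {N : ℕ}

lemma exists_far {A : Set (RN N)} (hA : ¬ Bornology.IsBounded A) (R : ℝ) :
    ∃ x ∈ A, R < ‖x‖ := by
  by_contra h
  push_neg at h
  exact hA (isBounded_iff_forall_norm_le.mpr ⟨R, fun x hx => h x hx⟩)

variable (A : Set (RN N)) (hA : ¬ Bornology.IsBounded A) (R0 : ℝ)

/-- centers sequence -/
def ctr : ℕ → RN N
  | 0 => (exists_far hA R0).choose
  | n+1 => (exists_far hA (‖ctr n‖ + 2)).choose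

lemma ctr_mem : ∀ n, ctr A hA R0 n ∈ A
  | 0 => (exists_far hA R0).choose_spec.1
  | n+1 => (exists_far hA (‖ctr A hA R0 n‖ + 2)).choose_spec.1

lemma ctr_zero_norm : R0 < ‖ctr A hA R0 0‖ := (exists_far hA R0).choose_spec.2

lemma ctr_succ_norm (n : ℕ) : ‖ctr A hA R0 n‖ + 2 < ‖ctr A hA R0 (n+1)‖ :=
  (exists_far hA (‖ctr A hA R0 n‖ + 2)).choose_spec.2

lemma ctr_norm_gt (n : ℕ) : R0 < ‖ctr A hA R0 n‖ := by
  induction n with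
  | zero => exact ctr_zero_norm A hA R0
  | succ n ih => nlinarith [ctr_succ_norm A hA R0 n, norm_nonneg (ctr A hA R0 n)]

lemma ctr_norm_lt {m n : ℕ} (h : m < n) : ‖ctr A hA R0 m‖ + 2 < ‖ctr A hA R0 n‖ := by
  induction n with
  | zero => omega
  | succ n ih =>
    rcases Nat.lt_succ_iff_lt_or_eq.mp h with h' | h'
    · have := ctr_succ_norm A hA R0 n
      have := ih h'
      nlinarith
    · subst h'; exact ctr_succ_norm A hA R0 m

lemma ctr_dist {m n : ℕ} (h : m ≠ n) : 2 ≤ dist (ctr A hA R0 m) (ctr A hA R0 n) := by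
  wlog hmn : m < n generalizing m n
  · rw [dist_comm]; exact this h.symm (by omega)
  have h1 := ctr_norm_lt A hA R0 hmn
  have h2 := abs_norm_sub_norm_le (ctr A hA R0 n) (ctr A hA R0 m)
  rw [dist_comm, dist_eq_norm]
  have := abs_le.mp h2
  linarith [this.2, le_abs_self (‖ctr A hA R0 n‖ - ‖ctr A hA R0 m‖)]

lemma ctr_injective : Function.Injective (ctr A hA R0) := by
  intro m n h
  by_contra hne
  have := ctr_dist A hA R0 hne
  rw [h, dist_self] at this; linarith


variable (f : RN N → ℝ) (c : ℕ → RN N)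

/-- center of bump `n` in family `k` -/
def C (k n : ℕ) : RN N := c (Nat.pair k n)

def Bh (k n : ℕ) : ℝ := (n+1) * (1 + |f (C c k n)|)

lemma one_le_Bh (k n : ℕ) : 1 ≤ Bh f c k n := by
  have h1 : (1:ℝ) ≤ n+1 := by exact_mod_cast Nat.le_add_left 1 n
  have h2 : (1:ℝ) ≤ 1 + |f (C c k n)| := by
    have := abs_nonneg (f (C c k n)); linarith
  calc (1:ℝ) = 1*1 := by ring
  _ ≤ _ := mul_le_mul h1 h2 one_pos.le (by positivity)

def Hh (k n : ℕ) : ℝ := Bh f c k n * 2^n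

lemma one_le_Hh (k n : ℕ) : 1 ≤ Hh f c k n := by
  have := one_le_Bh f c k n
  have h2 : (1:ℝ) ≤ 2^n := one_le_pow₀ one_le_two
  calc (1:ℝ) = 1*1 := by ring
  _ ≤ _ := mul_le_mul this h2 one_pos.le (by linarith)

def rr (k n : ℕ) : ℝ := min (1/2) ((1/2)^n * ((Hh f c k n)⁻¹)^n)

lemma rr_pos (k n : ℕ) : 0 < rr f c k n := by
  have h1 := one_le_Hh f c k n
  have h2 : (0:ℝ) < Hh f c k n := by linarith
  have h3 : (0:ℝ) < (Hh f c k n)⁻¹ := by positivity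
  unfold rr; positivity

lemma rr_le_half (k n : ℕ) : rr f c k n ≤ 1/2 := min_le_left _ _

def bump (k n : ℕ) : ContDiffBump (C c k n) :=
  ⟨rr f c k n / 2, rr f c k n, by have := rr_pos f c k n; linarith,
    by have := rr_pos f c k n; linarith⟩

/-- one bump term -/
def term (k : ℕ) (t : ℝ) (n : ℕ) : RN N → ℝ := fun x => (Bh f c k n * t^n) * bump f c k n x

def gg (k : ℕ) (t : ℝ) : RN N → ℝ := fun x => ∑' n, term f c k t n x

lemma term_eq_zero {k n : ℕ} {t : ℝ} {x : RN N} (h : ¬ x ∈ ball (C c k n) (rr f c k n)) :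
    term f c k t n x = 0 := by
  have : bump f c k n x = 0 := by
    have := (bump f c k n).support_eq
    by_contra h0
    exact h (show dist x (C c k n) < (bump f c k n).rOut by simpa [this] using Function.mem_support.2 h0)
  simp [term, this]

variable (hc : ∀ ⦃m n : ℕ⦄, m ≠ n → 2 ≤ dist (c m) (c n))
include hc

lemma C_dist {k n l m : ℕ} (h : (k, n) ≠ (l, m)) : 2 ≤ dist (C c k n) (C c l m) := by
  apply hc
  intro he
  exact h (by
    have := Nat.pair_eq_pair.mp he
    simp [Prod.ext_iff, this.1, this.2])

/-- off-diagonal terms vanish on the unit ball around a center -/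
lemma term_eq_zero_of_near {k n l m : ℕ} {t : ℝ} {x : RN N}
    (hx : dist x (C c k n) < 1) (h : (l, m) ≠ (k, n)) : term f c l t m x = 0 := by
  apply term_eq_zero
  intro hb
  rw [mem_ball] at hb
  have h2 := C_dist c hc h
  have hle := rr_le_half f c l m
  have := dist_triangle (C c l m) x (C c k n)
  rw [dist_comm (C c l m) x] at this
  linarith

lemma gg_eq_near {k n : ℕ} {t : ℝ} {x : RN N} (hx : dist x (C c k n) < 1) :
    gg f c k t x = term f c k t n x := by
  apply tsum_eq_single
  intro m hm
  exact term_eq_zero_of_near f c hc hx (by simp [hm])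

lemma gg_center (k n : ℕ) (t : ℝ) : gg f c k t (C c k n) = Bh f c k n * t^n := by
  rw [gg_eq_near f c hc (n := n) (by simp [dist_self])]
  have : bump f c k n (C c k n) = 1 :=
    (bump f c k n).one_of_mem_closedBall (by
      simp only [mem_closedBall, dist_self]
      have := rr_pos f c k n
      show (0:ℝ) ≤ rr f c k n / 2
      linarith)
  simp [term, this]

omit hc in
lemma gg_eq_zero {k : ℕ} {t : ℝ} {x : RN N}
    (h : ∀ n, ¬ x ∈ ball (C c k n) (rr f c k n)) : gg f c k t x = 0 := by
  have : ∀ n, term f c k t n x = 0 := fun n => term_eq_zero f c (h n)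
  simp [gg, this]

lemma gg_smooth (k : ℕ) (t : ℝ) : ContDiff ℝ (⊤ : ℕ∞) (gg f c k t) := by
  rw [contDiff_iff_contDiffAt]
  intro x
  by_cases h : ∃ n, dist x (C c k n) < 1
  · obtain ⟨n, hn⟩ := h
    have hev : gg f c k t =ᶠ[𝓝 x] term f c k t n := by
      filter_upwards [Metric.ball_mem_nhds x (show (0:ℝ) < 1 - dist x (C c k n) by linarith)]
        with y hy
      apply gg_eq_near f c hc
      rw [mem_ball] at hy
      have := dist_triangle y x (C c k n)
      linarith
    refine ContDiffAt.congr_of_eventuallyEq ?_ hev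
    exact (((bump f c k n).contDiff).const_smul (Bh f c k n * t^n)).contDiffAt
  · push_neg at h
    have hev : gg f c k t =ᶠ[𝓝 x] (fun _ => (0:ℝ)) := by
      filter_upwards [Metric.ball_mem_nhds x (show (0:ℝ) < 1/2 by norm_num)] with y hy
      apply gg_eq_zero
      intro n hn
      rw [mem_ball] at hy hn
      have h1 := h n
      have h2 := rr_le_half f c k n
      have := dist_triangle x y (C c k n)
      rw [dist_comm x y] at this
      linarith
    exact contDiffAt_const.congr_of_eventuallyEq hev

omit hc in
lemma term_bound {p : ℝ} (hN : 1 ≤ N) {k n : ℕ} (hn : p ≤ n) :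
    Hh f c k n ^ p * rr f c k n ^ N ≤ (1/2)^n := by
  set H := Hh f c k n with hH
  set r := rr f c k n with hr
  have hH1 : 1 ≤ H := one_le_Hh f c k n
  have hH0 : (0:ℝ) < H := by linarith
  have hr0 : 0 < r := rr_pos f c k n
  have hr1 : r ≤ 1 := le_trans (rr_le_half f c k n) (by norm_num)
  have h1 : r ^ N ≤ r := by
    calc r ^ N ≤ r ^ 1 := pow_le_pow_of_le_one hr0.le hr1 hN
    _ = r := pow_one r
  have h2 : r ≤ (1/2)^n * ((H)⁻¹)^n := min_le_right _ _
  have hHp : (0:ℝ) ≤ H ^ p := (Real.rpow_pos_of_pos hH0 p).le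
  have h3 : H ^ p * r ^ N ≤ H ^ p * ((1/2)^n * (H⁻¹)^n) := by
    apply mul_le_mul_of_nonneg_left (le_trans h1 h2) hHp
  have h4 : H ^ p * ((1/2:ℝ)^n * (H⁻¹)^n) = (1/2)^n * (H ^ (p - n)) := by
    rw [inv_pow, ← Real.rpow_natCast H n, Real.rpow_sub hH0]
    field_simp
  have h5 : H ^ (p - (n:ℝ)) ≤ 1 :=
    Real.rpow_le_one_of_one_le_of_nonpos hH1 (by linarith)
  calc H ^ p * r ^ N ≤ (1/2)^n * (H ^ (p - n)) := by rw [← h4]; exact h3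
  _ ≤ (1/2)^n * 1 := by
      apply mul_le_mul_of_nonneg_left h5 (by positivity)
  _ = (1/2)^n := mul_one _

omit hc in
lemma summable_aux (hN : 1 ≤ N) {p : ℝ} (hp : 0 ≤ p) (k : ℕ) :
    Summable (fun n => Hh f c k n ^ p * rr f c k n ^ N) := by
  set m := ⌈p⌉₊ with hm
  apply (summable_nat_add_iff m).mp
  have hgeo : Summable (fun n : ℕ => ((1:ℝ)/2)^(n + m)) :=
    (summable_nat_add_iff m).mpr (summable_geometric_of_lt_one (by norm_num) (by norm_num))
  apply Summable.of_nonneg_of_le ?_ ?_ hgeo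
  · intro n
    have := rr_pos f c k (n + m)
    have := one_le_Hh f c k (n + m)
    have : (0:ℝ) < Hh f c k (n+m) ^ p := Real.rpow_pos_of_pos (by linarith) p
    positivity
  · intro n
    apply term_bound f c hN
    calc p ≤ (⌈p⌉₊ : ℝ) := Nat.le_ceil p
    _ ≤ ((n + m : ℕ) : ℝ) := by exact_mod_cast Nat.le_add_left m n

omit hc in
lemma nontrivialRN (hN : 1 ≤ N) : Nontrivial (RN N) := by
  haveI : Nonempty (Fin N) := ⟨⟨0, hN⟩⟩
  infer_instance

lemma gg_memLp (hN : 1 ≤ N) (k : ℕ) {t : ℝ} (ht : |t| ≤ 2) {p : ℝ} (hp : 1 ≤ p) :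
    MemLp (gg f c k t) (ENNReal.ofReal p) volume := by
  haveI : Nontrivial (RN N) := nontrivialRN hN
  have hp0 : 0 < p := by linarith
  constructor
  · exact ((gg_smooth f c hc k t).continuous).aestronglyMeasurable
  have hpne : ENNReal.ofReal p ≠ 0 := by
    simp only [ne_eq, ENNReal.ofReal_eq_zero, not_le]; linarith
  rw [eLpNorm_lt_top_iff_lintegral_rpow_enorm_lt_top hpne ENNReal.ofReal_ne_top,
    ENNReal.toReal_ofReal hp0.le]
  have hpt : ∀ x : RN N, (‖gg f c k t x‖₊ : ℝ≥0∞) ^ p ≤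
      ∑' n, Set.indicator (ball (C c k n) (rr f c k n))
        (fun _ => ENNReal.ofReal (Hh f c k n ^ p)) x := by
    intro x
    by_cases hx : ∃ n, x ∈ ball (C c k n) (rr f c k n)
    · obtain ⟨n, hn⟩ := hx
      have hd : dist x (C c k n) < 1 := by
        rw [mem_ball] at hn
        have := rr_le_half f c k n
        linarith
      have h1 : gg f c k t x = term f c k t n x := gg_eq_near f c hc hd
      have h2 : |gg f c k t x| ≤ Hh f c k n := by
        rw [h1]
        have hb0 := (bump f c k n).nonneg' x
        have hb1 := (bump f c k n).le_one (x := x)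
        have hB := one_le_Bh f c k n
        have htn : |t^n| ≤ 2^n := by
          rw [abs_pow]
          exact pow_le_pow_left₀ (abs_nonneg t) ht n
        calc |term f c k t n x| = Bh f c k n * |t^n| * bump f c k n x := by
              rw [term, abs_mul, abs_mul, abs_of_nonneg hb0,
                abs_of_nonneg (by linarith : (0:ℝ) ≤ Bh f c k n)]
        _ ≤ Bh f c k n * 2^n * 1 := by
              apply mul_le_mul (mul_le_mul_of_nonneg_left htn (by linarith)) hb1 hb0
              positivity
        _ = Hh f c k n := by rw [Hh, mul_one]
      have h3 : (‖gg f c k t x‖₊ : ℝ≥0∞) ≤ ENNReal.ofReal (Hh f c k n) := by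
        rw [← enorm_eq_nnnorm, ← ofReal_norm]
        exact ENNReal.ofReal_le_ofReal (by rwa [Real.norm_eq_abs])
      calc (‖gg f c k t x‖₊ : ℝ≥0∞) ^ p ≤ ENNReal.ofReal (Hh f c k n) ^ p :=
            ENNReal.rpow_le_rpow h3 hp0.le
      _ = ENNReal.ofReal (Hh f c k n ^ p) := by
            rw [← ENNReal.ofReal_rpow_of_pos (by linarith [one_le_Hh f c k n])]
      _ = Set.indicator (ball (C c k n) (rr f c k n))
            (fun _ => ENNReal.ofReal (Hh f c k n ^ p)) x := by
            rw [Set.indicator_of_mem hn]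
      _ ≤ _ := ENNReal.le_tsum n
    · push_neg at hx
      have h0 : gg f c k t x = 0 := gg_eq_zero f c (fun n => hx n)
      simp [h0, ENNReal.zero_rpow_of_pos hp0]
  calc ∫⁻ x, (‖gg f c k t x‖₊ : ℝ≥0∞) ^ p ∂volume
      ≤ ∫⁻ x, ∑' n, Set.indicator (ball (C c k n) (rr f c k n))
          (fun _ => ENNReal.ofReal (Hh f c k n ^ p)) x ∂volume := lintegral_mono hpt
  _ = ∑' n, ∫⁻ x, Set.indicator (ball (C c k n) (rr f c k n))
          (fun _ => ENNReal.ofReal (Hh f c k n ^ p)) x ∂volume :=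
        lintegral_tsum (fun n => (measurable_const.indicator measurableSet_ball).aemeasurable)
  _ = ∑' n, ENNReal.ofReal (Hh f c k n ^ p) * volume (ball (C c k n) (rr f c k n)) := by
        congr 1; funext n
        exact lintegral_indicator_const measurableSet_ball _
  _ = ∑' n, ENNReal.ofReal (Hh f c k n ^ p * rr f c k n ^ N) * volume (ball (0 : RN N) 1) := by
        congr 1; funext n
        rw [Measure.addHaar_ball volume _ (rr_pos f c k n).le, finrank_euclideanSpace_fin,
          ENNReal.ofReal_mul (Real.rpow_pos_of_pos (by linarith [one_le_Hh f c k n]) p).le,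
          mul_assoc]
  _ = ENNReal.ofReal (∑' n, Hh f c k n ^ p * rr f c k n ^ N) * volume (ball (0 : RN N) 1) := by
        rw [ENNReal.tsum_mul_right,
          ENNReal.ofReal_tsum_of_nonneg
            (fun n => by
              have := rr_pos f c k n
              have : (0:ℝ) < Hh f c k n ^ p :=
                Real.rpow_pos_of_pos (by linarith [one_le_Hh f c k n]) p
              positivity)
            (summable_aux f c hN hp0.le k)]
  _ < ⊤ := ENNReal.mul_lt_top ENNReal.ofReal_lt_top measure_ball_lt_top

omit hc in
lemma span_vanish {k : ℕ} {y : RN N} (hy : ∀ n, ¬ y ∈ ball (C c k n) (rr f c k n))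
    {s : Set (RN N → ℝ)} (hs : ∀ h ∈ s, ∃ t : ℝ, h = gg f c k t)
    {h : RN N → ℝ} (hh : h ∈ Submodule.span ℝ s) : h y = 0 := by
  induction hh using Submodule.span_induction with
  | mem x hx => obtain ⟨t, rfl⟩ := hs x hx; exact gg_eq_zero f c hy
  | zero => rfl
  | add x z hx hz ihx ihz => show x y + z y = 0; rw [ihx, ihz]; ring
  | smul a x hx ih => show a • x y = 0; rw [ih]; simp

lemma gg_linearIndependent (k : ℕ) :
    LinearIndependent ℝ (fun t : ↥(Set.Ioo (1:ℝ) 2) => gg f c k (t:ℝ)) := by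
  set E : (RN N → ℝ) →ₗ[ℝ] (Multiplicative ℕ → ℝ) :=
    { toFun := fun h n => (Bh f c k n.toAdd)⁻¹ * h (C c k n.toAdd)
      map_add' := by intros x y; funext n; simp only [Pi.add_apply]; ring
      map_smul' := by intros a x; funext n; simp only [Pi.smul_apply, smul_eq_mul,
        RingHom.id_apply]; ring } with hE
  apply LinearIndependent.of_comp E
  have hEg : (⇑E ∘ fun t : ↥(Set.Ioo (1:ℝ) 2) => gg f c k (t:ℝ))
      = (fun φ : Multiplicative ℕ →* ℝ => (φ : Multiplicative ℕ → ℝ)) ∘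
        (fun t : ↥(Set.Ioo (1:ℝ) 2) => powersHom ℝ (t:ℝ)) := by
    funext t; funext n
    have hB := one_le_Bh f c k n.toAdd
    have hB0 : Bh f c k n.toAdd ≠ 0 := by linarith
    simp only [hE, Function.comp_apply, LinearMap.coe_mk, AddHom.coe_mk,
      gg_center f c hc, powersHom_apply]
    field_simp
  rw [hEg]
  exact (linearIndependent_monoidHom (Multiplicative ℕ) ℝ).comp _
    (fun t1 t2 h12 => Subtype.ext ((powersHom ℝ).injective h12))


end AuxNBCI

open AuxNBCI in
/-- `nBC∞I(A)` is infinitely pointwise `𝔠`-lineable. -/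
theorem nBCI_infinitely_pointwise_continuum_lineable (N : ℕ) (hN : 1 ≤ N)
    (A : Set (RN N)) (hA : ¬ Bornology.IsBounded A) :
    ∀ f ∈ nBCI A, ∃ W : ℕ → Submodule ℝ (RN N → ℝ), ∀ k : ℕ,
      Module.rank ℝ (W k) = Cardinal.continuum ∧
      f ∈ W k ∧ (W k : Set (RN N → ℝ)) ⊆ nBCI A ∪ {0} ∧
      ∀ l : ℕ, l ≠ k → W k ⊓ W l = Submodule.span ℝ {f} := by
  intro f hf
  obtain ⟨⟨hsm, hLp⟩, hub⟩ := hf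
  obtain ⟨y0, hy0A, hy0⟩ := hub 0
  have hfy0 : f y0 ≠ 0 := fun h => by simp [h] at hy0
  set c : ℕ → RN N := ctr A hA (‖y0‖ + 1) with hcdef
  have hc : ∀ ⦃m n : ℕ⦄, m ≠ n → 2 ≤ dist (c m) (c n) := fun m n h => ctr_dist A hA _ h
  have hcA : ∀ m, c m ∈ A := ctr_mem A hA _
  have hcnorm : ∀ m, ‖y0‖ + 1 < ‖c m‖ := ctr_norm_gt A hA _
  -- y0 is far from every center
  have hy0far : ∀ k n : ℕ, ¬ y0 ∈ ball (C c k n) (rr f c k n) := by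
    intro k n hmem
    rw [mem_ball] at hmem
    have h1 : rr f c k n ≤ 1/2 := rr_le_half f c k n
    have h2 : ‖y0‖ + 1 < ‖C c k n‖ := hcnorm _
    have h3 : |‖y0‖ - ‖C c k n‖| ≤ dist y0 (C c k n) := abs_norm_sub_norm_le _ _
    rw [abs_sub_comm] at h3
    have h4 := le_abs_self (‖C c k n‖ - ‖y0‖)
    linarith
  -- disjointness of ball families
  have hdisj : ∀ {k l : ℕ}, k ≠ l → ∀ (x : RN N) (n : ℕ),
      x ∈ ball (C c k n) (rr f c k n) → ∀ m, ¬ x ∈ ball (C c l m) (rr f c l m) := by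
    intro k l hkl x n hx m hxm
    rw [mem_ball] at hx hxm
    have h2 := C_dist c hc (k := k) (n := n) (l := l) (m := m) (by simp [hkl])
    have h3 := rr_le_half f c k n
    have h4 := rr_le_half f c l m
    have := dist_triangle (C c k n) x (C c l m)
    rw [dist_comm (C c k n) x] at this
    linarith
  set T : Set ℝ := Set.Ioo (1:ℝ) 2 with hT
  set g : ℕ → ↥T → (RN N → ℝ) := fun k t => gg f c k (t:ℝ) with hg
  refine ⟨fun k => Submodule.span ℝ (insert f (Set.range (g k))), fun k => ⟨?_, ?_, ?_, ?_⟩⟩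
  · -- rank
    have hTcard : (Cardinal.mk ↥T) = Cardinal.continuum := Cardinal.mk_Ioo_real (by norm_num)
    apply le_antisymm
    · calc Module.rank ℝ ↥(Submodule.span ℝ (insert f (Set.range (g k))))
          ≤ Cardinal.mk ↥(insert f (Set.range (g k)) : Set (RN N → ℝ)) := rank_span_le _
      _ ≤ Cardinal.mk ↥(Set.range (g k)) + 1 := Cardinal.mk_insert_le
      _ ≤ Cardinal.mk ↥T + 1 := by
          exact add_le_add Cardinal.mk_range_le le_rfl
      _ = Cardinal.continuum + 1 := by rw [hTcard]
      _ = Cardinal.continuum := Cardinal.add_one_eq Cardinal.aleph0_le_continuum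
    · have hli : LinearIndependent ℝ (fun t : ↥T => g k t) := gg_linearIndependent f c hc k
      have hli2 : LinearIndependent ℝ (fun t : ↥T =>
          (⟨g k t, Submodule.subset_span (Set.mem_insert_of_mem _ (Set.mem_range_self t))⟩ :
            ↥(Submodule.span ℝ (insert f (Set.range (g k)))))) := by
        apply LinearIndependent.of_comp (Submodule.span ℝ (insert f (Set.range (g k)))).subtype
        exact hli
      rw [← hTcard]
      exact hli2.cardinal_le_rank

  · exact Submodule.subset_span (Set.mem_insert _ _)
  · -- subset
    intro w hw
    simp only [SetLike.mem_coe] at hw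
    rw [Submodule.mem_span_insert] at hw
    obtain ⟨a, z, hz, rfl⟩ := hw
    rw [Finsupp.mem_span_range_iff_exists_finsupp] at hz
    obtain ⟨cf, hcf⟩ := hz
    by_cases hw0 : a • f + z = 0
    · right; exact hw0
    left
    have habs : ∀ t : ↥T, |(t:ℝ)| ≤ 2 := by
      rintro ⟨t, ht1, ht2⟩
      rw [abs_of_nonneg (by linarith)]
      exact le_of_lt ht2
    -- value at centers
    have hzval : ∀ n : ℕ, z (C c k n) =
        Bh f c k n * ∑ t ∈ cf.support, cf t * (t:ℝ)^n := by
      intro n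
      have := congrFun hcf (C c k n)
      rw [Finsupp.sum] at this
      rw [← this, Finset.sum_apply]
      rw [Finset.mul_sum]
      apply Finset.sum_congr rfl
      intro t _
      simp only [Pi.smul_apply, smul_eq_mul, hg]
      rw [gg_center f c hc]
      ring
    constructor
    · constructor
      · -- smooth
        apply ContDiff.add (hsm.const_smul a)
        rw [← hcf, Finsupp.sum, Finset.sum_fn]
        apply ContDiff.sum
        intro t _
        exact (gg_smooth f c hc k (t:ℝ)).const_smul (cf t)
      · -- Lp
        intro p hp
        apply MemLp.add ((hLp p hp).const_smul a)
        rw [← hcf, Finsupp.sum]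
        apply memLp_finsetSum'
        intro t _
        exact (gg_memLp f c hc hN k (habs t) hp).const_smul (cf t)
    · -- unbounded
      by_cases hcf0 : cf = 0
      · have hz0 : z = 0 := by rw [← hcf, hcf0]; simp
        have ha0 : a ≠ 0 := by
          intro h; exact hw0 (by rw [hz0, h]; simp)
        intro C
        obtain ⟨x, hxA, hx⟩ := hub (|C| / |a|)
        refine ⟨x, hxA, ?_⟩
        have : |a| * (|C| / |a|) < |a| * |f x| := by
          apply mul_lt_mul_of_pos_left hx (abs_pos.mpr ha0)
        rw [mul_div_cancel₀ _ (by positivity : |a| ≠ 0)] at this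
        calc C ≤ |C| := le_abs_self C
        _ < |a| * |f x| := this
        _ = |(a • f + z) x| := by
            rw [hz0]; simp [abs_mul]
      · -- dominant term argument
        have hsupp : cf.support.Nonempty := Finsupp.support_nonempty_iff.mpr hcf0
        set t0 : ↥T := cf.support.max' hsupp with ht0
        have ht0mem := cf.support.max'_mem hsupp
        have hc0 : cf t0 ≠ 0 := Finsupp.mem_support_iff.mp ht0mem
        have ht01 : (1:ℝ) < (t0:ℝ) := t0.2.1
        set δ : ℕ → ℝ := fun n => ∑ t ∈ cf.support.erase t0, |cf t| * ((t:ℝ)/(t0:ℝ))^n with hδ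
        have hδ0 : Filter.Tendsto δ Filter.atTop (nhds 0) := by
          rw [hδ]
          have : (0:ℝ) = ∑ t ∈ cf.support.erase t0, (0:ℝ) := by simp
          rw [this]
          apply tendsto_finset_sum
          intro t htmem
          rw [show (0:ℝ) = |cf t| * 0 by ring]
          apply Filter.Tendsto.const_mul
          apply tendsto_pow_atTop_nhds_zero_of_lt_one
          · have h1 : (1:ℝ) < t := t.2.1
            have h2 : (1:ℝ) < t0 := t0.2.1
            exact div_nonneg (by linarith) (by linarith)
          · rw [div_lt_one (by linarith)]
            have hlt : t < t0 := lt_of_le_of_ne (cf.support.le_max' t (Finset.mem_of_mem_erase htmem))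
              (Finset.ne_of_mem_erase htmem)
            exact_mod_cast hlt
        have hlow : ∀ n : ℕ, |∑ t ∈ cf.support, cf t * (t:ℝ)^n| ≥
            (t0:ℝ)^n * (|cf t0| - δ n) := by
          intro n
          have hsplit : ∑ t ∈ cf.support, cf t * (t:ℝ)^n =
              cf t0 * (t0:ℝ)^n + ∑ t ∈ cf.support.erase t0, cf t * (t:ℝ)^n := by
            rw [← Finset.add_sum_erase _ _ ht0mem]
          rw [hsplit]
          have h1 : |cf t0 * (t0:ℝ)^n| = (t0:ℝ)^n * |cf t0| := by
            rw [abs_mul, abs_of_nonneg (by positivity : (0:ℝ) ≤ (t0:ℝ)^n)]; ring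
          have h2 : |∑ t ∈ cf.support.erase t0, cf t * (t:ℝ)^n| ≤ (t0:ℝ)^n * δ n := by
            calc |∑ t ∈ cf.support.erase t0, cf t * (t:ℝ)^n|
                ≤ ∑ t ∈ cf.support.erase t0, |cf t * (t:ℝ)^n| := Finset.abs_sum_le_sum_abs _ _
            _ = ∑ t ∈ cf.support.erase t0, (t0:ℝ)^n * (|cf t| * ((t:ℝ)/(t0:ℝ))^n) := by
                apply Finset.sum_congr rfl
                intro t htmem
                have ht1 : (0:ℝ) < t := lt_trans one_pos t.2.1
                have ht00 : (t0:ℝ) ≠ 0 := by positivity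
                rw [abs_mul, abs_of_nonneg (by positivity : (0:ℝ) ≤ (t:ℝ)^n), div_pow]
                field_simp
            _ = (t0:ℝ)^n * δ n := by rw [hδ, ← Finset.mul_sum]
          have h3 := abs_add_le (cf t0 * (t0:ℝ)^n + ∑ t ∈ cf.support.erase t0, cf t * (t:ℝ)^n)
            (-(∑ t ∈ cf.support.erase t0, cf t * (t:ℝ)^n))
          simp only [add_neg_cancel_right, abs_neg] at h3
          have := abs_nonneg (∑ t ∈ cf.support.erase t0, cf t * (t:ℝ)^n)
          nlinarith [h1, h2, h3]
        intro Cb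
        have hev1 : ∀ᶠ n : ℕ in Filter.atTop, δ n < |cf t0| / 2 := by
          have := hδ0.eventually (eventually_lt_nhds (show (0:ℝ) < |cf t0|/2 by
            have := abs_pos.mpr hc0; linarith))
          exact this
        have hev2 : ∀ᶠ n : ℕ in Filter.atTop,
            (|Cb| + |a|) < (n + 1 : ℝ) * (|cf t0| / 2) := by
          have h := tendsto_natCast_atTop_atTop (R := ℝ)
          have h2 : Filter.Tendsto (fun n : ℕ => (n + 1 : ℝ) * (|cf t0| / 2))
              Filter.atTop Filter.atTop := by
            apply Filter.Tendsto.atTop_mul_const (by have := abs_pos.mpr hc0; linarith)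
            exact Filter.tendsto_atTop_add_const_right _ _ h
          exact h2.eventually_gt_atTop (|Cb| + |a|)
        obtain ⟨n, hn1, hn2⟩ := (hev1.and hev2).exists
        refine ⟨C c k n, by rw [AuxNBCI.C]; exact hcA _, ?_⟩
        have hval : (a • f + z) (C c k n) = a * f (C c k n) +
            Bh f c k n * ∑ t ∈ cf.support, cf t * (t:ℝ)^n := by
          simp only [Pi.add_apply, Pi.smul_apply, smul_eq_mul, hzval n]
        set F := |f (C c k n)| with hF
        have hF0 : 0 ≤ F := abs_nonneg _
        have hBn : Bh f c k n = (n+1) * (1 + F) := by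
          rw [hF, Bh]
        have ht0n : (1:ℝ) ≤ (t0:ℝ)^n := one_le_pow₀ (by linarith)
        have hS := hlow n
        have hB1 : 1 ≤ Bh f c k n := one_le_Bh f c k n
        -- |value| ≥ Bh * t0^n * (|cf t0| - δ n) - |a| * F
        have hmain : |(a • f + z) (C c k n)| ≥
            Bh f c k n * ((t0:ℝ)^n * (|cf t0| - δ n)) - |a| * F := by
          rw [hval]
          have h4 := abs_add_le (a * f (C c k n) + Bh f c k n * ∑ t ∈ cf.support, cf t * (t:ℝ)^n)
            (-(a * f (C c k n)))
          have h5 : |Bh f c k n| = Bh f c k n := abs_of_nonneg (by linarith)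
          have he : a * f (C c k n) + Bh f c k n * ∑ t ∈ cf.support, cf t * (t:ℝ)^n
              + -(a * f (C c k n)) = Bh f c k n * ∑ t ∈ cf.support, cf t * (t:ℝ)^n := by ring
          rw [he, abs_neg, abs_mul, abs_mul, h5] at h4
          rw [← hF] at h4
          have h6 : Bh f c k n * ((t0:ℝ)^n * (|cf t0| - δ n)) ≤
              Bh f c k n * |∑ t ∈ cf.support, cf t * (t:ℝ)^n| := by
            apply mul_le_mul_of_nonneg_left hS (by linarith)
          linarith
        have hhalf : |cf t0| - δ n ≥ |cf t0| / 2 := by linarith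
        have hstep : Bh f c k n * ((t0:ℝ)^n * (|cf t0| - δ n)) ≥
            (n+1) * (1 + F) * (|cf t0| / 2) := by
          rw [hBn]
          have hnn : (0:ℝ) ≤ (n+1) * (1+F) := by positivity
          calc (n+1) * (1 + F) * ((t0:ℝ)^n * (|cf t0| - δ n))
              ≥ (n+1) * (1 + F) * (1 * (|cf t0| / 2)) := by
                apply mul_le_mul_of_nonneg_left _ hnn
                apply mul_le_mul ht0n hhalf (by have := abs_pos.mpr hc0; linarith)
                  (by have h2 : (1:ℝ) < t0 := t0.2.1; positivity)
          _ = (n+1) * (1 + F) * (|cf t0| / 2) := by ring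
        have hfinal : (n+1) * (1 + F) * (|cf t0| / 2) - |a| * F > Cb := by
          have hexp : (n+1) * (1 + F) * (|cf t0| / 2) =
              (n+1) * (|cf t0|/2) + F * ((n+1) * (|cf t0|/2)) := by ring
          rw [hexp]
          have h7 : |a| * F ≤ F * ((n+1) * (|cf t0|/2)) := by
            apply le_trans (le_of_eq (mul_comm _ _))
            apply mul_le_mul_of_nonneg_left (by have := abs_nonneg Cb; linarith) hF0
          have h8 := le_abs_self Cb
          have h9 := abs_nonneg a
          linarith
        calc Cb < (n+1) * (1 + F) * (|cf t0| / 2) - |a| * F := hfinal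
        _ ≤ Bh f c k n * ((t0:ℝ)^n * (|cf t0| - δ n)) - |a| * F := by linarith
        _ ≤ |(a • f + z) (C c k n)| := by linarith

  · -- intersections
    intro l hlk
    apply le_antisymm
    · rintro w ⟨hwk, hwl⟩
      simp only [SetLike.mem_coe] at hwk hwl
      rw [Submodule.mem_span_insert] at hwk hwl
      obtain ⟨a, u, hu, rfl⟩ := hwk
      obtain ⟨b, v, hv, hw⟩ := hwl
      have hrange : ∀ (k : ℕ) (h : RN N → ℝ), h ∈ Set.range (g k) → ∃ t : ℝ, h = gg f c k t := by
        rintro k' h ⟨t, rfl⟩; exact ⟨(t:ℝ), rfl⟩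
      have huy0 : u y0 = 0 := span_vanish f c (hy0far k) (hrange k) hu
      have hvy0 : v y0 = 0 := span_vanish f c (hy0far l) (hrange l) hv
      have hab : a = b := by
        have := congrFun hw y0
        simp only [Pi.add_apply, Pi.smul_apply, smul_eq_mul, huy0, hvy0, add_zero] at this
        exact mul_right_cancel₀ hfy0 this
      subst hab
      have huv : u = v := by
        have : a • f + u = a • f + v := hw
        funext x
        have := congrFun this x
        simp only [Pi.add_apply, Pi.smul_apply, smul_eq_mul] at this
        linarith
      have hu0 : u = 0 := by
        funext x
        by_cases hx : ∃ n, x ∈ ball (C c k n) (rr f c k n)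
        · obtain ⟨n, hn⟩ := hx
          have hxnl : ∀ m, ¬ x ∈ ball (C c l m) (rr f c l m) := hdisj (fun h => hlk h.symm) x n hn
          have : v x = 0 := by
            refine span_vanish f c ?_ (hrange l) hv
            exact hxnl
          rw [huv, this]; rfl
        · push_neg at hx
          exact span_vanish f c hx (hrange k) hu
      rw [hu0, add_zero] at *
      rw [Submodule.mem_span_singleton]
      exact ⟨a, rfl⟩
    · rw [Submodule.span_le, Set.singleton_subset_iff]
      exact ⟨Submodule.subset_span (Set.mem_insert _ _), Submodule.subset_span (Set.mem_insert _ _)⟩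
end
end

section
/- Let N ≥ 1 and let A ⊆ ℝ^N be not relatively compact (equivalently, unbounded). Then nBC∞I(A) is infinitely pointwise 𝔠-dense lineable in C^∞(ℝ^N): for every f ∈ nBC∞I(A) there exists a countable family (W_k)_{k∈ℕ} of linear subspaces of the space of functions ℝ^N → ℝ such that for every k ∈ ℕ: dim(W_k) = 𝔠; f ∈ W_k ⊆ nBC∞I(A) ∪ {0}; W_k ∩ W_l = span{f} for every l ≠ k; and W_k is dense in C^∞(ℝ^N) for the topology of uniform convergence on compacta of all derivatives, meaning: for every infinitely differentiable g : ℝ^N → ℝ, every compact set K ⊆ ℝ^N, every n ∈ ℕ, and every ε > 0, there exists w ∈ W_k such that ‖D^j(w − g)(x)‖ < ε for all derivative orders j ≤ n and all x ∈ K (where D^j denotes the j-th total (iterated Fréchet) derivative). -/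
open MeasureTheory Filter Topology

noncomputable section

/-- A set `W` of functions is dense in `C^∞(ℝ^N)` for the topology of uniform convergence
on compacta of all derivatives. -/
def DenseInCinfty {N : ℕ} (W : Set (RN N → ℝ)) : Prop :=
  ∀ g : RN N → ℝ, ContDiff ℝ (⊤ : ℕ∞) g → ∀ K : Set (RN N), IsCompact K → ∀ n : ℕ,
    ∀ ε : ℝ, 0 < ε →
      ∃ w ∈ W, ∀ j : ℕ, j ≤ n → ∀ x ∈ K, ‖iteratedFDeriv ℝ j (w - g) x‖ < ε


open Metric
open scoped ENNReal NNReal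

namespace Aux9
variable {N : ℕ} {A : Set (RN N)} {f : RN N → ℝ}

lemma exists_pt (hc : Continuous f) (hu : UnboundedOn A f) (C R : ℝ) :
    ∃ x, x ∈ A ∧ C < |f x| ∧ R < ‖x‖ := by
  obtain ⟨M, hM⟩ := (isCompact_closedBall (0:RN N) R).exists_bound_of_continuousOn
    hc.continuousOn
  obtain ⟨x, hxA, hx⟩ := hu (max C M)
  refine ⟨x, hxA, lt_of_le_of_lt (le_max_left _ _) hx, ?_⟩
  by_contra h
  push_neg at h
  have : x ∈ closedBall (0:RN N) R := by
    simpa [mem_closedBall, dist_eq_norm] using h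
  have := hM x this
  simp only [Real.norm_eq_abs] at this
  exact absurd (lt_of_le_of_lt (le_max_right _ _) hx) (not_lt.2 this)

def pick (hc : Continuous f) (hu : UnboundedOn A f) (C R : ℝ) : RN N :=
  (exists_pt hc hu C R).choose

lemma pick_spec (hc : Continuous f) (hu : UnboundedOn A f) (C R : ℝ) :
    pick hc hu C R ∈ A ∧ C < |f (pick hc hu C R)| ∧ R < ‖pick hc hu C R‖ :=
  (exists_pt hc hu C R).choose_spec

def Y (hc : Continuous f) (hu : UnboundedOn A f) : ℕ → RN N
  | 0 => pick hc hu 0 5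
  | (n+1) => pick hc hu (n+1) (‖Y hc hu n‖ + 6)

variable (hc : Continuous f) (hu : UnboundedOn A f)

lemma Y_mem (n : ℕ) : Y hc hu n ∈ A := by
  cases n with
  | zero => exact (pick_spec hc hu 0 5).1
  | succ n => exact (pick_spec hc hu _ _).1

lemma Y_f (n : ℕ) : (n : ℝ) < |f (Y hc hu n)| := by
  cases n with
  | zero => exact_mod_cast (pick_spec hc hu 0 5).2.1
  | succ n =>
      have h := (pick_spec hc hu (((n:ℕ)+1 : ℕ) : ℝ) (‖Y hc hu n‖ + 6)).2.1
      simpa [Y] using h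

lemma Y_succ (n : ℕ) : ‖Y hc hu n‖ + 6 < ‖Y hc hu (n+1)‖ :=
  (pick_spec hc hu _ _).2.2

lemma Y_norm (n : ℕ) : (n : ℝ) + 5 < ‖Y hc hu n‖ := by
  induction n with
  | zero => simpa [Y] using (pick_spec hc hu 0 5).2.2
  | succ n ih =>
      have := Y_succ hc hu n
      push_cast
      linarith

lemma Y_mono {m n : ℕ} (h : m < n) : ‖Y hc hu m‖ + 6 ≤ ‖Y hc hu n‖ := by
  induction n with
  | zero => omega
  | succ n ih =>
      rcases Nat.lt_succ_iff_lt_or_eq.1 h with h' | h'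
      · have := Y_succ hc hu n; linarith [ih h']
      · subst h'; exact (Y_succ hc hu m).le

lemma Y_dist {m n : ℕ} (h : m ≠ n) : 5 < dist (Y hc hu m) (Y hc hu n) := by
  have key : ∀ a b : ℕ, a < b → 5 < dist (Y hc hu a) (Y hc hu b) := by
    intro a b hab
    have h1 := Y_mono hc hu hab
    have h2 : ‖Y hc hu b‖ - ‖Y hc hu a‖ ≤ dist (Y hc hu a) (Y hc hu b) := by
      rw [dist_eq_norm ]
      have := norm_sub_norm_le (Y hc hu b) (Y hc hu a)
      rw [show ‖Y hc hu b - Y hc hu a‖ = ‖Y hc hu a - Y hc hu b‖ from norm_sub_rev _ _] at this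
      linarith
    linarith
  rcases lt_or_gt_of_ne h with h' | h'
  · exact key _ _ h'
  · rw [dist_comm]; exact key _ _ h'

end Aux9

namespace Aux9
variable {N : ℕ} {A : Set (RN N)} {f : RN N → ℝ}
variable (hc : Continuous f) (hu : UnboundedOn A f)

def rad (m : ℕ) : ℝ := Real.exp (-(m:ℝ)^2)

lemma rad_pos (m : ℕ) : 0 < rad m := Real.exp_pos _

lemma rad_le_one (m : ℕ) : rad m ≤ 1 :=
  Real.exp_le_one_iff.2 (neg_nonpos.2 (sq_nonneg _))

def zc (m : ℕ) : RN N := Y hc hu (2*m)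

def bump (m : ℕ) : ContDiffBump (zc hc hu m) :=
  ⟨rad m / 2, rad m, by have := rad_pos m; linarith, by have := rad_pos m; linarith⟩

lemma bump_far {m m' : ℕ} (h : m ≠ m') : bump hc hu m (zc hc hu m') = 0 := by
  apply (bump hc hu m).zero_of_le_dist
  have : (5:ℝ) < dist (zc hc hu m') (zc hc hu m) := by
    rw [dist_comm]
    exact Y_dist hc hu (by omega)
  have h1 := rad_le_one m
  have h2 : (bump hc hu m).rOut = rad m := rfl
  rw [h2]
  linarith

lemma bump_odd (m m' : ℕ) : bump hc hu m (Y hc hu (2*m'+1)) = 0 := by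
  apply (bump hc hu m).zero_of_le_dist
  have : (5:ℝ) < dist (Y hc hu (2*m)) (Y hc hu (2*m'+1)) := Y_dist hc hu (by omega)
  have h1 := rad_le_one m
  have h2 : (bump hc hu m).rOut = rad m := rfl
  have h3 : dist (zc hc hu m) (Y hc hu (2*m'+1)) = dist (Y hc hu (2*m)) (Y hc hu (2*m'+1)) := rfl
  rw [h2, dist_comm, h3]
  linarith

lemma bump_self (m : ℕ) : bump hc hu m (zc hc hu m) = 1 :=
  (bump hc hu m).one_of_mem_closedBall (mem_closedBall_self (show (0:ℝ) ≤ (bump hc hu m).rIn from by show (0:ℝ) ≤ rad m / 2; have := rad_pos m; linarith))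

lemma bump_supp {m : ℕ} {x : RN N} (h : bump hc hu m x ≠ 0) :
    dist x (zc hc hu m) < rad m := by
  have := Function.mem_support.2 h
  rw [(bump hc hu m).support_eq] at this
  have h2 : (bump hc hu m).rOut = rad m := rfl
  rw [h2] at this
  exact mem_ball.1 this

def Tt (t : ℝ) : RN N → ℝ := fun x => ∑ᶠ m : ℕ, Real.exp (m * t) * bump hc hu m x

lemma local_rep (x : RN N) :
    ∃ m₀ : ℕ, ∀ x' ∈ ball x 1, ∀ m, m ≠ m₀ → bump hc hu m x' = 0 := by
  by_cases h : ∃ p : ℕ × RN N, p.2 ∈ ball x 1 ∧ bump hc hu p.1 p.2 ≠ 0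
  · obtain ⟨⟨m₀, x₀⟩, hx₀b, hx₀⟩ := h
    refine ⟨m₀, fun x' hx' m hm => ?_⟩
    by_contra hB
    have h1 : dist x' (zc hc hu m) < 1 := lt_of_lt_of_le (bump_supp hc hu hB) (rad_le_one m)
    have h2 : dist x₀ (zc hc hu m₀) < 1 := lt_of_lt_of_le (bump_supp hc hu hx₀) (rad_le_one m₀)
    have h5 : (5:ℝ) < dist (zc hc hu m) (zc hc hu m₀) := Y_dist hc hu (by omega)
    have d1 : dist (zc hc hu m) (zc hc hu m₀) ≤
        dist (zc hc hu m) x' + dist x' x + dist x (zc hc hu m₀) :=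
      dist_triangle4 _ _ _ _
    have d2 : dist x (zc hc hu m₀) ≤ dist x x₀ + dist x₀ (zc hc hu m₀) := dist_triangle _ _ _
    rw [mem_ball] at hx' hx₀b
    rw [dist_comm] at h1
    have d3 : dist x x₀ = dist x₀ x := dist_comm _ _
    linarith
  · push_neg at h
    exact ⟨0, fun x' hx' m _ => h (m, x') hx'⟩

lemma Tt_eqOn (t : ℝ) {x : RN N} {m₀ : ℕ}
    (h : ∀ x' ∈ ball x 1, ∀ m, m ≠ m₀ → bump hc hu m x' = 0) :
    ∀ x' ∈ ball x 1, Tt hc hu t x' = Real.exp (m₀ * t) * bump hc hu m₀ x' := by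
  intro x' hx'
  exact finsum_eq_single _ m₀ (fun m hm => by rw [h x' hx' m hm, mul_zero])

lemma Tt_nhds (t : ℝ) {x : RN N} {m₀ : ℕ}
    (h : ∀ x' ∈ ball x 1, ∀ m, m ≠ m₀ → bump hc hu m x' = 0) :
    Tt hc hu t =ᶠ[𝓝 x] fun x' => Real.exp (m₀ * t) * bump hc hu m₀ x' :=
  eventually_of_mem (isOpen_ball.mem_nhds (mem_ball_self one_pos)) (Tt_eqOn hc hu t h)

lemma Tt_contDiff (t : ℝ) : ContDiff ℝ (⊤:ℕ∞) (Tt hc hu t) := by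
  rw [contDiff_iff_contDiffAt]
  intro x
  obtain ⟨m₀, h⟩ := local_rep hc hu x
  exact (contDiff_const.mul (bump hc hu m₀).contDiff).contDiffAt.congr_of_eventuallyEq
    (Tt_nhds hc hu t h)

lemma Tt_even (t : ℝ) (m : ℕ) : Tt hc hu t (Y hc hu (2*m)) = Real.exp (m * t) := by
  have : Tt hc hu t (zc hc hu m) = Real.exp (m*t) * bump hc hu m (zc hc hu m) :=
    finsum_eq_single _ m (fun m' hm' => by rw [bump_far hc hu hm', mul_zero])
  rw [bump_self hc hu m, mul_one] at this
  exact this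

lemma Tt_odd (t : ℝ) (m : ℕ) : Tt hc hu t (Y hc hu (2*m+1)) = 0 := by
  have : ∀ m' : ℕ, Real.exp (m' * t) * bump hc hu m' (Y hc hu (2*m+1)) = 0 :=
    fun m' => by rw [bump_odd hc hu m' m, mul_zero]
  exact finsum_eq_zero_of_forall_eq_zero this

lemma iteratedFDeriv_congr_nhds {g₁ g₂ : RN N → ℝ} {x : RN N} (h : g₁ =ᶠ[𝓝 x] g₂) (j : ℕ) :
    iteratedFDeriv ℝ j g₁ x = iteratedFDeriv ℝ j g₂ x := by
  rw [← iteratedFDerivWithin_univ, ← iteratedFDerivWithin_univ]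
  exact Filter.EventuallyEq.iteratedFDerivWithin_eq (by rwa [nhdsWithin_univ]) h.self_of_nhds j

end Aux9

namespace Aux9
variable {N : ℕ} {A : Set (RN N)} {f : RN N → ℝ}
variable (hc : Continuous f) (hu : UnboundedOn A f)

lemma summable_exp_neg : Summable (fun m : ℕ => Real.exp (-(m:ℝ))) := by
  have h : ∀ m : ℕ, Real.exp (-(m:ℝ)) = Real.exp (-1) ^ m := by
    intro m
    rw [← Real.exp_nat_mul]
    ring_nf
  rw [funext h]
  exact summable_geometric_of_lt_one (Real.exp_nonneg _) (Real.exp_lt_one_iff.2 (by norm_num))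

lemma summable_aux (hN : 1 ≤ N) {p : ℝ} (hp : 1 ≤ p) :
    Summable (fun m : ℕ => Real.exp ((m:ℝ)*p) * rad m ^ N) := by
  set b : ℝ := (p+1)^2/(4*(N:ℝ)) with hb
  have hN0 : (0:ℝ) < N := by exact_mod_cast Nat.lt_of_lt_of_le Nat.zero_lt_one hN
  apply Summable.of_nonneg_of_le (fun m => mul_nonneg (Real.exp_nonneg _) (pow_nonneg (rad_pos m).le _)) (fun m => ?_)
    ((summable_exp_neg.mul_left (Real.exp b)))
  have h1 : rad m ^ N = Real.exp ((N:ℝ) * (-(m:ℝ)^2)) := by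
    rw [rad, Real.exp_nat_mul]
  rw [h1, ← Real.exp_add]
  rw [← Real.exp_add]
  apply Real.exp_le_exp.2
  have hb4 : (p+1)^2 = 4*(N:ℝ)*b := by
    rw [hb]; field_simp
  nlinarith [sq_nonneg (2*(N:ℝ)*(m:ℝ) - (p+1)), sq_nonneg ((m:ℝ))]

lemma Tt_memLp (hN : 1 ≤ N) {t : ℝ} (ht0 : 0 ≤ t) (ht1 : t ≤ 1) {p : ℝ} (hp : 1 ≤ p) :
    MemLp (Tt hc hu t) (ENNReal.ofReal p) volume := by
  have hp0 : (0:ℝ) < p := by linarith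
  have hP0 : ENNReal.ofReal p ≠ 0 := by
    simp only [ne_eq, ENNReal.ofReal_eq_zero, not_le]; linarith
  have hPt : ENNReal.ofReal p ≠ ⊤ := ENNReal.ofReal_ne_top
  refine ⟨((Tt_contDiff hc hu t).continuous).aestronglyMeasurable, ?_⟩
  rw [eLpNorm_eq_lintegral_rpow_enorm_toReal hP0 hPt, ENNReal.toReal_ofReal hp0.le]
  apply ENNReal.rpow_lt_top_of_nonneg (by positivity)
  apply ne_of_lt
  -- bound the integral
  have hb : ∀ x, (↑‖Tt hc hu t x‖₊ : ℝ≥0∞) ^ p ≤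
      ∑' m : ℕ, (closedBall (zc hc hu m) (rad m)).indicator
        (fun _ => ENNReal.ofReal (Real.exp ((m:ℝ)*p))) x := by
    intro x
    obtain ⟨m₀, h⟩ := local_rep hc hu x
    have hval : Tt hc hu t x = Real.exp (m₀*t) * bump hc hu m₀ x :=
      Tt_eqOn hc hu t h x (mem_ball_self one_pos)
    by_cases hx : x ∈ closedBall (zc hc hu m₀) (rad m₀)
    · have h1 : |Tt hc hu t x| ≤ Real.exp m₀ := by
        rw [hval, abs_mul, abs_of_nonneg (Real.exp_pos _).le,
          abs_of_nonneg (bump hc hu m₀).nonneg]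
        have hle1 : bump hc hu m₀ x ≤ 1 := (bump hc hu m₀).le_one
        have hee : Real.exp ((m₀:ℝ)*t) ≤ Real.exp m₀ := by
          apply Real.exp_le_exp.2
          nlinarith [Nat.cast_nonneg (α := ℝ) m₀]
        nlinarith [Real.exp_pos ((m₀:ℝ)*t), (bump hc hu m₀).nonneg (x := x)]
      have h2 : (↑‖Tt hc hu t x‖₊ : ℝ≥0∞) ^ p ≤ ENNReal.ofReal (Real.exp ((m₀:ℝ)*p)) := by
        rw [← enorm_eq_nnnorm, Real.enorm_eq_ofReal_abs]
        calc ENNReal.ofReal |Tt hc hu t x| ^ p ≤ ENNReal.ofReal (Real.exp m₀) ^ p :=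
              ENNReal.rpow_le_rpow (ENNReal.ofReal_le_ofReal h1) hp0.le
          _ = ENNReal.ofReal (Real.exp (m₀:ℝ) ^ p) :=
              ENNReal.ofReal_rpow_of_nonneg (Real.exp_nonneg _) hp0.le
          _ = ENNReal.ofReal (Real.exp ((m₀:ℝ)*p)) := by
              rw [Real.rpow_def_of_pos (Real.exp_pos _), Real.log_exp]
      refine le_trans ?_ (ENNReal.le_tsum m₀)
      rwa [Set.indicator_of_mem hx]
    · have hz : bump hc hu m₀ x = 0 := by
        apply (bump hc hu m₀).zero_of_le_dist
        have : rad m₀ < dist x (zc hc hu m₀) := by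
          simpa [mem_closedBall, not_le] using hx
        exact le_of_lt this
      rw [hval, hz, mul_zero]
      simp only [nnnorm_zero, ENNReal.coe_zero]
      rw [ENNReal.zero_rpow_of_pos hp0]
      exact zero_le'
  calc ∫⁻ x, (↑‖Tt hc hu t x‖₊ : ℝ≥0∞) ^ p ∂volume
      ≤ ∫⁻ x, (∑' m : ℕ, (closedBall (zc hc hu m) (rad m)).indicator
          (fun _ => ENNReal.ofReal (Real.exp ((m:ℝ)*p))) x) ∂volume := lintegral_mono hb
    _ = ∑' m : ℕ, ∫⁻ x, (closedBall (zc hc hu m) (rad m)).indicator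
          (fun _ => ENNReal.ofReal (Real.exp ((m:ℝ)*p))) x ∂volume :=
        lintegral_tsum (fun m => (measurable_const.indicator measurableSet_closedBall).aemeasurable)
    _ = ∑' m : ℕ, ENNReal.ofReal (Real.exp ((m:ℝ)*p)) * volume (closedBall (zc hc hu m) (rad m)) := by
        congr 1; funext m
        exact lintegral_indicator_const measurableSet_closedBall _
    _ = ∑' m : ℕ, ENNReal.ofReal (Real.exp ((m:ℝ)*p) * rad m ^ N) * volume (ball (0:RN N) 1) := by
        congr 1; funext m
        rw [Measure.addHaar_closedBall volume _ (rad_pos m).le, finrank_euclideanSpace_fin,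
          ENNReal.ofReal_mul (Real.exp_nonneg _), mul_assoc]
    _ = (∑' m : ℕ, ENNReal.ofReal (Real.exp ((m:ℝ)*p) * rad m ^ N)) * volume (ball (0:RN N) 1) :=
        ENNReal.tsum_mul_right
    _ = ENNReal.ofReal (∑' m : ℕ, Real.exp ((m:ℝ)*p) * rad m ^ N) * volume (ball (0:RN N) 1) := by
        rw [ENNReal.ofReal_tsum_of_nonneg (fun m => mul_nonneg (Real.exp_nonneg _) (pow_nonneg (rad_pos m).le _)) (summable_aux hN hp)]
    _ < ⊤ := by
        apply ENNReal.mul_lt_top ENNReal.ofReal_lt_top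
        exact lt_of_le_of_lt (measure_mono ball_subset_closedBall) measure_closedBall_lt_top

end Aux9

namespace Aux9
variable {N : ℕ} {A : Set (RN N)} {f : RN N → ℝ}
variable (hc : Continuous f) (hu : UnboundedOn A f)

lemma Tt_zero_iteratedFDeriv {t : ℝ} {x : RN N} {m₀ : ℕ}
    (h : ∀ x' ∈ ball x 1, ∀ m, m ≠ m₀ → bump hc hu m x' = 0)
    (h0 : ∀ x' ∈ ball x 1, bump hc hu m₀ x' = 0) (j : ℕ) :
    iteratedFDeriv ℝ j (Tt hc hu t) x = 0 := by
  have heq : Tt hc hu t =ᶠ[𝓝 x] (fun _ => (0:ℝ)) := by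
    apply eventually_of_mem (isOpen_ball.mem_nhds (mem_ball_self one_pos))
    intro x' hx'
    rw [Tt_eqOn hc hu t h x' hx', h0 x' hx', mul_zero]
  rw [iteratedFDeriv_congr_nhds heq j, iteratedFDeriv_zero_fun]
  rfl

lemma Tt_deriv_bound (hN : 1 ≤ N) (K : Set (RN N)) (hK : IsCompact K) (n : ℕ) :
    ∃ C : ℝ, 0 ≤ C ∧ ∀ t ∈ Set.Ioo (0:ℝ) 1, ∀ j, j ≤ n → ∀ x ∈ K,
      ‖iteratedFDeriv ℝ j (Tt hc hu t) x‖ ≤ C := by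
  obtain ⟨RK, hRK⟩ := hK.isBounded.subset_closedBall 0
  set M₀ : ℕ := Nat.ceil (max RK 0) with hM₀
  -- bounds for each individual bump derivative on K
  have hbd : ∀ m j : ℕ, ∃ Cmj : ℝ, 0 ≤ Cmj ∧ ∀ x ∈ K, ‖iteratedFDeriv ℝ j (⇑(bump hc hu m)) x‖ ≤ Cmj := by
    intro m j
    have hcont : Continuous fun x => iteratedFDeriv ℝ j (⇑(bump hc hu m)) x :=
      (bump hc hu m).contDiff.continuous_iteratedFDeriv (n := (⊤:ℕ∞)) (by exact_mod_cast le_top)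
    obtain ⟨C, hC⟩ := hK.exists_bound_of_continuousOn hcont.continuousOn
    exact ⟨max C 0, le_max_right _ _, fun x hx => le_trans (hC x hx) (le_max_left _ _)⟩
  choose Cb hCb0 hCb using hbd
  set C : ℝ := ∑ m ∈ Finset.range (M₀+1), ∑ j ∈ Finset.range (n+1), Real.exp m * Cb m j with hC
  have hCnn : 0 ≤ C := by
    apply Finset.sum_nonneg
    intro m _
    apply Finset.sum_nonneg
    intro j _
    exact mul_nonneg (Real.exp_nonneg _) (hCb0 m j)
  refine ⟨C, hCnn, ?_⟩
  rintro t ⟨ht0, ht1⟩ j hj x hx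
  obtain ⟨m₀, h⟩ := local_rep hc hu x
  by_cases hact : ∃ x' ∈ ball x 1, bump hc hu m₀ x' ≠ 0
  · -- m₀ is small
    obtain ⟨x', hx', hbx'⟩ := hact
    have hd1 : dist x' (zc hc hu m₀) < 1 := lt_of_lt_of_le (bump_supp hc hu hbx') (rad_le_one m₀)
    have hd2 : dist x (zc hc hu m₀) < 2 := by
      have := dist_triangle x x' (zc hc hu m₀)
      rw [mem_ball, dist_comm] at hx'
      linarith
    have hzc : ‖zc hc hu m₀‖ ≤ ‖x‖ + 2 := by
      have h3 := dist_triangle (zc hc hu m₀) x 0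
      rw [dist_comm (zc hc hu m₀) x, dist_zero_right, dist_zero_right] at h3
      linarith
    have hxK : ‖x‖ ≤ RK := by simpa [mem_closedBall, dist_eq_norm] using hRK hx
    have hm₀M : m₀ ≤ M₀ := by
      have h1 : (2*m₀:ℝ) + 5 < ‖zc hc hu m₀‖ := by
        have := Y_norm hc hu (2*m₀)
        rw [show zc hc hu m₀ = Y hc hu (2*m₀) from rfl]
        push_cast at this ⊢
        linarith
      have h2 : (m₀:ℝ) ≤ max RK 0 := by
        have hm : (m₀:ℝ) ≤ 2*m₀ := by nlinarith [Nat.cast_nonneg (α := ℝ) m₀]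
        have := le_max_left RK 0
        nlinarith
      calc m₀ ≤ Nat.ceil ((m₀:ℝ)) := by simp [Nat.ceil_natCast]
        _ ≤ M₀ := Nat.ceil_le_ceil h2
    -- compute the derivative
    have heq : iteratedFDeriv ℝ j (Tt hc hu t) x
        = Real.exp (m₀*t) • iteratedFDeriv ℝ j (⇑(bump hc hu m₀)) x := by
      rw [iteratedFDeriv_congr_nhds (Tt_nhds hc hu t h) j]
      exact iteratedFDeriv_const_smul_apply' (a := Real.exp (m₀*t)) (𝕜 := ℝ)
        ((bump hc hu m₀).contDiff.contDiffAt)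
    rw [heq, norm_smul, Real.norm_eq_abs, abs_of_nonneg (Real.exp_nonneg _)]
    have hb1 : Real.exp ((m₀:ℝ)*t) ≤ Real.exp m₀ := by
      apply Real.exp_le_exp.2
      nlinarith [Nat.cast_nonneg (α := ℝ) m₀]
    have hb2 : ‖iteratedFDeriv ℝ j (⇑(bump hc hu m₀)) x‖ ≤ Cb m₀ j := hCb m₀ j x hx
    have hterm : Real.exp ((m₀:ℝ)*t) * ‖iteratedFDeriv ℝ j (⇑(bump hc hu m₀)) x‖
        ≤ Real.exp m₀ * Cb m₀ j := by
      apply mul_le_mul hb1 hb2 (norm_nonneg _) (Real.exp_nonneg _)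
    refine le_trans hterm ?_
    have hmem1 : m₀ ∈ Finset.range (M₀+1) := Finset.mem_range.2 (by omega)
    have hmem2 : j ∈ Finset.range (n+1) := Finset.mem_range.2 (by omega)
    calc Real.exp (m₀:ℝ) * Cb m₀ j
        ≤ ∑ j' ∈ Finset.range (n+1), Real.exp (m₀:ℝ) * Cb m₀ j' :=
          Finset.single_le_sum (fun j' _ => mul_nonneg (Real.exp_nonneg _) (hCb0 m₀ j')) hmem2
      _ ≤ C := Finset.single_le_sum (f := fun m : ℕ => ∑ j' ∈ Finset.range (n+1), Real.exp (m:ℝ) * Cb m j')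
          (fun m _ => Finset.sum_nonneg (fun j' _ => mul_nonneg (Real.exp_nonneg _) (hCb0 m j'))) hmem1
  · push_neg at hact
    rw [Tt_zero_iteratedFDeriv hc hu h hact j]
    simpa using hCnn

end Aux9

namespace Aux9

set_option maxHeartbeats 1000000 in
lemma abs_sum_exp_tendsto {ι : Type*} [DecidableEq ι] (s : Finset ι) (hne : s.Nonempty) (d t : ι → ℝ)
    (hd : ∀ i ∈ s, d i ≠ 0) (ht0 : ∀ i ∈ s, 0 < t i) (htinj : Set.InjOn t s) :
    Tendsto (fun m : ℕ => |∑ i ∈ s, d i * Real.exp (m * t i)|) atTop atTop := by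
  obtain ⟨b, hbs, hb⟩ := s.exists_max_image t hne
  have hsplit : ∀ m : ℕ, ∑ i ∈ s, d i * Real.exp (m * t i)
      = (∑ i ∈ s, d i * Real.exp ((m:ℝ) * (t i - t b))) * Real.exp ((m:ℝ) * t b) := by
    intro m
    rw [Finset.sum_mul]
    congr 1
    funext i
    rw [mul_assoc, ← Real.exp_add]
    ring_nf
  have hinner : Tendsto (fun m : ℕ => ∑ i ∈ s, d i * Real.exp ((m:ℝ) * (t i - t b)))
      atTop (𝓝 (d b)) := by
    have : d b = ∑ i ∈ s, (if i = b then d i else 0) := by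
      rw [Finset.sum_ite_eq' s b d]
      simp [hbs]
    rw [this]
    apply tendsto_finset_sum
    intro i hi
    by_cases hib : i = b
    · subst hib
      simp only [if_pos rfl, sub_self, mul_zero, Real.exp_zero, mul_one]
      exact tendsto_const_nhds
    · simp only [if_neg hib]
      have hlt : t i < t b := lt_of_le_of_ne (hb i hi) (fun hEq => hib (htinj hi hbs hEq))
      have h1 : Tendsto (fun m : ℕ => (m:ℝ) * (t i - t b)) atTop atBot := by
        apply Tendsto.atTop_mul_const_of_neg (by linarith) tendsto_natCast_atTop_atTop
      have h2 : Tendsto (fun m : ℕ => Real.exp ((m:ℝ) * (t i - t b))) atTop (𝓝 0) :=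
        Real.tendsto_exp_atBot.comp h1
      simpa using h2.const_mul (d i)
  have habs : Tendsto (fun m : ℕ => |∑ i ∈ s, d i * Real.exp ((m:ℝ) * (t i - t b))|)
      atTop (𝓝 |d b|) := hinner.abs
  have hdb : 0 < |d b| := abs_pos.2 (hd b hbs)
  have hexp : Tendsto (fun m : ℕ => Real.exp ((m:ℝ) * t b)) atTop atTop := by
    apply Real.tendsto_exp_atTop.comp
    exact Tendsto.atTop_mul_const (ht0 b hbs) tendsto_natCast_atTop_atTop
  have := Tendsto.pos_mul_atTop hdb habs hexp
  apply this.congr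
  intro m
  rw [hsplit m, abs_mul, abs_of_nonneg (Real.exp_nonneg _)]

end Aux9

namespace Aux9
variable {N : ℕ} {A : Set (RN N)} {f : RN N → ℝ}
variable (hc : Continuous f) (hu : UnboundedOn A f)

def Idx (N : ℕ) : Type := ({g : RN N → ℝ // ContDiff ℝ (⊤:ℕ∞) g} × ℕ)

def cutb (N : ℕ) (R : ℕ) : ContDiffBump (0 : RN N) :=
  ⟨R+1, R+2, by positivity, by linarith⟩

lemma cutb_zero {R : ℕ} {x : RN N} (h : (R:ℝ)+2 ≤ ‖x‖) : cutb N R x = 0 := by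
  apply (cutb N R).zero_of_le_dist
  rw [show (cutb N R).rOut = (R:ℝ)+2 from rfl, dist_zero_right]
  exact h

lemma cutb_one {R : ℕ} {x : RN N} (h : ‖x‖ ≤ (R:ℝ)+1) : cutb N R x = 1 := by
  apply (cutb N R).one_of_mem_closedBall
  rw [mem_closedBall, dist_zero_right]
  exact h

def Gen (τ : ℕ × Idx N → ℝ) (k : ℕ) (i : Idx N) : RN N → ℝ :=
  fun x => cutb N i.2 x * (i.1 : RN N → ℝ) x + Tt hc hu (τ (k,i)) x

variable (fv : RN N → ℝ)

def Wmap (τ : ℕ × Idx N → ℝ) (k : ℕ) : ℝ × (Idx N →₀ ℝ) →ₗ[ℝ] (RN N → ℝ) :=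
  LinearMap.coprod (LinearMap.toSpanSingleton ℝ (RN N → ℝ) f)
    (Finsupp.linearCombination ℝ (Gen hc hu τ k))

lemma Wmap_apply (τ : ℕ × Idx N → ℝ) (k : ℕ) (a : ℝ) (c : Idx N →₀ ℝ) (x : RN N) :
    Wmap hc hu τ k (a, c) x = a * f x + ∑ i ∈ c.support, c i * Gen hc hu τ k i x := by
  simp only [Wmap, LinearMap.coprod_apply, LinearMap.toSpanSingleton_apply,
    Finsupp.linearCombination_apply, Finsupp.sum, Pi.add_apply, Pi.smul_apply, smul_eq_mul,
    Finset.sum_apply]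

def RB (c : Idx N →₀ ℝ) : ℕ := c.support.sup (fun i => i.2)

lemma Gen_even (τ : ℕ × Idx N → ℝ) (k : ℕ) (i : Idx N) (m : ℕ)
    (h : (i.2:ℝ) + 2 ≤ ‖Y hc hu (2*m)‖) :
    Gen hc hu τ k i (Y hc hu (2*m)) = Real.exp (m * τ (k,i)) := by
  rw [Gen, cutb_zero h, zero_mul, zero_add, Tt_even]

lemma Gen_odd (τ : ℕ × Idx N → ℝ) (k : ℕ) (i : Idx N) (m : ℕ)
    (h : (i.2:ℝ) + 2 ≤ ‖Y hc hu (2*m+1)‖) :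
    Gen hc hu τ k i (Y hc hu (2*m+1)) = 0 := by
  rw [Gen, cutb_zero h, zero_mul, zero_add, Tt_odd]

lemma norm_Y_big {c : Idx N →₀ ℝ} {i : Idx N} (hi : i ∈ c.support) {n : ℕ} (hn : RB c ≤ n) :
    (i.2:ℝ) + 2 ≤ ‖Y hc hu n‖ := by
  have h1 : i.2 ≤ RB c := Finset.le_sup (f := fun i : Idx N => i.2) hi
  have h2 := Y_norm hc hu n
  have h3 : (i.2:ℝ) ≤ (n:ℝ) := by exact_mod_cast le_trans h1 hn
  linarith

lemma Wmap_even (τ : ℕ × Idx N → ℝ) (k : ℕ) (a : ℝ) (c : Idx N →₀ ℝ) (m : ℕ)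
    (hm : RB c ≤ 2*m) :
    Wmap hc hu τ k (a, c) (Y hc hu (2*m)) =
      a * f (Y hc hu (2*m)) + ∑ i ∈ c.support, c i * Real.exp (m * τ (k,i)) := by
  rw [Wmap_apply]
  congr 1
  apply Finset.sum_congr rfl
  intro i hi
  rw [Gen_even hc hu τ k i m (norm_Y_big hc hu hi hm)]

lemma Wmap_odd (τ : ℕ × Idx N → ℝ) (k : ℕ) (a : ℝ) (c : Idx N →₀ ℝ) (m : ℕ)
    (hm : RB c ≤ 2*m+1) :
    Wmap hc hu τ k (a, c) (Y hc hu (2*m+1)) = a * f (Y hc hu (2*m+1)) := by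
  rw [Wmap_apply]
  have : ∑ i ∈ c.support, c i * Gen hc hu τ k i (Y hc hu (2*m+1)) = 0 := by
    apply Finset.sum_eq_zero
    intro i hi
    rw [Gen_odd hc hu τ k i m (norm_Y_big hc hu hi hm), mul_zero]
  rw [this, add_zero]

end Aux9

namespace Aux9
variable {N : ℕ} {A : Set (RN N)} {f : RN N → ℝ}
variable (hc : Continuous f) (hu : UnboundedOn A f)

lemma Wmap_unbounded (τ : ℕ × Idx N → ℝ) (hτ0 : ∀ q, 0 < τ q)
    (hτinj : Function.Injective τ) (k : ℕ) (a : ℝ) (c : Idx N →₀ ℝ)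
    (h : ¬(a = 0 ∧ c = 0)) : UnboundedOn A (Wmap hc hu τ k (a, c)) := by
  classical
  intro C
  by_cases ha : a = 0
  · -- then c ≠ 0, use even points
    have hcne : c ≠ 0 := fun h0 => h ⟨ha, h0⟩
    have hne : c.support.Nonempty := Finsupp.support_nonempty_iff.2 hcne
    have htend := abs_sum_exp_tendsto c.support hne c (fun i => τ (k,i))
      (fun i hi => Finsupp.mem_support_iff.1 hi) (fun i _ => hτ0 _)
      (fun i _ j _ hEq => by
        have := hτinj hEq
        exact (Prod.mk.injEq _ _ _ _ ▸ this).2)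
    obtain ⟨m, hm1, hm2⟩ := ((htend.eventually_gt_atTop C).and (eventually_ge_atTop (RB c))).exists
    refine ⟨Y hc hu (2*m), Y_mem hc hu _, ?_⟩
    rw [Wmap_even hc hu τ k a c m (by omega), ha, zero_mul, zero_add]
    exact hm1
  · -- use odd points
    obtain ⟨M, hM⟩ := exists_nat_gt ((|C|+1) / |a|)
    set m := M + RB c with hmdef
    have hm : RB c ≤ 2*m+1 := by omega
    refine ⟨Y hc hu (2*m+1), Y_mem hc hu _, ?_⟩
    rw [Wmap_odd hc hu τ k a c m hm, abs_mul]
    have h1 : (2*m+1 : ℝ) < |f (Y hc hu (2*m+1))| := by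
      have := Y_f hc hu (2*m+1)
      push_cast at this ⊢
      linarith
    have hapos : 0 < |a| := abs_pos.2 ha
    have h2 : ((|C|+1) : ℝ) < M * |a| := (div_lt_iff₀ hapos).1 hM
    have h3 : (M:ℝ) ≤ 2*m+1 := by
      have : (M:ℝ) ≤ m := by exact_mod_cast Nat.le_add_right M (RB c)
      have hm0 : (0:ℝ) ≤ m := Nat.cast_nonneg m
      linarith
    have h4 : M * |a| ≤ |a| * |f (Y hc hu (2*m+1))| := by
      rw [mul_comm]
      apply mul_le_mul le_rfl (by linarith) (by linarith [Nat.cast_nonneg (α := ℝ) M]) hapos.le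
    have h5 : C ≤ |C| := le_abs_self C
    linarith

lemma Gen_smooth (τ : ℕ × Idx N → ℝ) (k : ℕ) (i : Idx N) :
    ContDiff ℝ (⊤:ℕ∞) (Gen hc hu τ k i) :=
  (((cutb N i.2).contDiff).mul i.1.2).add (Tt_contDiff hc hu _)

lemma Gen_memLp (hN : 1 ≤ N) (τ : ℕ × Idx N → ℝ) (hτ : ∀ q, τ q ∈ Set.Ioo (0:ℝ) 1)
    (k : ℕ) (i : Idx N) {p : ℝ} (hp : 1 ≤ p) :
    MemLp (Gen hc hu τ k i) (ENNReal.ofReal p) volume := by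
  apply MemLp.add
  · apply Continuous.memLp_of_hasCompactSupport
    · exact (((cutb N i.2).contDiff (n := (⊤:ℕ∞))).continuous).mul (i.1.2.continuous)
    · exact (cutb N i.2).hasCompactSupport.mul_right
  · exact Tt_memLp hc hu hN (hτ (k,i)).1.le (hτ (k,i)).2.le hp

lemma Wmap_mem_smoothIntegrable (hN : 1 ≤ N)
    (hsf : ContDiff ℝ (⊤:ℕ∞) f)
    (hlf : ∀ p : ℝ, 1 ≤ p → MemLp f (ENNReal.ofReal p) volume)
    (τ : ℕ × Idx N → ℝ) (hτ : ∀ q, τ q ∈ Set.Ioo (0:ℝ) 1) (k : ℕ)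
    (a : ℝ) (c : Idx N →₀ ℝ) :
    Wmap hc hu τ k (a, c) ∈ SmoothIntegrable N := by
  have hfun : Wmap hc hu τ k (a, c) =
      fun x => a * f x + ∑ i ∈ c.support, c i * Gen hc hu τ k i x :=
    funext (Wmap_apply hc hu τ k a c)
  rw [hfun]
  constructor
  · apply ContDiff.add
    · exact contDiff_const.mul hsf
    · exact ContDiff.sum (fun i _ => contDiff_const.mul (Gen_smooth hc hu τ k i))
  · intro p hp
    apply MemLp.add
    · exact (hlf p hp).const_mul a
    · exact memLp_finset_sum _ (fun i _ => (Gen_memLp hc hu hN τ hτ k i hp).const_mul (c i))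

end Aux9

namespace Aux9
variable {N : ℕ} {A : Set (RN N)} {f : RN N → ℝ}
variable (hc : Continuous f) (hu : UnboundedOn A f)

lemma card_continuous_le (N : ℕ) :
    Cardinal.mk {g : RN N → ℝ // Continuous g} ≤ Cardinal.continuum := by
  obtain ⟨D, hDc, hDd⟩ := TopologicalSpace.exists_countable_dense (RN N)
  have : Countable ↥D := hDc.to_subtype
  have hinj : Function.Injective (fun g : {g : RN N → ℝ // Continuous g} => fun d : ↥D => g.1 d) := by
    intro g₁ g₂ h
    apply Subtype.ext
    apply Continuous.ext_on hDd g₁.2 g₂.2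
    intro y hy
    exact congrFun h ⟨y, hy⟩
  calc Cardinal.mk {g : RN N → ℝ // Continuous g} ≤ Cardinal.mk (↥D → ℝ) :=
        Cardinal.mk_le_of_injective hinj
    _ = Cardinal.mk ℝ ^ Cardinal.mk ↥D := (Cardinal.power_def ℝ ↥D).symm
    _ ≤ Cardinal.continuum ^ Cardinal.aleph0 := by
        rw [Cardinal.mk_real]
        exact Cardinal.power_le_power_left (by simp [Cardinal.continuum_ne_zero]) Cardinal.mk_le_aleph0
    _ = Cardinal.continuum := Cardinal.continuum_power_aleph0

lemma card_idx_le (N : ℕ) : Cardinal.mk (ℕ × Idx N) ≤ Cardinal.continuum := by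
  have h1 : Cardinal.mk {g : RN N → ℝ // ContDiff ℝ (⊤:ℕ∞) g} ≤ Cardinal.continuum := by
    refine le_trans (Cardinal.mk_le_of_injective (f := fun g : {g : RN N → ℝ // ContDiff ℝ (⊤:ℕ∞) g} =>
      (⟨g.1, g.2.continuous⟩ : {g : RN N → ℝ // Continuous g})) ?_) (card_continuous_le N)
    intro g₁ g₂ h
    rw [Subtype.mk.injEq] at h
    exact Subtype.ext h
  have h2 : Cardinal.mk (Idx N) ≤ Cardinal.continuum := by
    rw [Idx, Cardinal.mk_prod, Cardinal.lift_id, Cardinal.lift_id, Cardinal.mk_nat]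
    calc Cardinal.mk {g : RN N → ℝ // ContDiff ℝ (⊤:ℕ∞) g} * Cardinal.aleph0
        ≤ Cardinal.continuum * Cardinal.aleph0 := by
          exact mul_le_mul' h1 le_rfl
      _ = Cardinal.continuum := Cardinal.continuum_mul_aleph0
  rw [Cardinal.mk_prod, Cardinal.lift_id, Cardinal.lift_id, Cardinal.mk_nat]
  calc Cardinal.aleph0 * Cardinal.mk (Idx N) ≤ Cardinal.aleph0 * Cardinal.continuum :=
        mul_le_mul' le_rfl h2
    _ = Cardinal.continuum := Cardinal.aleph0_mul_continuum

lemma exists_tau (N : ℕ) : ∃ τ : ℕ × Idx N → ℝ, Function.Injective τ ∧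
    ∀ q, τ q ∈ Set.Ioo (0:ℝ) 1 := by
  have h : Cardinal.mk (ℕ × Idx N) ≤ Cardinal.mk ↥(Set.Ioo (0:ℝ) 1) := by
    rw [Cardinal.mk_Ioo_real (zero_lt_one)]
    exact card_idx_le N
  obtain ⟨emb⟩ := (Cardinal.le_def _ _).1 h
  exact ⟨fun q => (emb q).1, fun q₁ q₂ h12 => emb.injective (Subtype.ext h12),
    fun q => (emb q).2⟩

lemma Wmap_inter (τ : ℕ × Idx N → ℝ) (hτ0 : ∀ q, 0 < τ q)
    (hτinj : Function.Injective τ) {k l : ℕ} (hkl : k ≠ l)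
    (a a' : ℝ) (c c' : Idx N →₀ ℝ)
    (hEq : Wmap hc hu τ k (a, c) = Wmap hc hu τ l (a', c')) :
    c = 0 ∧ c' = 0 ∧ a = a' := by
  classical
  have hf0 : ∀ n : ℕ, f (Y hc hu n) ≠ 0 := by
    intro n h0
    have h1 := Y_f hc hu n
    rw [h0, abs_zero] at h1
    exact absurd h1 (not_lt.2 (Nat.cast_nonneg n))
  -- Step 1 : a = a'
  have haa : a = a' := by
    set m := max (RB c) (RB c') with hm
    have h1 := Wmap_odd hc hu τ k a c m (by omega)
    have h2 := Wmap_odd hc hu τ l a' c' m (by omega)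
    have h3 := congrFun hEq (Y hc hu (2*m+1))
    rw [h1, h2] at h3
    exact mul_right_cancel₀ (hf0 _) h3
  -- Step 2 : c = 0 and c' = 0
  have hcc : c = 0 ∧ c' = 0 := by
    by_contra hne0
    have hemb1 : Function.Injective (fun i : Idx N => ((k, i) : ℕ × Idx N)) := by
      intro i j h; exact (Prod.mk.injEq _ _ _ _ ▸ h).2
    have hemb2 : Function.Injective (fun i : Idx N => ((l, i) : ℕ × Idx N)) := by
      intro i j h; exact (Prod.mk.injEq _ _ _ _ ▸ h).2
    set S : Finset (ℕ × Idx N) := c.support.map ⟨_, hemb1⟩ ∪ c'.support.map ⟨_, hemb2⟩ with hS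
    set d : ℕ × Idx N → ℝ := fun q => if q.1 = k then c q.2 else -(c' q.2) with hd
    have hSne : S.Nonempty := by
      rcases not_and_or.1 hne0 with h0 | h0
      · exact Finset.Nonempty.inl ((Finset.map_nonempty).2 (Finsupp.support_nonempty_iff.2 h0))
      · exact Finset.Nonempty.inr ((Finset.map_nonempty).2 (Finsupp.support_nonempty_iff.2 h0))
    have hdS : ∀ q ∈ S, d q ≠ 0 := by
      intro q hq
      rcases Finset.mem_union.1 hq with hq1 | hq1
      · obtain ⟨i, hi, rfl⟩ := Finset.mem_map.1 hq1
        simpa [hd] using Finsupp.mem_support_iff.1 hi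
      · obtain ⟨i, hi, rfl⟩ := Finset.mem_map.1 hq1
        simp only [hd, Function.Embedding.coeFn_mk, if_neg (Ne.symm hkl)]
        simpa using Finsupp.mem_support_iff.1 hi
    have htend := abs_sum_exp_tendsto S hSne d τ hdS (fun q _ => hτ0 q)
      (fun q _ q' _ hq => hτinj hq)
    obtain ⟨m, hm1, hm2⟩ := ((htend.eventually_gt_atTop 0).and
      (eventually_ge_atTop (max (RB c) (RB c')))).exists
    -- compute the sum at Y (2m)
    have hdisj : Disjoint (c.support.map ⟨_, hemb1⟩) (c'.support.map ⟨_, hemb2⟩) := by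
      rw [Finset.disjoint_left]
      rintro q hq1 hq2
      obtain ⟨i, _, rfl⟩ := Finset.mem_map.1 hq1
      obtain ⟨j, _, hj⟩ := Finset.mem_map.1 hq2
      exact hkl ((Prod.mk.injEq _ _ _ _ ▸ hj.symm).1)
    have hsum : ∑ q ∈ S, d q * Real.exp (m * τ q)
        = (∑ i ∈ c.support, c i * Real.exp (m * τ (k,i)))
          - (∑ i ∈ c'.support, c' i * Real.exp (m * τ (l,i))) := by
      rw [hS, Finset.sum_union hdisj, Finset.sum_map, Finset.sum_map]
      have e1 : ∀ i ∈ c.support, d (k,i) * Real.exp (m * τ (k,i))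
          = c i * Real.exp (m * τ (k,i)) := by
        intro i _; simp [hd]
      have e2 : ∀ i ∈ c'.support, d (l,i) * Real.exp (m * τ (l,i))
          = -(c' i * Real.exp (m * τ (l,i))) := by
        intro i _
        simp only [hd]
        rw [if_neg (Ne.symm hkl)]
        ring
      simp only [Function.Embedding.coeFn_mk]
      rw [Finset.sum_congr rfl e1, Finset.sum_congr rfl e2, Finset.sum_neg_distrib]
      ring
    have h1 := Wmap_even hc hu τ k a c m (by have := le_trans (le_max_left (RB c) (RB c')) hm2; omega)
    have h2 := Wmap_even hc hu τ l a' c' m (by have := le_trans (le_max_right (RB c) (RB c')) hm2; omega)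
    have h3 := congrFun hEq (Y hc hu (2*m))
    rw [h1, h2, haa] at h3
    have h4 : ∑ q ∈ S, d q * Real.exp (m * τ q) = 0 := by
      rw [hsum]
      linarith
    rw [h4] at hm1
    simp at hm1
  exact ⟨hcc.1, hcc.2, haa⟩

end Aux9

namespace Aux9
variable {N : ℕ} {A : Set (RN N)} {f : RN N → ℝ}
variable (hc : Continuous f) (hu : UnboundedOn A f)

lemma Wmap_zero_fst (τ : ℕ × Idx N → ℝ) (k : ℕ) (c : Idx N →₀ ℝ) :
    Wmap hc hu τ k (0, c) = Finsupp.linearCombination ℝ (Gen hc hu τ k) c := by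
  simp [Wmap]

lemma Gen_mem_range (τ : ℕ × Idx N → ℝ) (k : ℕ) (i : Idx N) :
    Gen hc hu τ k i ∈ LinearMap.range (Wmap hc hu τ k) := by
  refine ⟨(0, Finsupp.single i 1), ?_⟩
  rw [Wmap_zero_fst, Finsupp.linearCombination_single, one_smul]

lemma f_mem_range (τ : ℕ × Idx N → ℝ) (k : ℕ) :
    f ∈ LinearMap.range (Wmap hc hu τ k) := by
  refine ⟨(1, 0), ?_⟩
  simp [Wmap]

end Aux9


/-- `nBC∞I(A)` is infinitely pointwise `𝔠`-dense lineable in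
`C^∞(ℝ^N)`. -/
theorem nBCI_infinitely_pointwise_continuum_dense_lineable_in_Cinfty (N : ℕ) (hN : 1 ≤ N)
    (A : Set (RN N)) (hA : ¬ Bornology.IsBounded A) :
    ∀ f ∈ nBCI A, ∃ W : ℕ → Submodule ℝ (RN N → ℝ), ∀ k : ℕ,
      Module.rank ℝ (W k) = Cardinal.continuum ∧
      f ∈ W k ∧ (W k : Set (RN N → ℝ)) ⊆ nBCI A ∪ {0} ∧
      (∀ l : ℕ, l ≠ k → W k ⊓ W l = Submodule.span ℝ {f}) ∧
      DenseInCinfty (W k : Set (RN N → ℝ)) := by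
  classical
  intro f hf
  obtain ⟨⟨hsf, hlf⟩, hu⟩ := hf
  have hc : Continuous f := hsf.continuous
  obtain ⟨τ, hτinj, hτmem⟩ := Aux9.exists_tau N
  have hτ0 : ∀ q, 0 < τ q := fun q => (hτmem q).1
  refine ⟨fun k => LinearMap.range (Aux9.Wmap hc hu τ k), fun k => ?_⟩
  have hmem_smooth : ∀ w ∈ LinearMap.range (Aux9.Wmap hc hu τ k), w ∈ SmoothIntegrable N := by
    rintro w ⟨⟨a, c⟩, rfl⟩
    exact Aux9.Wmap_mem_smoothIntegrable hc hu hN hsf hlf τ hτmem k a c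
  refine ⟨?_, Aux9.f_mem_range hc hu τ k, ?_, ?_, ?_⟩
  · -- rank
    apply le_antisymm
    · -- upper bound
      refine le_trans (rank_le_card _ _) ?_
      have hinj : Function.Injective
          (fun w : ↥(LinearMap.range (Aux9.Wmap hc hu τ k)) =>
            (⟨w.1, ((hmem_smooth w.1 w.2).1).continuous⟩ : {g : RN N → ℝ // Continuous g})) := by
        intro w₁ w₂ h
        rw [Subtype.mk.injEq] at h
        exact Subtype.ext h
      exact le_trans (Cardinal.mk_le_of_injective hinj) (Aux9.card_continuous_le N)
    · -- lower bound
      set idx : ℝ → Aux9.Idx N := fun r => (⟨fun _ => r, contDiff_const⟩, 0) with hidx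
      have hidxinj : Function.Injective idx := by
        intro r₁ r₂ h
        have h1 := congrArg Subtype.val (congrArg Prod.fst h)
        exact congrFun h1 0
      have hgenli : LinearIndependent ℝ (fun r : ℝ => Aux9.Gen hc hu τ k (idx r)) := by
        rw [linearIndependent_iff]
        intro cc hcc
        by_contra hcc0
        have hmd : Finsupp.mapDomain idx cc ≠ 0 := by
          intro h0
          apply hcc0
          have := Finsupp.mapDomain_injective hidxinj (M := ℝ)
          apply this
          rw [h0, Finsupp.mapDomain_zero]
        have hzero : Aux9.Wmap hc hu τ k (0, Finsupp.mapDomain idx cc) = 0 := by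
          rw [Aux9.Wmap_zero_fst, Finsupp.linearCombination_mapDomain]
          exact hcc
        have hub := Aux9.Wmap_unbounded hc hu τ hτ0 hτinj k 0 (Finsupp.mapDomain idx cc)
          (fun hcon => hmd hcon.2) 0
        obtain ⟨x, _, hx⟩ := hub
        rw [hzero] at hx
        simp at hx
      have hli : LinearIndependent ℝ (fun r : ℝ =>
          (⟨Aux9.Gen hc hu τ k (idx r), Aux9.Gen_mem_range hc hu τ k (idx r)⟩ :
            ↥(LinearMap.range (Aux9.Wmap hc hu τ k)))) := by
        apply LinearIndependent.of_comp (LinearMap.range (Aux9.Wmap hc hu τ k)).subtype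
        exact hgenli
      have := hli.cardinal_le_rank
      rwa [Cardinal.mk_real] at this
  · -- subset nBCI ∪ {0}
    rintro w ⟨⟨a, c⟩, rfl⟩
    by_cases h0 : a = 0 ∧ c = 0
    · right
      obtain ⟨rfl, rfl⟩ := h0
      have : ((0:ℝ), (0 : Aux9.Idx N →₀ ℝ)) = (0 : ℝ × (Aux9.Idx N →₀ ℝ)) := rfl
      rw [this, map_zero]
      rfl
    · left
      exact ⟨Aux9.Wmap_mem_smoothIntegrable hc hu hN hsf hlf τ hτmem k a c,
        Aux9.Wmap_unbounded hc hu τ hτ0 hτinj k a c h0⟩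
  · -- intersections
    intro l hlk
    apply le_antisymm
    · rintro w ⟨hwk, hwl⟩
      obtain ⟨⟨a, c⟩, hak⟩ := hwk
      obtain ⟨⟨a', c'⟩, hal⟩ := hwl
      have hEq : Aux9.Wmap hc hu τ k (a, c) = Aux9.Wmap hc hu τ l (a', c') := by
        rw [hak, hal]
      obtain ⟨hc0, _, _⟩ := Aux9.Wmap_inter hc hu τ hτ0 hτinj (Ne.symm hlk) a a' c c' hEq
      rw [← hak, hc0]
      have : Aux9.Wmap hc hu τ k (a, 0) = a • f := by
        simp [Aux9.Wmap]
      rw [this]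
      exact Submodule.mem_span_singleton.2 ⟨a, rfl⟩
    · rw [Submodule.span_le, Set.singleton_subset_iff]
      exact ⟨Aux9.f_mem_range hc hu τ k, Aux9.f_mem_range hc hu τ l⟩
  · -- density
    intro g hg K hK n ε hε
    obtain ⟨C, hC0, hCb⟩ := Aux9.Tt_deriv_bound hc hu hN K hK n
    obtain ⟨r, hr⟩ := hK.isBounded.subset_closedBall 0
    set R : ℕ := Nat.ceil (max r 0) with hR
    have hKR : ∀ x ∈ K, ‖x‖ ≤ (R:ℝ) := by
      intro x hx
      have h1 : ‖x‖ ≤ r := by simpa [mem_closedBall, dist_zero_right] using hr hx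
      have h2 : r ≤ max r 0 := le_max_left _ _
      have h3 : (max r 0 : ℝ) ≤ R := Nat.le_ceil _
      linarith
    set cc : ℝ := ε / (2*(C+1)) with hcc
    have hccpos : 0 < cc := by
      apply div_pos hε
      nlinarith
    set i₀ : Aux9.Idx N := (⟨fun x => cc⁻¹ * g x, contDiff_const.mul hg⟩, R) with hi₀
    set t : ℝ := τ (k, i₀) with ht
    set w : RN N → ℝ := Aux9.Wmap hc hu τ k (0, Finsupp.single i₀ cc) with hw
    refine ⟨w, ⟨(0, Finsupp.single i₀ cc), rfl⟩, ?_⟩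
    have hwval : ∀ x, w x = cc * (Aux9.cutb N R x * (cc⁻¹ * g x) + Aux9.Tt hc hu t x) := by
      intro x
      rw [hw, Aux9.Wmap_zero_fst, Finsupp.linearCombination_single]
      rfl
    intro j hj x hx
    have hnhd : (w - g) =ᶠ[𝓝 x] fun y => cc • Aux9.Tt hc hu t y := by
      apply eventually_of_mem (isOpen_ball.mem_nhds (show x ∈ ball (0:RN N) ((R:ℝ)+1) by
        rw [mem_ball, dist_zero_right]
        have := hKR x hx
        linarith))
      intro y hy
      have hy1 : ‖y‖ ≤ (R:ℝ)+1 := by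
        rw [mem_ball, dist_zero_right] at hy
        linarith
      have hcut : Aux9.cutb N R y = 1 := Aux9.cutb_one hy1
      show w y - g y = cc • Aux9.Tt hc hu t y
      rw [hwval y, hcut]
      field_simp
      ring
    rw [Aux9.iteratedFDeriv_congr_nhds hnhd j]
    have hsmul : iteratedFDeriv ℝ j (fun y => cc • Aux9.Tt hc hu t y) x
        = cc • iteratedFDeriv ℝ j (Aux9.Tt hc hu t) x :=
      iteratedFDeriv_const_smul_apply' ((Aux9.Tt_contDiff hc hu t).contDiffAt.of_le (by exact_mod_cast le_top))
    rw [hsmul, norm_smul, Real.norm_eq_abs, abs_of_pos hccpos]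
    have hTb : ‖iteratedFDeriv ℝ j (Aux9.Tt hc hu t) x‖ ≤ C :=
      hCb t (hτmem (k, i₀)) j hj x hx
    have : cc * ‖iteratedFDeriv ℝ j (Aux9.Tt hc hu t) x‖ ≤ cc * C :=
      mul_le_mul le_rfl hTb (norm_nonneg _) hccpos.le
    have hfin : cc * C < ε := by
      rw [hcc]
      rw [div_mul_eq_mul_div, div_lt_iff₀ (by nlinarith : (0:ℝ) < 2*(C+1))]
      nlinarith
    linarith
end
end
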